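/- arXiv:1312.1259 — 9 statements merged into one kernel-verified Lean document; each statement's English description precedes it below -/
import Mathlib

section
/- Let C be a split Cayley algebra and a a nonzero isotropic element. Choose b with q(a, b̄) = 1 and set e₁ = ab, e₂ = 1 − e₁. Then e₁² = e₁, e₂² = e₂, e₁e₂ = e₂e₁ = 0, q(e₁) = q(e₂) = 0, and q(e₁, e₂) = 1. -/
open QuadraticMap

/-- KMRT-style regularity of a quadratic form. -/
def QuadraticForm.HurwitzRegular {F C : Type*} [Field F] [AddCommGroup C] [Module F C]
    (q : QuadraticForm F C) : Prop :=
  ∀ x : C, (∀ y : C, polar q x y = 0) → q x = 0 → x = 0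

/-- The quadratic form is multiplicative. -/
def QuadraticForm.Multiplicative {F C : Type*} [Field F] [NonAssocRing C] [Module F C]
    (q : QuadraticForm F C) : Prop :=
  ∀ x y : C, q (x * y) = q x * q y

/-- Conjugation (standard involution) of a Hurwitz algebra: `x̄ = q(x,1)1 − x`. -/
def hconj {F C : Type*} [Field F] [NonAssocRing C] [Module F C]
    (q : QuadraticForm F C) (x : C) : C :=
  polar q x 1 • (1 : C) - x

/-- construction of orthogonal isotropic idempotents in a split Cayley algebra. -/
theorem split_cayley_idempotents {F C : Type*} [Field F] [NonAssocRing C] [Module F C]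
    [SMulCommClass F C C] [IsScalarTower F C C]
    (q : QuadraticForm F C) (hreg : q.HurwitzRegular) (hmul : q.Multiplicative)
    (hdim : Module.finrank F C = 8)
    (a b : C) (ha : a ≠ 0) (hqa : q a = 0) (hb : polar q a (hconj q b) = 1)
    (e₁ e₂ : C) (he₁ : e₁ = a * b) (he₂ : e₂ = 1 - e₁) :
    e₁ * e₁ = e₁ ∧ e₂ * e₂ = e₂ ∧ e₁ * e₂ = 0 ∧ e₂ * e₁ = 0 ∧
      q e₁ = 0 ∧ q e₂ = 0 ∧ polar q e₁ e₂ = 1 := by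
  -- Polarization of multiplicativity in the left factor.
  have L1 : ∀ x z y : C, polar q (x * y) (z * y) = polar q x z * q y := by
    intro x z y
    have h1 : q (x * y + z * y) = q (x + z) * q y := by rw [← add_mul]; exact hmul _ _
    simp only [QuadraticMap.polar]
    rw [h1, hmul x y, hmul z y]
    ring
  -- Full polarization.
  have L3 : ∀ x y z w : C, polar q (x * y) (z * w) + polar q (x * w) (z * y)
      = polar q x z * polar q y w := by
    intro x y z w
    have h1 := L1 x z (y + w)
    rw [mul_add, mul_add, polar_add_left, polar_add_right, polar_add_right, L1, L1,
      show q (y + w) = q y + q w + polar (⇑q) y w from QuadraticMap.map_add _ y w] at h1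
    linear_combination h1
  -- q(1) = 1
  have t1 : q (1 : C) = 1 := by
    have h := L1 a (hconj q b) 1
    rw [mul_one, mul_one, hb, one_mul] at h
    exact h.symm
  -- polar of a square
  have hB : ∀ x y : C, polar q (x * x) y
      = polar q x y * polar q x 1 - polar q y 1 * q x := by
    intro x y
    have h1 := L3 x x y 1
    have h2 := L1 1 y x
    rw [mul_one, mul_one] at h1
    rw [one_mul] at h2
    rw [h2, polar_comm q 1 y] at h1
    linear_combination h1
  have hq1 : q e₁ = 0 := by rw [he₁, hmul, hqa, zero_mul]
  -- trace of e₁ is 1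
  have ht1 : polar q e₁ 1 = 1 := by
    have htr := L3 a b 1 1
    simp only [one_mul, mul_one] at htr
    have hb' := hb
    rw [hconj, polar_sub_right, polar_smul_right, smul_eq_mul] at hb'
    rw [he₁]
    linear_combination htr + hb'
  -- e₁ is idempotent
  have hz : e₁ * e₁ - e₁ = 0 := by
    apply hreg
    · intro y
      rw [polar_sub_left, hB e₁ y, ht1, hq1]
      ring
    · have h := QuadraticMap.map_add q (e₁ * e₁) (-e₁)
      rw [← sub_eq_add_neg, QuadraticMap.map_neg, polar_neg_right, hmul, hq1, hB e₁ e₁,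
        ht1] at h
      rw [h, polar_self, hq1]
      simp
  have e1sq : e₁ * e₁ = e₁ := by rwa [sub_eq_zero] at hz
  refine ⟨e1sq, ?_, ?_, ?_, hq1, ?_, ?_⟩
  · rw [he₂, sub_mul, one_mul, mul_sub, mul_one, e1sq]
    abel
  · rw [he₂, mul_sub, mul_one, e1sq, sub_self]
  · rw [he₂, sub_mul, one_mul, e1sq, sub_self]
  · have h := QuadraticMap.map_add q (1 : C) (-e₁)
    rw [← sub_eq_add_neg, QuadraticMap.map_neg, polar_neg_right, t1, hq1,
      polar_comm q 1 e₁, ht1, ← he₂] at h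
    rw [h]
    ring
  · rw [he₂, polar_sub_right, ht1, polar_self, hq1]
    simp
end

section
/- In the Peirce decomposition C = K ⊕ U ⊕ V of a split Cayley algebra, one has U² ⊆ V, V² ⊆ U, and for u ∈ U, v ∈ V: uv = −q(u,v)e₁ and vu = −q(u,v)e₂. Hence the decomposition C = K ⊕ U ⊕ V is a ℤ₃-grading of C. -/
open QuadraticMap
set_option linter.unusedSectionVars false
set_option linter.unusedVariables false
set_option linter.unusedTactic false

/-- The Peirce subspace `U = {x : e₁x = x = xe₂, e₂x = 0 = xe₁}`. -/
def peirceU (F : Type*) {C : Type*} [Field F] [NonAssocRing C] [Module F C]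
    [SMulCommClass F C C] [IsScalarTower F C C] (e₁ e₂ : C) : Submodule F C where
  carrier := {x | e₁ * x = x ∧ x * e₂ = x ∧ e₂ * x = 0 ∧ x * e₁ = 0}
  add_mem' := by
    rintro a b ⟨h1, h2, h3, h4⟩ ⟨g1, g2, g3, g4⟩
    refine ⟨?_, ?_, ?_, ?_⟩ <;> simp [mul_add, add_mul, h1, h2, h3, h4, g1, g2, g3, g4]
  zero_mem' := by refine ⟨?_, ?_, ?_, ?_⟩ <;> simp
  smul_mem' := by
    rintro c a ⟨h1, h2, h3, h4⟩
    refine ⟨?_, ?_, ?_, ?_⟩ <;> simp [mul_smul_comm, smul_mul_assoc, h1, h2, h3, h4]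

/-- The Peirce subspace `V = {x : e₂x = x = xe₁, e₁x = 0 = xe₂}`. -/
def peirceV (F : Type*) {C : Type*} [Field F] [NonAssocRing C] [Module F C]
    [SMulCommClass F C C] [IsScalarTower F C C] (e₁ e₂ : C) : Submodule F C :=
  peirceU F e₂ e₁

/-- The Peirce decomposition of a split Cayley algebra as a `ZMod 3`-indexed family:
degree 0 is `K = Fe₁ ⊕ Fe₂`, degree 1 is `U`, degree 2 is `V`. -/
def peirceGrading (F : Type*) {C : Type*} [Field F] [NonAssocRing C] [Module F C]
    [SMulCommClass F C C] [IsScalarTower F C C] (e₁ e₂ : C) : ZMod 3 → Submodule F C :=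
  fun i => if i = 0 then Submodule.span F {e₁, e₂} else
    if i = 1 then peirceU F e₁ e₂ else peirceV F e₁ e₂

namespace SCA
variable {F C : Type*} [Field F] [NonAssocRing C] [Module F C]
    [SMulCommClass F C C] [IsScalarTower F C C]
variable (q : QuadraticForm F C)

lemma L1 (hmul : q.Multiplicative) (x y z : C) :
    polar q (x*y) (x*z) = q x * polar q y z := by
  simp only [QuadraticMap.polar, ← mul_add]
  rw [hmul, hmul, hmul]; ring

lemma L2 (hmul : q.Multiplicative) (x y z : C) :
    polar q (x*z) (y*z) = polar q x y * q z := by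
  simp only [QuadraticMap.polar, ← add_mul]
  rw [hmul, hmul, hmul]; ring

lemma L3 (hmul : q.Multiplicative) (x y z w : C) :
    polar q (x*y) (z*w) + polar q (z*y) (x*w) = polar q x z * polar q y w := by
  have h := L1 q hmul (x+z) y w
  rw [QuadraticMap.map_add (⇑q) x z] at h
  simp only [add_mul, polar_add_left, polar_add_right] at h
  have h1 := L1 q hmul x y w
  have h2 := L1 q hmul z y w
  linear_combination h - h1 - h2

lemma A1 (hmul : q.Multiplicative) (x y z : C) :
    polar q (x*y) z = polar q x (z * hconj q y) := by
  have h := L3 q hmul x y z 1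
  rw [mul_one, mul_one] at h
  rw [polar_comm (⇑q) (z*y) x] at h
  rw [hconj, mul_sub, mul_smul_comm, mul_one, polar_sub_right, polar_smul_right]
  simp only [smul_eq_mul]
  linear_combination h

lemma A2 (hmul : q.Multiplicative) (x y z : C) :
    polar q (x*y) z = polar q y (hconj q x * z) := by
  have h := L3 q hmul x y 1 z
  rw [one_mul, one_mul] at h
  rw [hconj, sub_mul, smul_mul_assoc, one_mul, polar_sub_right, polar_smul_right]
  simp only [smul_eq_mul]
  linear_combination h

lemma qone (hreg : q.HurwitzRegular) (hmul : q.Multiplicative) {x0 : C} (hx0 : x0 ≠ 0) :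
    q 1 = 1 := by
  have h := hmul 1 1
  rw [one_mul] at h
  by_contra hne
  have h1 : q 1 = 0 := by
    rcases mul_eq_zero.mp (show q 1 * (q 1 - 1) = 0 by linear_combination -h) with h' | h'
    · exact h'
    · exact absurd (sub_eq_zero.mp h') hne
  have hall : ∀ y : C, q y = 0 := fun y => by
    have := hmul 1 y; rw [one_mul] at this; rw [this, h1, zero_mul]
  exact hx0 (hreg x0 (fun y => by simp [QuadraticMap.polar, hall]) (hall x0))

lemma p11 (hone : q 1 = 1) : polar q (1:C) 1 = 2 := by
  rw [polar_self, hone]; norm_num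

lemma pconj1 (hone : q 1 = 1) (x : C) : polar q (hconj q x) 1 = polar q x 1 := by
  rw [hconj, polar_sub_left, polar_smul_left, p11 q hone]
  simp only [smul_eq_mul]; ring

lemma hconj_hconj (hone : q 1 = 1) (x : C) : hconj q (hconj q x) = x := by
  rw [hconj, pconj1 q hone, hconj, sub_sub_cancel]

lemma hconj_add (x z : C) : hconj q (x + z) = hconj q x + hconj q z := by
  simp only [hconj, polar_add_left, add_smul]; abel

lemma q_sub (u v : C) : q (u - v) = q u + q v - polar q u v := by
  have h := QuadraticMap.map_add (⇑q) u (-v)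
  rw [← sub_eq_add_neg] at h
  rw [h, QuadraticMap.map_neg, polar_neg_right]; ring

lemma q_smul_one (a : F) : q (a • (1:C)) = a * a * q 1 := by
  rw [QuadraticMap.map_smul, smul_eq_mul]

lemma q_hconj (hone : q 1 = 1) (x : C) : q (hconj q x) = q x := by
  rw [hconj, q_sub, q_smul_one, hone, polar_smul_left, polar_comm]
  simp only [smul_eq_mul]; ring


section
variable (hreg : q.HurwitzRegular) (hmul : q.Multiplicative) (hone : q 1 = 1)

include hreg hmul hone in
lemma kirmse_left (x y : C) : hconj q x * (x * y) = q x • y := by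
  have key : hconj q x * (x * y) - q x • y = 0 := by
    apply hreg
    · intro z
      rw [polar_sub_left, polar_smul_left]
      have h1 := A2 q hmul (hconj q x) (x*y) z
      rw [hconj_hconj q hone] at h1
      rw [h1, L1 q hmul]
      simp only [smul_eq_mul]; ring
    · have h1 : q (hconj q x * (x * y)) = q x * (q x * q y) := by
        rw [hmul, hmul, q_hconj q hone]
      have h2 : q (q x • y) = q x * q x * q y := by
        rw [QuadraticMap.map_smul, smul_eq_mul]
      have h3 : polar q (hconj q x * (x * y)) (q x • y) = q x * (q x * (2 * q y)) := by
        rw [polar_smul_right]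
        have h4 := A2 q hmul (hconj q x) (x*y) y
        rw [hconj_hconj q hone] at h4
        rw [h4, L1 q hmul, polar_self]
        simp only [smul_eq_mul]; push_cast; ring
      rw [q_sub, h1, h2, h3]; ring
  exact sub_eq_zero.mp key

include hreg hmul hone in
lemma kirmse_right (x y : C) : (y * x) * hconj q x = q x • y := by
  have key : (y * x) * hconj q x - q x • y = 0 := by
    apply hreg
    · intro z
      rw [polar_sub_left, polar_smul_left]
      have h1 := A1 q hmul (y*x) (hconj q x) z
      rw [hconj_hconj q hone] at h1
      rw [h1, L2 q hmul]
      simp only [smul_eq_mul]; ring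
    · have h1 : q ((y * x) * hconj q x) = q x * (q x * q y) := by
        rw [hmul, hmul, q_hconj q hone]; ring
      have h2 : q (q x • y) = q x * q x * q y := by
        rw [QuadraticMap.map_smul, smul_eq_mul]
      have h3 : polar q ((y * x) * hconj q x) (q x • y) = q x * (q x * (2 * q y)) := by
        rw [polar_smul_right]
        have h4 := A1 q hmul (y*x) (hconj q x) y
        rw [hconj_hconj q hone] at h4
        rw [h4, L2 q hmul, polar_self]
        simp only [smul_eq_mul]; push_cast; ring
      rw [q_sub, h1, h2, h3]; ring
  exact sub_eq_zero.mp key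

include hreg hmul hone in
lemma kirmse_left_lin (x z y : C) :
    hconj q x * (z * y) + hconj q z * (x * y) = polar q x z • y := by
  have key : hconj q x * (z * y) + hconj q z * (x * y)
      = (hconj q x + hconj q z) * ((x + z) * y) - hconj q x * (x * y) - hconj q z * (z * y) := by
    simp only [add_mul, mul_add]; abel
  rw [key, ← hconj_add, kirmse_left q hreg hmul hone, kirmse_left q hreg hmul hone,
    kirmse_left q hreg hmul hone, QuadraticMap.map_add (⇑q) x z, add_smul, add_smul]
  abel

include hreg hmul hone in
lemma kirmse_right_lin (x z y : C) :
    (y * x) * hconj q z + (y * z) * hconj q x = polar q x z • y := by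
  have key : (y * x) * hconj q z + (y * z) * hconj q x
      = (y * (x + z)) * hconj q (x + z) - (y * x) * hconj q x - (y * z) * hconj q z := by
    rw [hconj_add]
    simp only [add_mul, mul_add]; abel
  rw [key, kirmse_right q hreg hmul hone, kirmse_right q hreg hmul hone,
    kirmse_right q hreg hmul hone, QuadraticMap.map_add (⇑q) x z, add_smul, add_smul]
  abel

include hreg hmul hone in
lemma sq_eq (x : C) : x * x = polar q x 1 • x - q x • 1 := by
  have h := kirmse_right q hreg hmul hone x 1
  rw [one_mul, hconj, mul_sub, mul_smul_comm, mul_one] at h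
  linear_combination (norm := module) -h

include hreg hmul hone in
lemma left_alt (x y : C) : x * (x * y) = (x * x) * y := by
  have hx : x * (x*y) = polar q x 1 • (x*y) - hconj q x * (x*y) := by
    have : x = polar q x 1 • (1:C) - hconj q x := by rw [hconj]; abel
    calc x * (x*y) = (polar q x 1 • (1:C) - hconj q x) * (x*y) := by rw [← this]
      _ = polar q x 1 • (x*y) - hconj q x * (x*y) := by
          rw [sub_mul, smul_mul_assoc, one_mul]
  rw [hx, kirmse_left q hreg hmul hone, sq_eq q hreg hmul hone, sub_mul, smul_mul_assoc,
    smul_mul_assoc, one_mul]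

include hreg hmul hone in
lemma right_alt (y x : C) : (y * x) * x = y * (x * x) := by
  have hx : (y*x) * x = polar q x 1 • (y*x) - (y*x) * hconj q x := by
    have : x = polar q x 1 • (1:C) - hconj q x := by rw [hconj]; abel
    calc (y*x) * x = (y*x) * (polar q x 1 • (1:C) - hconj q x) := by rw [← this]
      _ = polar q x 1 • (y*x) - (y*x) * hconj q x := by
          rw [mul_sub, mul_smul_comm, mul_one]
  rw [hx, kirmse_right q hreg hmul hone, sq_eq q hreg hmul hone, mul_sub, mul_smul_comm,
    mul_smul_comm, mul_one]

include hreg hmul hone in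
lemma flexible (x y : C) : (x * y) * x = x * (y * x) := by
  have hra := right_alt q hreg hmul hone x (y + x)
  -- (x*(y+x))*(y+x) = x*((y+x)*(y+x))
  have expand : (x*y)*y + (x*y)*x + ((x*x)*y + (x*x)*x)
      = x*(y*y) + x*(y*x) + (x*(x*y) + x*(x*x)) := by
    have := hra
    simp only [mul_add, add_mul] at this
    calc (x*y)*y + (x*y)*x + ((x*x)*y + (x*x)*x) = (x * (y + x)) * (y + x) := by
          simp only [mul_add, add_mul]; abel
      _ = x * ((y + x) * (y + x)) := hra
      _ = x*(y*y) + x*(y*x) + (x*(x*y) + x*(x*x)) := by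
          simp only [mul_add, add_mul]; abel
  have h1 := right_alt q hreg hmul hone x y   -- (x*y)*y = x*(y*y)
  have h2 := left_alt q hreg hmul hone x y    -- x*(x*y) = (x*x)*y
  have h3 : (x*x)*x = x*(x*x) := (left_alt q hreg hmul hone x x).symm
  rw [h1, ← h2, h3] at expand
  have final : (x*y)*x - x*(y*x) = 0 := by
    have e2 : x*(y*y) + (x*y)*x + (x*(x*y) + x*(x*x))
        - (x*(y*y) + (x*(x*y) + x*(x*x))) = (x*y)*x := by abel
    have e3 : x*(y*y) + x*(y*x) + (x*(x*y) + x*(x*x))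
        - (x*(y*y) + (x*(x*y) + x*(x*x))) = x*(y*x) := by abel
    rw [← e2, ← e3, expand, sub_self]
  exact sub_eq_zero.mp final

end

section Peirce
variable (hreg : q.HurwitzRegular) (hmul : q.Multiplicative) (hone : q 1 = 1)
variable {e f : C}

lemma hef1 (hf : f = 1 - e) : e + f = 1 := by rw [hf]; abel

lemma hef (he : e*e = e) (hf : f = 1 - e) : e * f = 0 := by
  rw [hf, mul_sub, mul_one, he, sub_self]

lemma hfe (he : e*e = e) (hf : f = 1 - e) : f * e = 0 := by
  rw [hf, sub_mul, one_mul, he, sub_self]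

lemma hff (he : e*e = e) (hf : f = 1 - e) : f * f = f := by
  rw [hf, sub_mul, one_mul, mul_sub, mul_one, he, sub_self, sub_zero]

lemma hfe2 (hf : f = 1 - e) : e = 1 - f := by rw [hf, sub_sub_cancel]

include hreg hmul hone in
lemma pe1 (he : e*e = e) (hqe : q e = 0) (h0 : e ≠ 0) : polar q e 1 = 1 := by
  have h := kirmse_left q hreg hmul hone e 1
  rw [mul_one, hqe, zero_smul, hconj, sub_mul, smul_mul_assoc, one_mul, he] at h
  have h2 : (polar q e 1 - 1) • e = 0 := by
    rw [sub_smul, one_smul]; exact h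
  rcases smul_eq_zero.mp h2 with h3 | h3
  · exact sub_eq_zero.mp h3
  · exact absurd h3 h0

include hreg hmul hone in
lemma hconj_e (he : e*e = e) (hf : f = 1 - e) (hqe : q e = 0) (h0 : e ≠ 0) :
    hconj q e = f := by
  rw [hconj, pe1 q hreg hmul hone he hqe h0, one_smul, ← hf]

include hreg hmul hone in
lemma qf (he : e*e = e) (hf : f = 1 - e) (hqe : q e = 0) (h0 : e ≠ 0) : q f = 0 := by
  rw [← hconj_e q hreg hmul hone he hf hqe h0, q_hconj q hone, hqe]

include hreg hmul hone in
lemma pef (he : e*e = e) (hf : f = 1 - e) (hqe : q e = 0) (h0 : e ≠ 0) :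
    polar q e f = 1 := by
  rw [hf, polar_sub_right, pe1 q hreg hmul hone he hqe h0, polar_self, hqe]
  simp

include hreg hmul hone in
lemma pf1 (he : e*e = e) (hf : f = 1 - e) (hqe : q e = 0) (h0 : e ≠ 0) :
    polar q f 1 = 1 := by
  rw [hf, polar_sub_left, p11 q hone, pe1 q hreg hmul hone he hqe h0]; ring

include hreg hmul hone in
lemma pu1 (he : e*e = e) (hf : f = 1 - e) (hqe : q e = 0) (h0 : e ≠ 0)
    {u : C} (hue : polar q u e = 0) (huf : polar q u f = 0) : polar q u 1 = 0 := by
  rw [← hef1 hf, polar_add_right, hue, huf, add_zero]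

-- polar vanishing lemmas
include hmul in
lemma polar_LL (he : e*e = e) (hf : f = 1 - e) (hconje : hconj q e = f)
    (a b : C) (ha : e*a = a) (hb : f*b = 0) : polar q a b = 0 := by
  have h := A2 q hmul e a b
  rw [ha, hconje, hb, polar_zero_right] at h
  exact h

include hmul in
lemma polar_RR (he : e*e = e) (hf : f = 1 - e) (hconje : hconj q e = f)
    (a b : C) (ha : a*e = a) (hb : b*f = 0) : polar q a b = 0 := by
  have h := A1 q hmul a e b
  rw [ha, hconje, hb, polar_zero_right] at h
  exact h

include hmul in
lemma polar_K2 (he : e*e = e) (hf : f = 1 - e)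
    (w k : C) (hw : e*w = w) (hk : k*f = k) :
    polar q w k = polar q e k * polar q w f := by
  have h := L3 q hmul e w k f
  rw [hw, hk, hef he hf, polar_zero_right, add_zero] at h
  exact h

-- projection lemmas
include hreg hmul hone in
lemma proj_a (he : e*e = e) (y : C) : e * (e * y) = e * y := by
  rw [left_alt q hreg hmul hone, he]

include hreg hmul hone in
lemma eae (he : e*e = e) {a : C} (ha : e*a = a) : e*(a*e) = a*e := by
  rw [← flexible q hreg hmul hone, ha]

include hreg hmul hone in
lemma aee (he : e*e = e) (a : C) : (a*e)*e = a*e := by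
  rw [right_alt q hreg hmul hone, he]

include hreg hmul hone in
lemma projU_mem (he : e*e = e) (hf : f = 1 - e) {a : C} (ha : e*a = a) :
    e*(a*f) = a*f ∧ (a*f)*f = a*f ∧ f*(a*f) = 0 ∧ (a*f)*e = 0 := by
  have af : a*f = a - a*e := by rw [hf, mul_sub, mul_one]
  have h1 : e*(a*f) = a*f := by
    rw [af, mul_sub, ha, eae q hreg hmul hone he ha]
  refine ⟨h1, ?_, ?_, ?_⟩
  · rw [right_alt q hreg hmul hone, hff he hf]
  · nth_rewrite 1 [hf]
    rw [sub_mul, one_mul, h1, sub_self]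
  · rw [af, sub_mul, aee q hreg hmul hone he, sub_self]

include hreg hmul hone in
lemma decomp (hf : f = 1 - e) (y : C) :
    y = (e*y)*e + (e*y)*f + ((f*y)*e + (f*y)*f) := by
  have h1 : (e*y)*e + (e*y)*f = e*y := by rw [← mul_add, hef1 hf, mul_one]
  have h2 : (f*y)*e + (f*y)*f = f*y := by rw [← mul_add, hef1 hf, mul_one]
  rw [h1, h2, ← add_mul, hef1 hf, one_mul]

include hreg hmul hone in
lemma K1_eq (he : e*e = e) (hf : f = 1 - e) (hqe : q e = 0) (h0 : e ≠ 0) (h1 : e ≠ 1)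
    (w : C) (hw1 : e*w = w) (hw2 : w*e = w) : w = polar q w f • e := by
  have hconje : hconj q e = f := hconj_e q hreg hmul hone he hf hqe h0
  have hfw : f*w = 0 := by rw [hf, sub_mul, one_mul, hw1, sub_self]
  have hwf : w*f = 0 := by rw [hf, mul_sub, mul_one, hw2, sub_self]
  have hffe : e = 1 - f := hfe2 hf
  have hffm : f*f = f := hff he hf
  have key : w - polar q w f • e = 0 := by
    apply hreg
    · intro y
      rw [decomp q hreg hmul hone hf y]
      simp only [polar_add_right, polar_sub_left, polar_smul_left, smul_eq_mul]
      -- four components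
      have ha1 : e*(e*y) = e*y := proj_a q hreg hmul hone he y
      have ha1' : f*(f*y) = f*y := proj_a q hreg hmul hone hffm y
      -- y1 := (e*y)*e
      have hy1e : e*((e*y)*e) = (e*y)*e := eae q hreg hmul hone he ha1
      have hy1f : f*((e*y)*e) = 0 := by rw [hf, sub_mul, one_mul, hy1e, sub_self]
      -- y2 := (e*y)*f
      obtain ⟨hy2a, hy2b, hy2c, hy2d⟩ := projU_mem q hreg hmul hone he hf ha1
      -- y3 := (f*y)*e  (swapped projU)
      obtain ⟨hy3a, hy3b, hy3c, hy3d⟩ := projU_mem q hreg hmul hone hffm hffe ha1'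
      -- y4 := (f*y)*f
      have hy4f : ((f*y)*f)*f = (f*y)*f := aee q hreg hmul hone hffm (f*y)
      have t1w : polar q w ((e*y)*e) = 0 := polar_LL q hmul he hf hconje _ _ hw1 hy1f
      have t1e : polar q e ((e*y)*e) = 0 := polar_LL q hmul he hf hconje _ _ he hy1f
      have t2w : polar q w ((e*y)*f) = 0 := polar_LL q hmul he hf hconje _ _ hw1 hy2c
      have t2e : polar q e ((e*y)*f) = 0 := polar_LL q hmul he hf hconje _ _ he hy2c
      have t3w : polar q w ((f*y)*e) = 0 := polar_RR q hmul he hf hconje _ _ hw2 hy3d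
      have t3e : polar q e ((f*y)*e) = 0 := polar_RR q hmul he hf hconje _ _ he hy3d
      have t4w : polar q w ((f*y)*f) = polar q e ((f*y)*f) * polar q w f :=
        polar_K2 q hmul he hf _ _ hw1 hy4f
      rw [t1w, t1e, t2w, t2e, t3w, t3e, t4w]
      ring
    · have hqw : q w = 0 := by rw [← hw1, hmul, hqe, zero_mul]
      have hpwe : polar q w e = 0 := polar_LL q hmul he hf hconje _ _ hw1 (hfe he hf)
      rw [q_sub, hqw, QuadraticMap.map_smul, hqe, polar_smul_right, hpwe]
      simp
  exact sub_eq_zero.mp key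

include hreg hmul hone in
lemma hconj_f (he : e*e = e) (hf : f = 1 - e) (hqe : q e = 0) (h0 : e ≠ 0) :
    hconj q f = e := by
  rw [hconj, pf1 q hreg hmul hone he hf hqe h0, one_smul, hf, sub_sub_cancel]

-- facts about U elements
section Ufacts
variable (he : e*e = e) (hf : f = 1 - e) (hqe : q e = 0) (h0 : e ≠ 0)
variable {u : C} (hu1 : e*u = u) (hu2 : u*f = u) (hu3 : f*u = 0) (hu4 : u*e = 0)

include hreg hmul hone he hf hqe h0 in
lemma pue (hu1 : e*u = u) : polar q u e = 0 :=
  polar_LL q hmul he hf (hconj_e q hreg hmul hone he hf hqe h0) u e hu1 (hfe he hf)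

include hreg hmul hone he hf hqe h0 in
lemma puf (hu2 : u*f = u) : polar q u f = 0 :=
  polar_RR q hmul (hff he hf) (hfe2 hf) (hconj_f q hreg hmul hone he hf hqe h0) u f hu2 (hfe he hf)

include hreg hmul hone he hf hqe h0 in
lemma hconj_u (hu1 : e*u = u) (hu2 : u*f = u) : hconj q u = -u := by
  rw [hconj, pu1 q hreg hmul hone he hf hqe h0 (pue q hreg hmul hone he hf hqe h0 hu1)
    (puf q hreg hmul hone he hf hqe h0 hu2), zero_smul, zero_sub]

end Ufacts

include hreg hmul hone in
lemma prodUU (he : e*e = e) (hf : f = 1 - e) (hqe : q e = 0) (h0 : e ≠ 0)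
    {u₁ u₂ : C} (h11 : e*u₁ = u₁) (h12 : u₁*f = u₁) (h13 : f*u₁ = 0) (h14 : u₁*e = 0)
    (h21 : e*u₂ = u₂) (h22 : u₂*f = u₂) (h23 : f*u₂ = 0) (h24 : u₂*e = 0) :
    f*(u₁*u₂) = u₁*u₂ ∧ (u₁*u₂)*e = u₁*u₂ ∧ e*(u₁*u₂) = 0 ∧ (u₁*u₂)*f = 0 := by
  have hc1 : f*(u₁*u₂) = u₁*u₂ := by
    have h := kirmse_left_lin q hreg hmul hone e u₁ u₂
    rw [hconj_e q hreg hmul hone he hf hqe h0,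
      hconj_u q hreg hmul hone he hf hqe h0 h11 h12, h21,
      polar_comm, pue q hreg hmul hone he hf hqe h0 h11, zero_smul, neg_mul,
      ← sub_eq_add_neg] at h
    exact sub_eq_zero.mp h
  have hc2 : (u₁*u₂)*e = u₁*u₂ := by
    have h := kirmse_right_lin q hreg hmul hone f u₂ u₁
    rw [hconj_f q hreg hmul hone he hf hqe h0,
      hconj_u q hreg hmul hone he hf hqe h0 h21 h22, h12,
      polar_comm, puf q hreg hmul hone he hf hqe h0 h22, zero_smul, mul_neg] at h
    -- h : u₁ * -u₂ + (u₁*u₂)*e = 0  → wrong order? kirmse_right_lin x z y : (y*x)*hconj z + (y*z)*hconj x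
    -- with x := f, z := u₂, y := u₁ : (u₁*f)*hconj u₂ + (u₁*u₂)*hconj f = polar f u₂ • u₁
    rw [neg_add_eq_zero] at h
    exact h.symm
  refine ⟨hc1, hc2, ?_, ?_⟩
  · rw [hfe2 hf, sub_mul, one_mul, hc1, sub_self]
  · rw [hf, mul_sub, mul_one, hc2, sub_self]

include hreg hmul hone in
lemma prodUV (he : e*e = e) (hf : f = 1 - e) (hqe : q e = 0) (h0 : e ≠ 0) (hf0 : f ≠ 0)
    {u v : C} (h11 : e*u = u) (h12 : u*f = u) (h13 : f*u = 0) (h14 : u*e = 0)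
    (h21 : f*v = v) (h22 : v*e = v) (h23 : e*v = 0) (h24 : v*f = 0) :
    u*v = -polar q u v • e ∧ v*u = -polar q u v • f := by
  have hcv : hconj q v = -v :=
    hconj_u q hreg hmul hone (hff he hf) (hfe2 hf) (qf q hreg hmul hone he hf hqe h0)
      hf0 h21 h22
  have hcu : hconj q u = -u := hconj_u q hreg hmul hone he hf hqe h0 h11 h12
  constructor
  · have h := kirmse_left_lin q hreg hmul hone u v e
    rw [hcu, hcv, h22, h14, mul_zero, neg_mul, add_zero] at h
    rw [neg_smul]; exact neg_eq_iff_eq_neg.mp h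
  · have h := kirmse_left_lin q hreg hmul hone v u f
    rw [hcu, hcv, h12, h24, mul_zero, neg_mul, add_zero, polar_comm] at h
    rw [neg_smul]; exact neg_eq_iff_eq_neg.mp h

end Peirce
end SCA

/-- `U² ⊆ V`, `V² ⊆ U`, `uv = −q(u,v)e₁`, `vu = −q(u,v)e₂`, and
`C = K ⊕ U ⊕ V` is a `ℤ₃`-grading. -/
theorem split_cayley_z3_grading {F C : Type*} [Field F] [NonAssocRing C] [Module F C]
    [SMulCommClass F C C] [IsScalarTower F C C]
    (q : QuadraticForm F C) (hreg : q.HurwitzRegular) (hmul : q.Multiplicative)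
    (hdim : Module.finrank F C = 8)
    (e₁ e₂ : C) (hidem : e₁ * e₁ = e₁) (h0 : e₁ ≠ 0) (h1 : e₁ ≠ 1)
    (hqe : q e₁ = 0) (he₂ : e₂ = 1 - e₁) :
    (∀ u₁ ∈ peirceU F e₁ e₂, ∀ u₂ ∈ peirceU F e₁ e₂, u₁ * u₂ ∈ peirceV F e₁ e₂) ∧
    (∀ v₁ ∈ peirceV F e₁ e₂, ∀ v₂ ∈ peirceV F e₁ e₂, v₁ * v₂ ∈ peirceU F e₁ e₂) ∧
    (∀ u ∈ peirceU F e₁ e₂, ∀ v ∈ peirceV F e₁ e₂,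
      u * v = -polar q u v • e₁ ∧ v * u = -polar q u v • e₂) ∧
    DirectSum.IsInternal (peirceGrading F e₁ e₂) ∧
    (∀ i j : ZMod 3, ∀ x ∈ peirceGrading F e₁ e₂ i, ∀ y ∈ peirceGrading F e₁ e₂ j,
      x * y ∈ peirceGrading F e₁ e₂ (i + j)) := by
  classical
  have hone : q 1 = 1 := SCA.qone q hreg hmul h0
  have hf0 : e₂ ≠ 0 := by
    intro h; rw [he₂] at h; exact h1 (sub_eq_zero.mp h).symm
  have hqf : q e₂ = 0 := SCA.qf q hreg hmul hone hidem he₂ hqe h0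
  have hff' : e₂*e₂ = e₂ := SCA.hff hidem he₂
  have hef' : e₁*e₂ = 0 := SCA.hef hidem he₂
  have hfe' : e₂*e₁ = 0 := SCA.hfe hidem he₂
  have hfe2' : e₁ = 1 - e₂ := SCA.hfe2 he₂
  have hf1 : e₂ ≠ 1 := by
    intro h; apply h0; rw [hfe2', h, sub_self]
  -- Part 1
  have P1 : ∀ u₁ ∈ peirceU F e₁ e₂, ∀ u₂ ∈ peirceU F e₁ e₂, u₁ * u₂ ∈ peirceV F e₁ e₂ := by
    rintro u₁ ⟨a1, a2, a3, a4⟩ u₂ ⟨b1, b2, b3, b4⟩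
    exact SCA.prodUU q hreg hmul hone hidem he₂ hqe h0 a1 a2 a3 a4 b1 b2 b3 b4
  -- Part 2
  have P2 : ∀ v₁ ∈ peirceV F e₁ e₂, ∀ v₂ ∈ peirceV F e₁ e₂, v₁ * v₂ ∈ peirceU F e₁ e₂ := by
    rintro v₁ ⟨a1, a2, a3, a4⟩ v₂ ⟨b1, b2, b3, b4⟩
    exact SCA.prodUU q hreg hmul hone hff' hfe2' hqf hf0 a1 a2 a3 a4 b1 b2 b3 b4
  -- Part 3
  have P3 : ∀ u ∈ peirceU F e₁ e₂, ∀ v ∈ peirceV F e₁ e₂,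
      u * v = -polar q u v • e₁ ∧ v * u = -polar q u v • e₂ := by
    rintro u ⟨a1, a2, a3, a4⟩ v ⟨b1, b2, b3, b4⟩
    exact SCA.prodUV q hreg hmul hone hidem he₂ hqe h0 hf0 a1 a2 a3 a4 b1 b2 b3 b4
  -- spanning
  have he1mem : e₁ ∈ Submodule.span F ({e₁, e₂} : Set C) :=
    Submodule.subset_span (by simp)
  have he2mem : e₂ ∈ Submodule.span F ({e₁, e₂} : Set C) :=
    Submodule.subset_span (by simp)
  have htop : ⨆ i, peirceGrading F e₁ e₂ i = ⊤ := by
    rw [eq_top_iff]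
    intro y _
    rw [SCA.decomp q hreg hmul hone he₂ y]
    refine Submodule.add_mem _ (Submodule.add_mem _ ?_ ?_) (Submodule.add_mem _ ?_ ?_)
    · apply Submodule.mem_iSup_of_mem (0 : ZMod 3)
      have hw1 : e₁*((e₁*y)*e₁) = (e₁*y)*e₁ :=
        SCA.eae q hreg hmul hone hidem (SCA.proj_a q hreg hmul hone hidem y)
      have hw2 : ((e₁*y)*e₁)*e₁ = (e₁*y)*e₁ := SCA.aee q hreg hmul hone hidem (e₁*y)
      rw [SCA.K1_eq q hreg hmul hone hidem he₂ hqe h0 h1 _ hw1 hw2]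
      exact Submodule.smul_mem _ _ he1mem
    · apply Submodule.mem_iSup_of_mem (1 : ZMod 3)
      exact SCA.projU_mem q hreg hmul hone hidem he₂
        (SCA.proj_a q hreg hmul hone hidem y)
    · apply Submodule.mem_iSup_of_mem (2 : ZMod 3)
      exact SCA.projU_mem q hreg hmul hone hff' hfe2'
        (SCA.proj_a q hreg hmul hone hff' y)
    · apply Submodule.mem_iSup_of_mem (0 : ZMod 3)
      have hw1 : e₂*((e₂*y)*e₂) = (e₂*y)*e₂ :=
        SCA.eae q hreg hmul hone hff' (SCA.proj_a q hreg hmul hone hff' y)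
      have hw2 : ((e₂*y)*e₂)*e₂ = (e₂*y)*e₂ := SCA.aee q hreg hmul hone hff' (e₂*y)
      rw [SCA.K1_eq q hreg hmul hone hff' hfe2' hqf hf0 hf1 _ hw1 hw2]
      exact Submodule.smul_mem _ _ he2mem
  -- cancellation
  have cancel : ∀ (a b : F) (u v : C), u ∈ peirceU F e₁ e₂ → v ∈ peirceV F e₁ e₂ →
      a•e₁ + b•e₂ + u + v = 0 → a•e₁ + b•e₂ = 0 ∧ u = 0 ∧ v = 0 := by
    rintro a b u v ⟨u1, u2, u3, u4⟩ ⟨v1, v2, v3, v4⟩ h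
    have h2 : a•e₁ + u = 0 := by
      have := congrArg (fun t => e₁ * t) h
      simpa [mul_add, mul_smul_comm, hidem, hef', u1, v3] using this
    have ha : a = 0 := by
      have h3 : a•e₁ = 0 := by
        have := congrArg (fun t => t * e₁) h2
        simpa [add_mul, smul_mul_assoc, hidem, u4] using this
      rcases smul_eq_zero.mp h3 with h' | h'
      · exact h'
      · exact absurd h' h0
    have hu0 : u = 0 := by rwa [ha, zero_smul, zero_add] at h2
    have h4 : b•e₂ + v = 0 := by
      have := congrArg (fun t => e₂ * t) h
      simpa [mul_add, mul_smul_comm, hff', hfe', u3, v1] using this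
    have hb : b = 0 := by
      have h5 : b•e₂ = 0 := by
        have := congrArg (fun t => t * e₂) h4
        simpa [add_mul, smul_mul_assoc, hff', v4] using this
      rcases smul_eq_zero.mp h5 with h' | h'
      · exact h'
      · exact absurd h' hf0
    have hv0 : v = 0 := by rwa [hb, zero_smul, zero_add] at h4
    exact ⟨by rw [ha, hb, zero_smul, zero_smul, add_zero], hu0, hv0⟩
  have hcase : ∀ k : ZMod 3, k = 0 ∨ k = 1 ∨ k = 2 := by decide
  have hind : iSupIndep (peirceGrading F e₁ e₂) := by
    intro i
    rw [Submodule.disjoint_def]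
    intro x hxi hxj
    rcases hcase i with rfl | rfl | rfl
    · have hle : (⨆ j, ⨆ (_ : j ≠ (0:ZMod 3)), peirceGrading F e₁ e₂ j)
          ≤ peirceGrading F e₁ e₂ 1 ⊔ peirceGrading F e₁ e₂ 2 := by
        refine iSup_le fun j => iSup_le fun hj => ?_
        rcases hcase j with rfl | rfl | rfl
        · exact absurd rfl hj
        · exact le_sup_left
        · exact le_sup_right
      obtain ⟨uu, hu, vv, hv, huv⟩ := Submodule.mem_sup.mp (hle hxj)
      have hxi' : -x ∈ Submodule.span F ({e₁, e₂} : Set C) := Submodule.neg_mem _ hxi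
      obtain ⟨a, b, hab⟩ := Submodule.mem_span_pair.mp hxi'
      have h0eq : a•e₁ + b•e₂ + uu + vv = 0 := by
        rw [hab, add_assoc, huv]; exact neg_add_cancel x
      obtain ⟨hk, -, -⟩ := cancel a b uu vv hu hv h0eq
      rw [hab] at hk
      simpa using hk
    · have hle : (⨆ j, ⨆ (_ : j ≠ (1:ZMod 3)), peirceGrading F e₁ e₂ j)
          ≤ peirceGrading F e₁ e₂ 0 ⊔ peirceGrading F e₁ e₂ 2 := by
        refine iSup_le fun j => iSup_le fun hj => ?_
        rcases hcase j with rfl | rfl | rfl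
        · exact le_sup_left
        · exact absurd rfl hj
        · exact le_sup_right
      obtain ⟨k, hk, vv, hv, hkv⟩ := Submodule.mem_sup.mp (hle hxj)
      obtain ⟨a, b, hab⟩ := Submodule.mem_span_pair.mp (show k ∈ Submodule.span F ({e₁, e₂} : Set C) from hk)
      have h0eq : a•e₁ + b•e₂ + (-x) + vv = 0 := by
        rw [hab, ← hkv]; abel
      obtain ⟨-, hu0, -⟩ := cancel a b (-x) vv (Submodule.neg_mem _ hxi) hv h0eq
      simpa using hu0
    · have hle : (⨆ j, ⨆ (_ : j ≠ (2:ZMod 3)), peirceGrading F e₁ e₂ j)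
          ≤ peirceGrading F e₁ e₂ 0 ⊔ peirceGrading F e₁ e₂ 1 := by
        refine iSup_le fun j => iSup_le fun hj => ?_
        rcases hcase j with rfl | rfl | rfl
        · exact le_sup_left
        · exact le_sup_right
        · exact absurd rfl hj
      obtain ⟨k, hk, uu, hu, hku⟩ := Submodule.mem_sup.mp (hle hxj)
      obtain ⟨a, b, hab⟩ := Submodule.mem_span_pair.mp (show k ∈ Submodule.span F ({e₁, e₂} : Set C) from hk)
      have h0eq : a•e₁ + b•e₂ + uu + (-x) = 0 := by
        rw [hab, ← hku]; abel
      obtain ⟨-, -, hv0⟩ := cancel a b uu (-x) hu (Submodule.neg_mem _ hxi) h0eq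
      simpa using hv0
  have P4 : DirectSum.IsInternal (peirceGrading F e₁ e₂) :=
    (DirectSum.isInternal_submodule_iff_iSupIndep_and_iSup_eq_top _).mpr ⟨hind, htop⟩
  -- Part 5
  have KK : ∀ x ∈ Submodule.span F ({e₁, e₂} : Set C), ∀ y ∈ Submodule.span F ({e₁, e₂} : Set C),
      x*y ∈ Submodule.span F ({e₁, e₂} : Set C) := by
    intro x hx y hy
    obtain ⟨a, b, hab⟩ := Submodule.mem_span_pair.mp hx
    obtain ⟨c, d, hcd⟩ := Submodule.mem_span_pair.mp hy
    have hxy : x*y = (c*a)•e₁ + (d*b)•e₂ := by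
      rw [← hab, ← hcd]
      simp [mul_add, add_mul, mul_smul_comm, smul_mul_assoc, hidem, hff', hef', hfe',
        smul_smul]
    rw [hxy]
    exact Submodule.add_mem _ (Submodule.smul_mem _ _ he1mem) (Submodule.smul_mem _ _ he2mem)
  have KU : ∀ x ∈ Submodule.span F ({e₁, e₂} : Set C), ∀ u ∈ peirceU F e₁ e₂,
      x*u ∈ peirceU F e₁ e₂ := by
    intro x hx u hu
    obtain ⟨a, b, hab⟩ := Submodule.mem_span_pair.mp hx
    obtain ⟨u1, u2, u3, u4⟩ := hu
    have hxy : x*u = a•u := by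
      rw [← hab]; simp [add_mul, smul_mul_assoc, u1, u3]
    rw [hxy]; exact Submodule.smul_mem _ _ ⟨u1, u2, u3, u4⟩
  have UK : ∀ x ∈ Submodule.span F ({e₁, e₂} : Set C), ∀ u ∈ peirceU F e₁ e₂,
      u*x ∈ peirceU F e₁ e₂ := by
    intro x hx u hu
    obtain ⟨a, b, hab⟩ := Submodule.mem_span_pair.mp hx
    obtain ⟨u1, u2, u3, u4⟩ := hu
    have hxy : u*x = b•u := by
      rw [← hab]; simp [mul_add, mul_smul_comm, u2, u4]
    rw [hxy]; exact Submodule.smul_mem _ _ ⟨u1, u2, u3, u4⟩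
  have KV : ∀ x ∈ Submodule.span F ({e₁, e₂} : Set C), ∀ v ∈ peirceV F e₁ e₂,
      x*v ∈ peirceV F e₁ e₂ := by
    intro x hx v hv
    obtain ⟨a, b, hab⟩ := Submodule.mem_span_pair.mp hx
    obtain ⟨v1, v2, v3, v4⟩ := hv
    have hxy : x*v = b•v := by
      rw [← hab]; simp [add_mul, smul_mul_assoc, v1, v3]
    rw [hxy]; exact Submodule.smul_mem _ _ ⟨v1, v2, v3, v4⟩
  have VK : ∀ x ∈ Submodule.span F ({e₁, e₂} : Set C), ∀ v ∈ peirceV F e₁ e₂,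
      v*x ∈ peirceV F e₁ e₂ := by
    intro x hx v hv
    obtain ⟨a, b, hab⟩ := Submodule.mem_span_pair.mp hx
    obtain ⟨v1, v2, v3, v4⟩ := hv
    have hxy : v*x = a•v := by
      rw [← hab]; simp [mul_add, mul_smul_comm, v2, v4]
    rw [hxy]; exact Submodule.smul_mem _ _ ⟨v1, v2, v3, v4⟩
  have P5 : ∀ i j : ZMod 3, ∀ x ∈ peirceGrading F e₁ e₂ i, ∀ y ∈ peirceGrading F e₁ e₂ j,
      x * y ∈ peirceGrading F e₁ e₂ (i + j) := by
    intro i j x hx y hy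
    rcases hcase i with rfl | rfl | rfl <;> rcases hcase j with rfl | rfl | rfl
    · exact KK x hx y hy
    · exact KU x hx y hy
    · exact KV x hx y hy
    · exact UK y hy x hx
    · show x*y ∈ peirceGrading F e₁ e₂ 2
      exact P1 x hx y hy
    · show x*y ∈ peirceGrading F e₁ e₂ 0
      rw [(P3 x hx y hy).1]
      exact Submodule.smul_mem _ _ he1mem
    · exact VK y hy x hx
    · show x*y ∈ peirceGrading F e₁ e₂ 0
      rw [(P3 y hy x hx).2]
      exact Submodule.smul_mem _ _ he2mem
    · show x*y ∈ peirceGrading F e₁ e₂ 1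
      exact P2 x hx y hy
  exact ⟨P1, P2, P3, P4, P5⟩
end

section
/- In a split Cayley algebra with Peirce subspace U = (e₁C)e₂, the trilinear map U × U × U → F, (x, y, z) ↦ q(xy, z), is alternating and nonzero. -/
open QuadraticMap

namespace SplitCayleyAux

set_option linter.unusedSectionVars false
variable {F C : Type*} [Field F] [NonAssocRing C] [Module F C]
    [SMulCommClass F C C] [IsScalarTower F C C]
variable (q : QuadraticForm F C)

theorem qmap_add' (x y : C) : q (x + y) = q x + q y + polar q x y := by
  simp only [QuadraticMap.polar]; ring

theorem pm1 (hmul : ∀ x y : C, q (x * y) = q x * q y) (x z y : C) :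
    polar q (x * y) (z * y) = polar q x z * q y := by
  simp only [QuadraticMap.polar, ← add_mul, hmul]
  ring

theorem pm2 (hmul : ∀ x y : C, q (x * y) = q x * q y) (x y w : C) :
    polar q (x * y) (x * w) = q x * polar q y w := by
  simp only [QuadraticMap.polar, ← mul_add, hmul]
  ring

theorem pm4 (hmul : ∀ x y : C, q (x * y) = q x * q y) (x y z w : C) :
    polar q (x * y) (z * w) + polar q (z * y) (x * w) = polar q x z * polar q y w := by
  have h := pm1 q hmul x z (y + w)
  rw [mul_add, mul_add, polar_add_left, polar_add_right, polar_add_right, qmap_add'] at h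
  have e1 := pm1 q hmul x z y
  have e2 := pm1 q hmul x z w
  have hc := polar_comm (⇑q) (x * w) (z * y)
  linear_combination h - e1 - e2 - hc

theorem adjL (hmul : ∀ x y : C, q (x * y) = q x * q y) (x y z : C) :
    polar q (x * y) z = polar q x 1 * polar q y z - polar q y (x * z) := by
  have h := pm4 q hmul x y 1 z
  rw [one_mul, one_mul] at h
  linear_combination h

theorem adjR (hmul : ∀ x y : C, q (x * y) = q x * q y) (x y z : C) :
    polar q (x * y) z = polar q x z * polar q y 1 - polar q (z * y) x := by
  have h := pm4 q hmul x y z 1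
  rw [mul_one, mul_one] at h
  linear_combination h

theorem ch_polar (hmul : ∀ x y : C, q (x * y) = q x * q y) (x z : C) :
    polar q (x * x) z = polar q x 1 * polar q x z - polar q 1 z * q x := by
  have h := adjR q hmul x x z
  have h2 := pm1 q hmul z 1 x
  rw [one_mul] at h2
  have hc := polar_comm (⇑q) z (1 : C)
  linear_combination h - h2 - q x * hc

end SplitCayleyAux

open SplitCayleyAux

/-- the trilinear map `(x,y,z) ↦ q(xy,z)` on the Peirce subspace `U`
is alternating and nonzero. -/
theorem split_cayley_trilinear_alternating {F C : Type*} [Field F] [NonAssocRing C] [Module F C]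
    [SMulCommClass F C C] [IsScalarTower F C C]
    (q : QuadraticForm F C) (hreg : q.HurwitzRegular) (hmul : q.Multiplicative)
    (hdim : Module.finrank F C = 8)
    (e₁ e₂ : C) (hidem : e₁ * e₁ = e₁) (h0 : e₁ ≠ 0) (h1 : e₁ ≠ 1)
    (hqe : q e₁ = 0) (he₂ : e₂ = 1 - e₁) :
    (∀ x ∈ peirceU F e₁ e₂, ∀ z ∈ peirceU F e₁ e₂, polar q (x * x) z = 0) ∧
    (∀ x ∈ peirceU F e₁ e₂, ∀ y ∈ peirceU F e₁ e₂, polar q (x * y) y = 0) ∧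
    (∀ x ∈ peirceU F e₁ e₂, ∀ y ∈ peirceU F e₁ e₂, polar q (x * y) x = 0) ∧
    (∃ x ∈ peirceU F e₁ e₂, ∃ y ∈ peirceU F e₁ e₂, ∃ z ∈ peirceU F e₁ e₂,
      polar q (x * y) z ≠ 0) := by
  subst he₂
  set f : C := 1 - e₁ with hfdef
  have hmul' : ∀ x y : C, q (x * y) = q x * q y := hmul
  have pc : ∀ a b : C, polar q a b = polar q b a := fun a b => polar_comm _ a b
  have hmemU : ∀ x : C, x ∈ peirceU F e₁ f ↔
      (e₁ * x = x ∧ x * f = x ∧ f * x = 0 ∧ x * e₁ = 0) := fun _ => Iff.rfl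
  have hmemV : ∀ x : C, x ∈ peirceU F f e₁ ↔
      (f * x = x ∧ x * e₁ = x ∧ e₁ * x = 0 ∧ x * f = 0) := fun _ => Iff.rfl
  -- q 1 = 1
  have hq1 : q 1 = 1 := by
    have h11 : q 1 = q 1 * q 1 := by have h := hmul' 1 1; rwa [one_mul] at h
    rcases mul_eq_zero.mp (show q 1 * (q 1 - 1) = 0 by linear_combination -h11) with h | h
    · exfalso
      apply h0
      apply hreg _ _ hqe
      intro y
      have hz : ∀ c : C, q c = 0 := fun c => by
        have hc := hmul' c 1; rw [mul_one] at hc; rw [hc, h, mul_zero]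
      simp [QuadraticMap.polar, hz]
    · exact sub_eq_zero.mp h
  -- polar e₁ 1 = 1
  have hte : polar q e₁ 1 = 1 := by
    by_contra hne
    apply h0
    apply hreg _ _ hqe
    intro z
    have h := ch_polar q hmul' e₁ z
    rw [hidem, hqe, mul_zero, sub_zero] at h
    have h2 : (1 - polar q e₁ 1) * polar q e₁ z = 0 := by linear_combination h
    rcases mul_eq_zero.mp h2 with h' | h'
    · exact absurd (by linear_combination -h') hne
    · exact h'
  -- nondegeneracy of polar
  have hnd : ∀ x : C, (∀ z : C, polar q x z = 0) → x = 0 := by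
    intro x hx
    apply hreg x hx
    have h := pm1 q hmul' 1 e₁ x
    rw [one_mul, hx (e₁ * x)] at h
    have hc : polar q 1 e₁ = 1 := (pc 1 e₁).trans hte
    rw [hc, one_mul] at h
    exact h.symm
  -- Cayley-Hamilton
  have hCH : ∀ x : C, x * x = polar q x 1 • x - q x • 1 := by
    intro x
    rw [← sub_eq_zero]
    apply hnd
    intro z
    simp only [polar_sub_left, polar_smul_left, smul_eq_mul]
    rw [ch_polar q hmul' x z]
    ring
  have hS1 : ∀ x y : C, x * (x * y) = polar q x 1 • (x * y) - q x • y := by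
    intro x y
    rw [← sub_eq_zero]
    apply hnd
    intro z
    simp only [polar_sub_left, polar_smul_left, smul_eq_mul]
    rw [adjL q hmul' x (x * y) z, pm2 q hmul' x y z]
    ring
  have hS2 : ∀ x y : C, (y * x) * x = polar q x 1 • (y * x) - q x • y := by
    intro x y
    rw [← sub_eq_zero]
    apply hnd
    intro z
    simp only [polar_sub_left, polar_smul_left, smul_eq_mul]
    rw [adjR q hmul' (y * x) x z, pm1 q hmul' z y x, pc z y]
    ring
  have hS3 : ∀ x y z : C, x * (y * z) + y * (x * z)
      = polar q x 1 • (y * z) + polar q y 1 • (x * z) - polar q x y • z := by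
    intro x y z
    rw [← sub_eq_zero]
    apply hnd
    intro c
    simp only [polar_sub_left, polar_add_left, polar_smul_left, smul_eq_mul]
    rw [adjL q hmul' x (y * z) c, adjL q hmul' y (x * z) c]
    have h4 := pm4 q hmul' y z x c
    have hc := pc y x
    linear_combination -h4 - polar q z c * hc
  have hS4 : ∀ x y z : C, (z * x) * y + (z * y) * x
      = polar q y 1 • (z * x) + polar q x 1 • (z * y) - polar q x y • z := by
    intro x y z
    rw [← sub_eq_zero]
    apply hnd
    intro c
    simp only [polar_sub_left, polar_add_left, polar_smul_left, smul_eq_mul]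
    rw [adjR q hmul' (z * x) y c, adjR q hmul' (z * y) x c]
    have h4 := pm4 q hmul' c y z x
    have hc1 := pc (c * x) (z * y)
    have hc2 := pc c z
    have hc3 := pc z c
    have hc4 := pc y x
    linear_combination -h4 - hc1 - polar q y x * hc2 - polar q z c * hc4
  -- basic e/f facts
  have hef : e₁ + f = 1 := by rw [hfdef]; abel
  have hff : f * f = f := by
    rw [hfdef, sub_mul, one_mul, mul_sub, mul_one, hidem]; abel
  have hef0 : e₁ * f = 0 := by rw [hfdef, mul_sub, mul_one, hidem, sub_self]
  have hfe0 : f * e₁ = 0 := by rw [hfdef, sub_mul, one_mul, hidem, sub_self]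
  have hqf : q f = 0 := by
    have h : q f = q 1 + q (-e₁) + polar q 1 (-e₁) := by
      rw [hfdef, sub_eq_add_neg]; exact qmap_add' q 1 (-e₁)
    rw [h, polar_neg_right, QuadraticMap.map_neg, hqe, (pc 1 e₁).trans hte, hq1]
    ring
  have ht1 : polar q 1 1 = 2 := by
    have h := qmap_add' q (1 : C) 1
    have h2 : ((1 : C) + 1) = (2 : F) • (1 : C) := (two_smul F (1:C)).symm
    rw [h2, QuadraticMap.map_smul, hq1, smul_eq_mul, mul_one] at h
    linear_combination -h
  have htf : polar q f 1 = 1 := by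
    rw [hfdef, polar_sub_left, ht1, hte]; norm_num
  -- U facts
  have hqU : ∀ u : C, e₁ * u = u → q u = 0 := fun u h => by
    rw [← h, hmul', hqe, zero_mul]
  have hpUe : ∀ u : C, e₁ * u = u → polar q u e₁ = 0 := fun u h => by
    have h2 := pm2 q hmul' e₁ u e₁
    rw [h, hidem, hqe, zero_mul] at h2; exact h2
  have hpUf : ∀ u : C, u * f = u → polar q u f = 0 := fun u h => by
    have h2 := pm1 q hmul' u f f
    rw [h, hff, hqf, mul_zero] at h2; exact h2
  have hpU1 : ∀ u : C, e₁ * u = u → u * f = u → polar q u 1 = 0 := fun u h h' => by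
    rw [← hef, polar_add_right, hpUe u h, hpUf u h', add_zero]
  have hpUU : ∀ u u' : C, e₁ * u = u → e₁ * u' = u' → polar q u u' = 0 := fun u u' h h' => by
    have h2 := pm2 q hmul' e₁ u u'
    rw [h, h', hqe, zero_mul] at h2; exact h2
  -- V facts
  have hqV : ∀ v : C, f * v = v → q v = 0 := fun v h => by
    rw [← h, hmul', hqf, zero_mul]
  have hpVf : ∀ v : C, f * v = v → polar q v f = 0 := fun v h => by
    have h2 := pm2 q hmul' f v f
    rw [h, hff, hqf, zero_mul] at h2; exact h2
  have hpVe : ∀ v : C, v * e₁ = v → polar q v e₁ = 0 := fun v h => by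
    have h2 := pm1 q hmul' v 1 e₁
    rw [h, one_mul, hqe, mul_zero] at h2; exact h2
  have hpV1 : ∀ v : C, f * v = v → v * e₁ = v → polar q v 1 = 0 := fun v h h' => by
    rw [← hef, polar_add_right, hpVe v h', hpVf v h, add_zero]
  have hpVV : ∀ v v' : C, f * v = v → f * v' = v' → polar q v v' = 0 := fun v v' h h' => by
    have h2 := pm2 q hmul' f v v'
    rw [h, h', hqf, zero_mul] at h2; exact h2
  -- projection facts
  have hEE : ∀ c : C, e₁ * (e₁ * c) = e₁ * c := fun c => by
    rw [hS1 e₁ c, hte, hqe, one_smul, zero_smul, sub_zero]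
  have hCee : ∀ c : C, (c * e₁) * e₁ = c * e₁ := fun c => by
    rw [hS2 e₁ c, hte, hqe, one_smul, zero_smul, sub_zero]
  have hFF : ∀ c : C, f * (f * c) = f * c := fun c => by
    rw [hS1 f c, htf, hqf, one_smul, zero_smul, sub_zero]
  have hCff : ∀ c : C, (c * f) * f = c * f := fun c => by
    rw [hS2 f c, htf, hqf, one_smul, zero_smul, sub_zero]
  have hpeEc : ∀ c : C, polar q e₁ (e₁ * c) = 0 := fun c => by
    have h2 := pm2 q hmul' e₁ 1 c
    rw [mul_one, hqe, zero_mul] at h2; exact h2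
  have hpfFc : ∀ c : C, polar q f (f * c) = 0 := fun c => by
    have h2 := pm2 q hmul' f 1 c
    rw [mul_one, hqf, zero_mul] at h2; exact h2
  have he1f : e₁ = 1 - f := by rw [hfdef]; abel
  -- Peirce projections land in U and V
  have projU : ∀ c : C, (e₁ * c) * f ∈ peirceU F e₁ f := by
    intro c
    have hh1 : e₁ * ((e₁ * c) * f) = (e₁ * c) * f := by
      have h := hS3 e₁ (e₁ * c) f
      rw [hef0, mul_zero, smul_zero, hte, one_smul, hpeEc c, zero_smul, add_zero, add_zero,
        sub_zero] at h
      exact h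
    have hh2 : ((e₁ * c) * f) * f = (e₁ * c) * f := hCff (e₁ * c)
    have hh3 : f * ((e₁ * c) * f) = 0 := by
      have h5 : e₁ * ((e₁ * c) * f) + f * ((e₁ * c) * f) = (e₁ * c) * f := by
        rw [← add_mul, hef, one_mul]
      rw [hh1] at h5
      exact add_eq_left.mp h5
    have hh4 : ((e₁ * c) * f) * e₁ = 0 := by
      have h5 : ((e₁ * c) * f) * e₁ + ((e₁ * c) * f) * f = (e₁ * c) * f := by
        rw [← mul_add, hef, mul_one]
      rw [hh2] at h5
      exact add_eq_right.mp h5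
    exact (hmemU _).mpr ⟨hh1, hh2, hh3, hh4⟩
  have projV : ∀ c : C, (f * c) * e₁ ∈ peirceU F f e₁ := by
    intro c
    have hh1 : f * ((f * c) * e₁) = (f * c) * e₁ := by
      have h := hS3 f (f * c) e₁
      rw [hfe0, mul_zero, smul_zero, htf, one_smul, hpfFc c, zero_smul, add_zero, add_zero,
        sub_zero] at h
      exact h
    have hh2 : ((f * c) * e₁) * e₁ = (f * c) * e₁ := hCee (f * c)
    have hh3 : e₁ * ((f * c) * e₁) = 0 := by
      have h5 : e₁ * ((f * c) * e₁) + f * ((f * c) * e₁) = (f * c) * e₁ := by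
        rw [← add_mul, hef, one_mul]
      rw [hh1] at h5
      exact add_eq_right.mp h5
    have hh4 : ((f * c) * e₁) * f = 0 := by
      have h5 : ((f * c) * e₁) * e₁ + ((f * c) * e₁) * f = (f * c) * e₁ := by
        rw [← mul_add, hef, mul_one]
      rw [hh2] at h5
      exact add_eq_left.mp h5
    exact (hmemV _).mpr ⟨hh1, hh2, hh3, hh4⟩
  -- diagonal Peirce pieces are one-dimensional
  have hLCe : ∀ a : C, e₁ * a = a → a * e₁ = a →
      a = (polar q a 1 - polar q e₁ a) • e₁ := by
    intro a ha1 ha2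
    have h := hS3 e₁ a e₁
    rw [hidem, ha2, ha1, hte, one_smul] at h
    calc a = (a + a) - a := by abel
    _ = (a + polar q a 1 • e₁ - polar q e₁ a • e₁) - a := by
        rw [h]
    _ = (polar q a 1 - polar q e₁ a) • e₁ := by rw [sub_smul]; abel
  have hLCf : ∀ a : C, f * a = a → a * f = a →
      a = (polar q a 1 - polar q f a) • f := by
    intro a ha1 ha2
    have h := hS3 f a f
    rw [hff, ha2, ha1, htf, one_smul] at h
    calc a = (a + a) - a := by abel
    _ = (a + polar q a 1 • f - polar q f a • f) - a := by
        rw [h]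
    _ = (polar q a 1 - polar q f a) • f := by rw [sub_smul]; abel
  -- Peirce decomposition (spanning)
  have hDEC : ∀ c : C, ∃ s t : F, ∃ u v : C, u ∈ peirceU F e₁ f ∧ v ∈ peirceU F f e₁ ∧
      c = s • e₁ + u + v + t • f := by
    intro c
    have hu := projU c
    have hv := projV c
    obtain ⟨hu1, hu2, hu3, hu4⟩ := (hmemU _).mp hu
    obtain ⟨hv1, hv2, hv3, hv4⟩ := (hmemV _).mp hv
    have hdece : e₁ * c = (e₁ * c) * e₁ + (e₁ * c) * f := by
      rw [← mul_add, hef, mul_one]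
    have hdecf : f * c = (f * c) * e₁ + (f * c) * f := by
      rw [← mul_add, hef, mul_one]
    have hae : ((e₁ * c) * e₁) * e₁ = (e₁ * c) * e₁ := hCee (e₁ * c)
    have hea : e₁ * ((e₁ * c) * e₁) = (e₁ * c) * e₁ := by
      have h5 : e₁ * ((e₁ * c) * e₁ + (e₁ * c) * f) = (e₁ * c) * e₁ + (e₁ * c) * f := by
        rw [← hdece]; exact hEE c
      rw [mul_add, hu1] at h5
      exact add_right_cancel h5
    have hsa := hLCe _ hea hae
    have hbf : ((f * c) * f) * f = (f * c) * f := hCff (f * c)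
    have hfb : f * ((f * c) * f) = (f * c) * f := by
      have h5 : f * ((f * c) * e₁ + (f * c) * f) = (f * c) * e₁ + (f * c) * f := by
        rw [← hdecf]; exact hFF c
      rw [mul_add, hv1] at h5
      exact add_left_cancel h5
    have hsb := hLCf _ hfb hbf
    refine ⟨polar q ((e₁ * c) * e₁) 1 - polar q e₁ ((e₁ * c) * e₁),
      polar q ((f * c) * f) 1 - polar q f ((f * c) * f),
      (e₁ * c) * f, (f * c) * e₁, hu, hv, ?_⟩
    calc c = 1 * c := (one_mul c).symm
    _ = (e₁ + f) * c := by rw [hef]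
    _ = ((e₁ * c) * e₁ + (e₁ * c) * f) + ((f * c) * e₁ + (f * c) * f) := by
        rw [add_mul, ← hdece, ← hdecf]
    _ = (polar q ((e₁ * c) * e₁) 1 - polar q e₁ ((e₁ * c) * e₁)) • e₁ + (e₁ * c) * f
        + (f * c) * e₁ + (polar q ((f * c) * f) 1 - polar q f ((f * c) * f)) • f := by
        rw [← hsa, ← hsb]; abel
  -- nondegeneracy of the U-V pairing
  have hnUV : ∀ u : C, u ∈ peirceU F e₁ f →
      (∀ v' : C, v' ∈ peirceU F f e₁ → polar q u v' = 0) → u = 0 := by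
    intro u hu hperp
    obtain ⟨g1, g2, g3, g4⟩ := (hmemU u).mp hu
    apply hreg _ _ (hqU u g1)
    intro c
    obtain ⟨s, t, u', v', hu', hv', rfl⟩ := hDEC c
    obtain ⟨k1, k2, k3, k4⟩ := (hmemU u').mp hu'
    rw [polar_add_right, polar_add_right, polar_add_right, polar_smul_right, polar_smul_right,
      hpUe u g1, hpUf u g2, hpUU u u' g1 k1, hperp v' hv', smul_zero, smul_zero]
    norm_num
  have hnVU : ∀ w : C, w ∈ peirceU F f e₁ →
      (∀ z : C, z ∈ peirceU F e₁ f → polar q w z = 0) → w = 0 := by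
    intro w hw hperp
    obtain ⟨g1, g2, g3, g4⟩ := (hmemV w).mp hw
    apply hreg _ _ (hqV w g1)
    intro c
    obtain ⟨s, t, u', v', hu', hv', rfl⟩ := hDEC c
    obtain ⟨k1, k2, k3, k4⟩ := (hmemV v').mp hv'
    rw [polar_add_right, polar_add_right, polar_add_right, polar_smul_right, polar_smul_right,
      hpVe w g2, hpVf w g1, hpVV w v' g1 k1, hperp u' hu', smul_zero, smul_zero]
    norm_num
  -- squares in U vanish
  have hUsq : ∀ x : C, x ∈ peirceU F e₁ f → x * x = 0 := by
    intro x hx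
    obtain ⟨g1, g2, g3, g4⟩ := (hmemU x).mp hx
    rw [hCH x, hqU x g1, hpU1 x g1 g2, zero_smul, zero_smul, sub_zero]
  refine ⟨?_, ?_, ?_, ?_⟩
  · intro x hx z hz
    rw [hUsq x hx, polar_zero_left]
  · intro x hx y hy
    obtain ⟨g1, g2, g3, g4⟩ := (hmemU y).mp hy
    have h := pm1 q hmul' x 1 y
    rw [one_mul, hqU y g1, mul_zero] at h
    exact h
  · intro x hx y hy
    obtain ⟨g1, g2, g3, g4⟩ := (hmemU x).mp hx
    have h := adjL q hmul' x y x
    rw [hpU1 x g1 g2, hUsq x hx, polar_zero_right, zero_mul, sub_zero] at h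
    exact h
  by_contra hcon
  push_neg at hcon
  -- Step A: all products of elements of U vanish
  have hUU0 : ∀ x y : C, x ∈ peirceU F e₁ f → y ∈ peirceU F e₁ f → x * y = 0 := by
    intro x y hx hy
    obtain ⟨g1, g2, g3, g4⟩ := (hmemU x).mp hx
    obtain ⟨k1, k2, k3, k4⟩ := (hmemU y).mp hy
    have hpe_x : polar q e₁ x = 0 := (pc e₁ x).trans (hpUe x g1)
    have he0 : e₁ * (x * y) = 0 := by
      have h := hS3 e₁ x y
      rw [k1, hte, one_smul, hpU1 x g1 g2, zero_smul, hpe_x, zero_smul, add_zero, sub_zero] at h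
      exact add_eq_right.mp h
    have hw1 : f * (x * y) = x * y := by
      rw [hfdef, sub_mul, one_mul, he0, sub_zero]
    have hw2 : (x * y) * e₁ = x * y := by
      have h := hS4 y e₁ x
      -- (x*y)*e₁ + (x*e₁)*y = polar e₁ 1 • (x*y) + polar y 1 • (x*e₁) - polar y e₁ • x
      rw [g4, zero_mul, smul_zero, hte, one_smul, hpUe y k1, zero_smul, add_zero, add_zero,
        sub_zero] at h
      exact h
    have hw4 : (x * y) * f = 0 := by
      have h5 : (x * y) * e₁ + (x * y) * f = x * y := by
        rw [← mul_add, hef, mul_one]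
      rw [hw2] at h5
      exact add_eq_left.mp h5
    have hwV : x * y ∈ peirceU F f e₁ := (hmemV _).mpr ⟨hw1, hw2, he0, hw4⟩
    exact hnVU (x * y) hwV (fun z hz => hcon x hx y hy z hz)
  -- Step B: products V * U are multiples of f
  have hP5 : ∀ v x : C, v ∈ peirceU F f e₁ → x ∈ peirceU F e₁ f →
      v * x = -(polar q x v) • f := by
    intro v x hv hx
    obtain ⟨g1, g2, g3, g4⟩ := (hmemV v).mp hv
    obtain ⟨k1, k2, k3, k4⟩ := (hmemU x).mp hx
    have hpe_v : polar q e₁ v = 0 := (pc e₁ v).trans (hpVe v g2)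
    have hfa : f * (v * x) = v * x := by
      have h := hS3 e₁ v x
      rw [k1, hte, one_smul, hpV1 v g1 g2, zero_smul, hpe_v, zero_smul, add_zero, sub_zero] at h
      have he0 : e₁ * (v * x) = 0 := add_eq_right.mp h
      rw [hfdef, sub_mul, one_mul, he0, sub_zero]
    have haf : (v * x) * f = v * x := by
      have h := hS4 x f v
      -- (v*x)*f + (v*f)*x = polar f 1 • (v*x) + polar x 1 • (v*f) - polar x f • v
      rw [g4, zero_mul, smul_zero, htf, one_smul, hpUf x k2, zero_smul, add_zero, add_zero,
        sub_zero] at h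
      exact h
    have hLC := hLCf (v * x) hfa haf
    have ht : polar q (v * x) 1 = -(polar q x v) := by
      have h := adjR q hmul' v x 1
      rw [hpV1 v g1 g2, zero_mul, one_mul, zero_sub] at h
      exact h
    have hpf : polar q f (v * x) = 0 := by
      have h := adjR q hmul' v x f
      rw [k3, polar_zero_left, hpVf v g1, zero_mul, sub_zero] at h
      exact (pc f (v * x)).trans h
    rw [hLC, ht, hpf, sub_zero]
  -- dimension count
  have hfin : FiniteDimensional F C := Module.finite_of_finrank_pos (by rw [hdim]; norm_num)
  set U : Submodule F C := peirceU F e₁ f with hUdef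
  set V : Submodule F C := peirceU F f e₁ with hVdef
  set W₁ : Submodule F C := (Submodule.span F {e₁}) ⊔ U with hW1def
  set W₂ : Submodule F C := (Submodule.span F {f}) ⊔ V with hW2def
  have htop : W₁ ⊔ W₂ = ⊤ := by
    rw [eq_top_iff]
    intro c _
    obtain ⟨s, t, u', v', hu', hv', rfl⟩ := hDEC c
    refine Submodule.add_mem _ (Submodule.add_mem _ (Submodule.add_mem _ ?_ ?_) ?_) ?_
    · exact Submodule.mem_sup_left (Submodule.mem_sup_left
        (Submodule.smul_mem _ _ (Submodule.mem_span_singleton_self e₁)))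
    · exact Submodule.mem_sup_left (Submodule.mem_sup_right hu')
    · exact Submodule.mem_sup_right (Submodule.mem_sup_right hv')
    · exact Submodule.mem_sup_right (Submodule.mem_sup_left
        (Submodule.smul_mem _ _ (Submodule.mem_span_singleton_self f)))
  have heW : e₁ ∈ W₁ := Submodule.mem_sup_left (Submodule.mem_span_singleton_self e₁)
  have hinj : Function.Injective ((q.polarBilin.compl₂ W₁.subtype).domRestrict W₂) := by
    apply LinearMap.ker_eq_bot.mp
    apply LinearMap.ker_eq_bot'.mpr
    intro w hw0
    have hw : ∀ x : C, x ∈ W₁ → polar q (w : C) x = 0 := by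
      intro x hx
      have h := DFunLike.congr_fun hw0 (⟨x, hx⟩ : W₁)
      simpa [LinearMap.domRestrict_apply, LinearMap.compl₂_apply] using h
    obtain ⟨y, hy, z, hz, hwsum⟩ := Submodule.mem_sup.mp w.2
    obtain ⟨t, rfl⟩ := Submodule.mem_span_singleton.mp hy
    obtain ⟨z1, z2, z3, z4⟩ := (hmemV z).mp hz
    have hfz : polar q f z = 0 := (pc f z).trans (hpVf z z1)
    have hq_w : q (w : C) = 0 := by
      rw [← hwsum, qmap_add', QuadraticMap.map_smul, hqf, hqV z z1, polar_smul_left, hfz,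
        smul_zero, smul_zero]
      norm_num
    have hw0' : ∀ c : C, polar q (w : C) c = 0 := by
      intro c
      obtain ⟨s', t', u', v', hu', hv', rfl⟩ := hDEC c
      have hUW : u' ∈ W₁ := Submodule.mem_sup_right hu'
      have hwv' : polar q (w : C) v' = 0 := by
        obtain ⟨m1, m2, m3, m4⟩ := (hmemV v').mp hv'
        have hfv' : polar q f v' = 0 := (pc f v').trans (hpVf v' m1)
        rw [← hwsum, polar_add_left, polar_smul_left, hfv', hpVV z v' z1 m1, smul_zero, add_zero]
      have hwf : polar q (w : C) f = 0 := by
        rw [← hwsum, polar_add_left, polar_smul_left, hpVf z z1, polar_self, hqf, smul_zero,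
          smul_zero, add_zero]
      rw [polar_add_right, polar_add_right, polar_add_right, polar_smul_right, polar_smul_right,
        hw e₁ heW, hw u' hUW, hwv', hwf, smul_zero, smul_zero]
      norm_num
    exact Subtype.ext (hreg _ hw0' hq_w)
  have hle21 : Module.finrank F W₂ ≤ Module.finrank F W₁ := by
    calc Module.finrank F W₂ ≤ Module.finrank F (Module.Dual F W₁) :=
        LinearMap.finrank_le_finrank_of_injective hinj
    _ = Module.finrank F W₁ := Subspace.dual_finrank_eq
  have hsum8 : 8 ≤ Module.finrank F W₁ + Module.finrank F W₂ := by
    have h8 : Module.finrank F ↑(W₁ ⊔ W₂) = 8 := by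
      rw [htop, finrank_top, hdim]
    have hle := Submodule.finrank_sup_add_finrank_inf_eq W₁ W₂
    omega
  have hW1U : Module.finrank F W₁ ≤ 1 + Module.finrank F U := by
    have hle := Submodule.finrank_sup_add_finrank_inf_eq (Submodule.span F {e₁}) U
    have h1' : Module.finrank F (Submodule.span F {e₁}) = 1 := finrank_span_singleton h0
    rw [← hW1def] at hle
    omega
  have hU2 : 2 ≤ Module.finrank F U := by omega
  have hUnt : Nontrivial U := (Module.finrank_pos_iff (R := F)).mp (by omega)
  obtain ⟨u₁, hu₁ne⟩ := exists_ne (0 : U)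
  have hu₁C : (u₁ : C) ≠ 0 := fun h => hu₁ne (Subtype.ext h)
  have hu₁U : (u₁ : C) ∈ peirceU F e₁ f := u₁.2
  obtain ⟨v₀, hv₀, hpair⟩ : ∃ v₀ : C, v₀ ∈ peirceU F f e₁ ∧ polar q (u₁ : C) v₀ ≠ 0 := by
    by_contra hnone
    push_neg at hnone
    exact hu₁C (hnUV _ hu₁U (fun v' hv' => hnone v' hv'))
  have hkey : ∀ u' : C, u' ∈ peirceU F e₁ f →
      polar q u' v₀ • (u₁ : C) = polar q (u₁ : C) v₀ • u' := by
    intro u' hu'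
    obtain ⟨a1, a2, a3, a4⟩ := (hmemU _).mp hu₁U
    have h := hS3 (u₁ : C) v₀ u'
    rw [hUU0 _ _ hu₁U hu', mul_zero, smul_zero, add_zero, add_zero, hpU1 _ a1 a2, zero_smul,
      zero_sub, hP5 v₀ u' hv₀ hu', mul_smul_comm, a2, neg_smul] at h
    exact neg_inj.mp h
  have hspan : U ≤ Submodule.span F {(u₁ : C)} := by
    intro u' hu'
    rw [Submodule.mem_span_singleton]
    refine ⟨polar q u' v₀ / polar q (u₁ : C) v₀, ?_⟩
    have h := hkey u' hu'
    have h2 := congrArg (fun y => (polar q (u₁ : C) v₀)⁻¹ • y) h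
    simp only [smul_smul] at h2
    rw [inv_mul_cancel₀ hpair, one_smul] at h2
    rw [div_eq_inv_mul]
    exact h2
  have hfle : Module.finrank F U ≤ 1 := by
    calc Module.finrank F U ≤ Module.finrank F (Submodule.span F {(u₁ : C)}) :=
        Submodule.finrank_mono hspan
    _ = 1 := finrank_span_singleton hu₁C
  omega
end

section
/- The superalgebra B(1,2) = F1 ⊕ V over a field F of characteristic 3, with V a 2-dimensional space with nondegenerate alternating form (·,·), multiplication 1x = x1 = x and uv = (u,v)1 for u,v ∈ V, and norm given by q₀(1) = 1, b(1,V) = 0, b(u,v) = (u,v), is a Hurwitz superalgebra. -/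
open QuadraticMap

/-- The sign `(−1)^i` for a parity `i ∈ ℤ₂`, as an element of `F`. -/
def sgn2 (F : Type*) [Field F] : ZMod 2 → F := fun i => if i = 0 then 1 else -1

/-- `x` is homogeneous of parity `i` with respect to the decomposition `even ⊕ odd`. -/
def IsPar {F S : Type*} [Field F] [AddCommGroup S] [Module F S]
    (even odd : Submodule F S) (x : S) (i : ZMod 2) : Prop :=
  (i = 0 ∧ x ∈ even) ∨ (i = 1 ∧ x ∈ odd)

/-- A composition superalgebra structure on the vector space `S` with (not necessarily
associative, not necessarily unital) bilinear multiplication `mul`: a `ℤ₂`-graded algebra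
`S = even ⊕ odd` with a regular quadratic superform `q = (q0, b)` satisfying the composition
superalgebra axioms. -/
structure SuperComp (F S : Type*) [Field F] [AddCommGroup S] [Module F S]
    (mul : S →ₗ[F] S →ₗ[F] S) where
  even : Submodule F S
  odd : Submodule F S
  compl : IsCompl even odd
  mul_ee : ∀ x ∈ even, ∀ y ∈ even, mul x y ∈ even
  mul_eo : ∀ x ∈ even, ∀ y ∈ odd, mul x y ∈ odd
  mul_oe : ∀ x ∈ odd, ∀ y ∈ even, mul x y ∈ odd
  mul_oo : ∀ x ∈ odd, ∀ y ∈ odd, mul x y ∈ even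
  /-- the quadratic form `q0` on the even part -/
  q0 : QuadraticForm F even
  /-- the even supersymmetric bilinear form `b` -/
  b : S →ₗ[F] S →ₗ[F] F
  /-- on the even part, `b` is the polar form of `q0` -/
  b_polar : ∀ x y : even, b x y = polar q0 x y
  /-- `b` is alternating on the odd part -/
  b_alt_odd : ∀ x ∈ odd, b x x = 0
  b_alt_skew : ∀ x ∈ odd, ∀ y ∈ odd, b x y = - b y x
  /-- `b` is even: even and odd parts are orthogonal -/
  b_eo : ∀ x ∈ even, ∀ y ∈ odd, b x y = 0 ∧ b y x = 0
  /-- regularity of `q0` (KMRT-style) -/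
  q0_reg : ∀ x : even, (∀ y : even, polar q0 x y = 0) → q0 x = 0 → (x : S) = 0
  /-- nondegeneracy of `b` on the odd part -/
  b_odd_nondeg : ∀ x ∈ odd, (∀ y ∈ odd, b x y = 0) → x = 0
  /-- composition axiom i): `q0` is multiplicative on the even part -/
  comp_i : ∀ x y : even, q0 ⟨mul x y, mul_ee x x.2 y y.2⟩ = q0 x * q0 y
  /-- composition axiom ii) -/
  comp_ii₁ : ∀ (x : even) (y z : S), b (mul x y) (mul x z) = q0 x * b y z
  comp_ii₂ : ∀ (x : even) (y z : S), b (mul y x) (mul z x) = q0 x * b y z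
  /-- composition axiom iii), for homogeneous elements -/
  comp_iii : ∀ (px py pz pt : ZMod 2) (x y z t : S),
    IsPar even odd x px → IsPar even odd y py → IsPar even odd z pz → IsPar even odd t pt →
    b (mul x y) (mul z t) + sgn2 F (px * py + px * pz + py * pz) * b (mul z y) (mul x t)
      = sgn2 F (py * pz) * (b x z * b y t)

/-- A Hurwitz superalgebra structure: a unital composition superalgebra. -/
structure HurwitzSuperOn (F S : Type*) [Field F] [AddCommGroup S] [Module F S]
    (mul : S →ₗ[F] S →ₗ[F] S) extends SuperComp F S mul where
  one : S
  one_even : one ∈ even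
  one_mul : ∀ x : S, mul one x = x
  mul_one : ∀ x : S, mul x one = x

/-- `B(1,2) = F1 ⊕ V` over a field of characteristic 3, with `V` 2-dimensional
with a nondegenerate alternating form (encoded by `b`), multiplication `1x = x1 = x`,
`uv = (u,v)1` on `V`, and norm `q₀(1) = 1`, `b(1,V) = 0`, is a Hurwitz superalgebra. -/
theorem B12_is_hurwitz_superalgebra {F S : Type*} [Field F] [AddCommGroup S] [Module F S]
    (hchar : ringChar F = 3)
    (mul : S →ₗ[F] S →ₗ[F] S) (e : S) (V : Submodule F S) (b : S →ₗ[F] S →ₗ[F] F)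
    (he : e ≠ 0)
    (hcompl : IsCompl (Submodule.span F {e}) V)
    (hV2 : Module.finrank F V = 2)
    (hunit : ∀ x : S, mul e x = x ∧ mul x e = x)
    (hmulV : ∀ u ∈ V, ∀ v ∈ V, mul u v = b u v • e)
    (halt : ∀ u ∈ V, b u u = 0)
    (hskew : ∀ u ∈ V, ∀ v ∈ V, b u v = - b v u)
    (hnd : ∀ u ∈ V, (∀ v ∈ V, b u v = 0) → u = 0)
    (hbeV : ∀ v ∈ V, b e v = 0 ∧ b v e = 0)
    (hbee : b e e = 2) :
    ∃ H : HurwitzSuperOn F S mul,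
      H.one = e ∧ H.even = Submodule.span F {e} ∧ H.odd = V ∧ H.b = b ∧
      ∀ (c : F) (h : c • e ∈ H.even), H.q0 ⟨c • e, h⟩ = c ^ 2 := by
  haveI : CharP F 3 := hchar ▸ ringChar.charP F
  have h3 : (3 : F) = 0 := by exact_mod_cast CharP.cast_eq_zero F 3
  have h2ne : (2 : F) ≠ 0 := by
    intro h
    have : (1 : F) = 0 := by linear_combination h3 - h
    exact one_ne_zero this
  set E := Submodule.span F {e} with hE
  have heE : e ∈ E := Submodule.mem_span_singleton_self e
  have hmemE : ∀ x ∈ E, ∃ c : F, x = c • e := by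
    intro x hx
    rw [hE, Submodule.mem_span_singleton] at hx
    obtain ⟨c, hc⟩ := hx
    exact ⟨c, hc.symm⟩
  have hml : ∀ (c : F) (y : S), mul (c • e) y = c • y := by
    intro c y; rw [_root_.map_smul]; simp [(hunit y).1]
  have hmr : ∀ (c : F) (y : S), mul y (c • e) = c • y := by
    intro c y; rw [_root_.map_smul]; simp [(hunit y).2]
  have hmE : ∀ c d : F, mul (c • e) (d • e) = (c * d) • e := by
    intro c d; rw [hml, smul_smul]
  have hbE : ∀ c d : F, b (c • e) (d • e) = 2 * c * d := by
    intro c d; simp [hbee]; ring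
  have hbz : ∀ a v, a ∈ E → v ∈ V → b a v = 0 := by
    intro a v ha hv
    obtain ⟨c, rfl⟩ := hmemE a ha
    simp [(hbeV v hv).1]
  have hbz' : ∀ a v, a ∈ E → v ∈ V → b v a = 0 := by
    intro a v ha hv
    obtain ⟨c, rfl⟩ := hmemE a ha
    simp [(hbeV v hv).2]
  have hbEv : ∀ x ∈ E, ∀ v ∈ V, b x v = 0 ∧ b v x = 0 :=
    fun x hx v hv => ⟨hbz x v hx hv, hbz' x v hx hv⟩
  have mee : ∀ x ∈ E, ∀ y ∈ E, mul x y ∈ E := by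
    intro x hx y hy
    obtain ⟨c, rfl⟩ := hmemE x hx
    rw [hml]; exact Submodule.smul_mem _ _ hy
  have meo : ∀ x ∈ E, ∀ y ∈ V, mul x y ∈ V := by
    intro x hx y hy
    obtain ⟨c, rfl⟩ := hmemE x hx
    rw [hml]; exact Submodule.smul_mem _ _ hy
  have moe : ∀ x ∈ V, ∀ y ∈ E, mul x y ∈ V := by
    intro x hx y hy
    obtain ⟨c, rfl⟩ := hmemE y hy
    rw [hmr]; exact Submodule.smul_mem _ _ hx
  have moo : ∀ x ∈ V, ∀ y ∈ V, mul x y ∈ E := by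
    intro x hx y hy
    rw [hmulV x hx y hy]; exact Submodule.smul_mem _ _ heE
  have pluck : ∀ x ∈ V, ∀ y ∈ V, ∀ z ∈ V, ∀ t ∈ V,
      b x y * b z t + b y z * b x t - b x z * b y t = 0 := by
    have : Module.Finite F V := Module.finite_of_finrank_eq_succ hV2
    set w := Module.finBasisOfFinrankEq F V hV2 with hw
    set u : S := ↑(w 0) with hu
    set v : S := ↑(w 1) with hv
    have hrep : ∀ x ∈ V, ∃ a c : F, x = a • u + c • v := by
      intro x hx
      refine ⟨w.repr ⟨x, hx⟩ 0, w.repr ⟨x, hx⟩ 1, ?_⟩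
      have h := w.sum_repr ⟨x, hx⟩
      rw [Fin.sum_univ_two] at h
      have := congrArg (Submodule.subtype V) h
      simpa [hu, hv] using this.symm
    have huV : u ∈ V := (w 0).2
    have hvV : v ∈ V := (w 1).2
    have h0 : b u u = 0 := halt u huV
    have h1 : b v v = 0 := halt v hvV
    have h2 : b v u = - b u v := hskew v hvV u huV
    intro x hx y hy z hz t ht
    obtain ⟨x1, x2, rfl⟩ := hrep x hx
    obtain ⟨y1, y2, rfl⟩ := hrep y hy
    obtain ⟨z1, z2, rfl⟩ := hrep z hz
    obtain ⟨t1, t2, rfl⟩ := hrep t ht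
    simp only [map_add, _root_.map_smul, LinearMap.add_apply, LinearMap.smul_apply,
      smul_eq_mul, h0, h1, h2]
    ring
  have hq0 : ∀ x : E, (LinearMap.BilinMap.toQuadraticMap
      ((2 : F) • (b.compl₁₂ E.subtype E.subtype))) x = 2 * b (x : S) (x : S) := by
    intro x
    simp [LinearMap.BilinMap.toQuadraticMap_apply]
  have hs0 : sgn2 F 0 = 1 := by simp [sgn2]
  have hs1 : sgn2 F 1 = -1 := by simp [sgn2]
  refine ⟨{
    even := E
    odd := V
    compl := hcompl
    mul_ee := mee
    mul_eo := meo
    mul_oe := moe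
    mul_oo := moo
    q0 := LinearMap.BilinMap.toQuadraticMap ((2 : F) • (b.compl₁₂ E.subtype E.subtype))
    b := b
    b_polar := ?_
    b_alt_odd := halt
    b_alt_skew := hskew
    b_eo := hbEv
    q0_reg := ?_
    b_odd_nondeg := hnd
    comp_i := ?_
    comp_ii₁ := ?_
    comp_ii₂ := ?_
    comp_iii := ?_
    one := e
    one_even := heE
    one_mul := fun x => (hunit x).1
    mul_one := fun x => (hunit x).2 }, rfl, rfl, rfl, rfl, ?_⟩
  · -- b_polar
    intro x y
    rw [LinearMap.BilinMap.polar_toQuadraticMap]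
    obtain ⟨cx, hcx⟩ := hmemE x.1 x.2
    obtain ⟨cy, hcy⟩ := hmemE y.1 y.2
    simp only [LinearMap.smul_apply, LinearMap.compl₁₂_apply, Submodule.subtype_apply,
      smul_eq_mul]
    rw [hcx, hcy, hbE, hbE]
    linear_combination (-2 * cx * cy) * h3
  · -- q0_reg
    intro x _ hq
    rw [hq0] at hq
    obtain ⟨c, hc⟩ := hmemE x.1 x.2
    rw [hc, hbE] at hq
    have hc0 : c = 0 := by
      rcases mul_eq_zero.mp hq with h | h
      · exact absurd h h2ne
      · rcases mul_eq_zero.mp h with h' | h'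
        · rcases mul_eq_zero.mp h' with h'' | h''
          · exact absurd h'' h2ne
          · exact h''
        · exact h'
    rw [hc, hc0, zero_smul]
  · -- comp_i
    intro x y
    rw [hq0, hq0, hq0]
    obtain ⟨cx, hcx⟩ := hmemE x.1 x.2
    obtain ⟨cy, hcy⟩ := hmemE y.1 y.2
    show 2 * b (mul (x : S) (y : S)) (mul (x : S) (y : S))
      = 2 * b (x : S) (x : S) * (2 * b (y : S) (y : S))
    rw [hcx, hcy, hmE, hbE, hbE, hbE]
    linear_combination (-4 * cx ^ 2 * cy ^ 2) * h3
  · -- comp_ii₁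
    intro x y z
    rw [hq0]
    obtain ⟨c, hc⟩ := hmemE x.1 x.2
    rw [hc, hml, hml, hbE]
    simp only [_root_.map_smul, LinearMap.smul_apply, smul_eq_mul]
    linear_combination (- c ^ 2 * b y z) * h3
  · -- comp_ii₂
    intro x y z
    rw [hq0]
    obtain ⟨c, hc⟩ := hmemE x.1 x.2
    rw [hc, hmr, hmr, hbE]
    simp only [_root_.map_smul, LinearMap.smul_apply, smul_eq_mul]
    linear_combination (- c ^ 2 * b y z) * h3
  · -- comp_iii
    intro px py pz pt x y z t hx hy hz ht
    rcases hx with ⟨rfl, hx⟩ | ⟨rfl, hx⟩ <;>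
      rcases hy with ⟨rfl, hy⟩ | ⟨rfl, hy⟩ <;>
        rcases hz with ⟨rfl, hz⟩ | ⟨rfl, hz⟩ <;>
          rcases ht with ⟨rfl, ht⟩ | ⟨rfl, ht⟩
    -- (0,0,0,0)
    · obtain ⟨cx, rfl⟩ := hmemE x hx
      obtain ⟨cy, rfl⟩ := hmemE y hy
      obtain ⟨cz, rfl⟩ := hmemE z hz
      obtain ⟨ct, rfl⟩ := hmemE t ht
      rw [show (0*0+0*0+0*0 : ZMod 2) = 0 by decide, show ((0:ZMod 2)*0 : ZMod 2) = 0 by decide,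
        hs0, hmE, hmE, hmE, hmE, hbE, hbE, hbE, hbE]
      ring
    -- (0,0,0,1)
    · rw [hbz _ _ (mee x hx y hy) (meo z hz t ht),
        hbz _ _ (mee z hz y hy) (meo x hx t ht), hbz _ _ hy ht]
      ring
    -- (0,0,1,0)
    · rw [hbz _ _ (mee x hx y hy) (moe z hz t ht),
        hbz' _ _ (mee x hx t ht) (moe z hz y hy), hbz _ _ hx hz]
      ring
    -- (0,0,1,1)
    · obtain ⟨cx, rfl⟩ := hmemE x hx
      obtain ⟨cy, rfl⟩ := hmemE y hy
      rw [show (0*0+0*1+0*1 : ZMod 2) = 0 by decide, show ((0:ZMod 2)*1 : ZMod 2) = 0 by decide,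
        hs0, hmE, hmulV z hz t ht, hml, hmr, hbE,
        hbz _ _ (Submodule.smul_mem _ _ heE) hz]
      simp only [_root_.map_smul, LinearMap.smul_apply, smul_eq_mul]
      linear_combination (cx * cy * b z t) * h3
    -- (0,1,0,0)
    · rw [hbz' _ _ (mee z hz t ht) (meo x hx y hy),
        hbz' _ _ (mee x hx t ht) (meo z hz y hy), hbz' _ _ ht hy]
      ring
    -- (0,1,0,1)
    · obtain ⟨cx, rfl⟩ := hmemE x hx
      obtain ⟨cz, rfl⟩ := hmemE z hz
      rw [show (0*1+0*0+1*0 : ZMod 2) = 0 by decide, show ((1:ZMod 2)*0 : ZMod 2) = 0 by decide,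
        hs0, hml, hml, hml, hml, hbE]
      simp only [_root_.map_smul, LinearMap.smul_apply, smul_eq_mul]
      ring
    -- (0,1,1,0)
    · obtain ⟨cx, rfl⟩ := hmemE x hx
      obtain ⟨ct, rfl⟩ := hmemE t ht
      rw [show (0*1+0*1+1*1 : ZMod 2) = 1 by decide, show ((1:ZMod 2)*1 : ZMod 2) = 1 by decide,
        hs1, hml, hmr, hmulV z hz y hy, hmE, hbE,
        hbz _ _ (Submodule.smul_mem _ _ heE) hz, hskew z hz y hy]
      simp only [_root_.map_smul, LinearMap.smul_apply, smul_eq_mul]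
      linear_combination (cx * ct * b y z) * h3
    -- (0,1,1,1)
    · rw [hbz' _ _ (moo z hz t ht) (meo x hx y hy),
        hbz _ _ (moo z hz y hy) (meo x hx t ht), hbz _ _ hx hz]
      ring
    -- (1,0,0,0)
    · rw [hbz' _ _ (mee z hz t ht) (moe x hx y hy),
        hbz _ _ (mee z hz y hy) (moe x hx t ht), hbz' _ _ hz hx]
      ring
    -- (1,0,0,1)
    · obtain ⟨cy, rfl⟩ := hmemE y hy
      obtain ⟨cz, rfl⟩ := hmemE z hz
      rw [show (1*0+1*0+0*0 : ZMod 2) = 0 by decide, show ((0:ZMod 2)*0 : ZMod 2) = 0 by decide,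
        hs0, hmr, hml, hmE, hmulV x hx t ht, hbE,
        hbz' _ _ (Submodule.smul_mem _ _ heE) hx]
      simp only [_root_.map_smul, LinearMap.smul_apply, smul_eq_mul]
      linear_combination (cy * cz * b x t) * h3
    -- (1,0,1,0)
    · obtain ⟨cy, rfl⟩ := hmemE y hy
      obtain ⟨ct, rfl⟩ := hmemE t ht
      rw [show (1*0+1*1+0*1 : ZMod 2) = 1 by decide, show ((0:ZMod 2)*1 : ZMod 2) = 0 by decide,
        hs1, hs0, hmr, hmr, hmr, hmr, hbE]
      simp only [_root_.map_smul, LinearMap.smul_apply, smul_eq_mul]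
      rw [hskew z hz x hx]
      ring
    -- (1,0,1,1)
    · rw [hbz' _ _ (moo z hz t ht) (moe x hx y hy),
        hbz' _ _ (moo x hx t ht) (moe z hz y hy), hbz _ _ hy ht]
      ring
    -- (1,1,0,0)
    · obtain ⟨cz, rfl⟩ := hmemE z hz
      obtain ⟨ct, rfl⟩ := hmemE t ht
      rw [show (1*1+1*0+1*0 : ZMod 2) = 1 by decide, show ((1:ZMod 2)*0 : ZMod 2) = 0 by decide,
        hs1, hs0, hmulV x hx y hy, hmE, hml, hmr, hbE,
        hbz' _ _ (Submodule.smul_mem _ _ heE) hx]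
      simp only [_root_.map_smul, LinearMap.smul_apply, smul_eq_mul]
      rw [hskew y hy x hx]
      linear_combination (cz * ct * b x y) * h3
    -- (1,1,0,1)
    · rw [hbz _ _ (moo x hx y hy) (meo z hz t ht),
        hbz' _ _ (moo x hx t ht) (meo z hz y hy), hbz' _ _ hz hx]
      ring
    -- (1,1,1,0)
    · rw [hbz _ _ (moo x hx y hy) (moe z hz t ht),
        hbz _ _ (moo z hz y hy) (moe x hx t ht), hbz' _ _ ht hy]
      ring
    -- (1,1,1,1)
    · rw [show (1*1+1*1+1*1 : ZMod 2) = 1 by decide, show ((1:ZMod 2)*1 : ZMod 2) = 1 by decide,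
        hs1, hmulV x hx y hy, hmulV z hz t ht, hmulV z hz y hy, hmulV x hx t ht,
        hbE, hbE, hskew z hz y hy]
      linear_combination 2 * (pluck x hx y hy z hz t ht) + (b x z * b y t) * h3
  · -- the norm of c • e
    intro c h
    rw [hq0, hbE]
    linear_combination (c ^ 2) * h3
end

section
/- Every group grading on the Hurwitz superalgebra B(1,2) compatible with its main ℤ₂-grading is a coarsening of the ℤ-grading with components B(1,2)⁰ = F1, B(1,2)¹ = Fu, B(1,2)⁻¹ = Fv, for some basis {u, v} of V with (u,v) = 1. -/
/-- every group grading on the Hurwitz superalgebra `B(1,2)` compatible with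
the main `ℤ₂`-grading is a coarsening of the `ℤ`-grading `F1 ⊕ Fu ⊕ Fv` for some basis
`{u,v}` of `V` with `(u,v) = 1`: i.e. each of `F1`, `Fu`, `Fv` is contained in some
homogeneous component. -/
theorem B12_grading_coarsening_of_Z_grading {F S G : Type*} [Field F] [AddCommGroup S]
    [Module F S] [Group G] [DecidableEq G]
    (hchar : ringChar F = 3)
    (mul : S →ₗ[F] S →ₗ[F] S) (e : S) (V : Submodule F S) (b : S →ₗ[F] S →ₗ[F] F)
    (he : e ≠ 0)
    (hcompl : IsCompl (Submodule.span F {e}) V)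
    (hV2 : Module.finrank F V = 2)
    (hunit : ∀ x : S, mul e x = x ∧ mul x e = x)
    (hmulV : ∀ u ∈ V, ∀ v ∈ V, mul u v = b u v • e)
    (halt : ∀ u ∈ V, b u u = 0)
    (hskew : ∀ u ∈ V, ∀ v ∈ V, b u v = - b v u)
    (hnd : ∀ u ∈ V, (∀ v ∈ V, b u v = 0) → u = 0)
    (γ : G → Submodule F S) (hint : DirectSum.IsInternal γ)
    (hgrmul : ∀ g h : G, ∀ x ∈ γ g, ∀ y ∈ γ h, mul x y ∈ γ (g * h))
    (hsuper : ∀ g : G, γ g = (γ g ⊓ Submodule.span F {e}) ⊔ (γ g ⊓ V)) :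
    ∃ u ∈ V, ∃ v ∈ V, b u v = 1 ∧ Submodule.span F {u, v} = V ∧
      (∃ g : G, Submodule.span F {e} ≤ γ g) ∧
      (∃ g : G, Submodule.span F {u} ≤ γ g) ∧
      (∃ g : G, Submodule.span F {v} ≤ γ g) := by
  classical
  haveI : FiniteDimensional F V := FiniteDimensional.of_finrank_eq_succ hV2
  set E : Submodule F S := Submodule.span F {e} with hEdef
  have hAle : (⨆ g, γ g ⊓ E) ≤ E := iSup_le fun g => inf_le_right
  have hBle : (⨆ g, γ g ⊓ V) ≤ V := iSup_le fun g => inf_le_right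
  have h1 : (⨆ g, γ g ⊓ E) ⊔ (⨆ g, γ g ⊓ V) = ⊤ := by
    rw [← iSup_sup_eq, ← hint.submodule_iSup_eq_top]
    congr 1
    funext g
    exact (hsuper g).symm
  have hBE : (⨆ g, γ g ⊓ V) ⊓ E = ⊥ := by
    refine le_bot_iff.mp ?_
    calc (⨆ g, γ g ⊓ V) ⊓ E ≤ V ⊓ E := inf_le_inf_right E hBle
      _ = ⊥ := by rw [inf_comm]; exact hcompl.inf_eq_bot
  have hE_eq : E = ⨆ g, γ g ⊓ E := by
    calc E = ((⨆ g, γ g ⊓ E) ⊔ (⨆ g, γ g ⊓ V)) ⊓ E := by rw [h1, top_inf_eq]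
      _ = (⨆ g, γ g ⊓ E) ⊔ ((⨆ g, γ g ⊓ V) ⊓ E) := sup_inf_assoc_of_le _ hAle
      _ = ⨆ g, γ g ⊓ E := by rw [hBE, sup_bot_eq]
  have hAV : (⨆ g, γ g ⊓ E) ⊓ V = ⊥ := by
    refine le_bot_iff.mp ?_
    calc (⨆ g, γ g ⊓ E) ⊓ V ≤ E ⊓ V := inf_le_inf_right V hAle
      _ = ⊥ := hcompl.inf_eq_bot
  have hV_eq : V = ⨆ g, γ g ⊓ V := by
    calc V = ((⨆ g, γ g ⊓ V) ⊔ (⨆ g, γ g ⊓ E)) ⊓ V := by rw [sup_comm, h1, top_inf_eq]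
      _ = (⨆ g, γ g ⊓ V) ⊔ ((⨆ g, γ g ⊓ E) ⊓ V) := sup_inf_assoc_of_le _ hBle
      _ = ⨆ g, γ g ⊓ V := by rw [hAV, sup_bot_eq]
  -- `e` lies in some homogeneous component
  have hg0 : ∃ g, e ∈ γ g := by
    by_contra hc
    push_neg at hc
    have hbot : (⨆ g, γ g ⊓ E) = ⊥ := by
      refine le_bot_iff.mp (iSup_le fun g x hx => ?_)
      obtain ⟨hx1, hx2⟩ := Submodule.mem_inf.mp hx
      obtain ⟨c, rfl⟩ := Submodule.mem_span_singleton.mp hx2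
      rcases eq_or_ne c 0 with h | h
      · simp [h]
      · exact absurd
          (by simpa [smul_smul, inv_mul_cancel₀ h] using (γ g).smul_mem c⁻¹ hx1) (hc g)
    have hEbot : E = ⊥ := hE_eq.trans hbot
    have hmem : e ∈ E := Submodule.mem_span_singleton_self e
    rw [hEbot] at hmem
    exact he (by simpa using hmem)
  obtain ⟨g0, hg0⟩ := hg0
  -- a nonzero homogeneous element of `V`
  have hu : ∃ g, ∃ u, u ∈ γ g ∧ u ∈ V ∧ u ≠ 0 := by
    by_contra hc
    push_neg at hc
    have hbot : (⨆ g, γ g ⊓ V) = ⊥ := by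
      refine le_bot_iff.mp (iSup_le fun g x hx => ?_)
      obtain ⟨hx1, hx2⟩ := Submodule.mem_inf.mp hx
      simpa using hc g x hx1 hx2
    have : Module.finrank F V = 0 := by
      rw [hV_eq.trans hbot]
      exact finrank_bot F S
    omega
  obtain ⟨g1, u, hug, huV, hu0⟩ := hu
  -- a homogeneous element of `V` outside `span {u}`
  have hw : ∃ g, ∃ w, w ∈ γ g ∧ w ∈ V ∧ w ∉ Submodule.span F {u} := by
    by_contra hc
    push_neg at hc
    have hle : V ≤ Submodule.span F {u} := by
      rw [hV_eq]
      refine iSup_le fun g x hx => ?_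
      obtain ⟨hx1, hx2⟩ := Submodule.mem_inf.mp hx
      exact hc g x hx1 hx2
    have h2 : Module.finrank F V ≤ Module.finrank F (Submodule.span F {u}) :=
      Submodule.finrank_mono hle
    rw [hV2, finrank_span_singleton hu0] at h2
    omega
  obtain ⟨g2, w, hwg, hwV, hwu⟩ := hw
  -- `{u, w}` spans `V`
  have hspanV : Submodule.span F {u, w} = V := by
    set u' : V := ⟨u, huV⟩ with hu'
    set w' : V := ⟨w, hwV⟩ with hw'
    have hindep : LinearIndependent F ![w', u'] := by
      rw [linearIndependent_fin2]
      refine ⟨?_, ?_⟩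
      · intro h
        apply hu0
        simpa [hu'] using congrArg Subtype.val h
      · intro a ha
        apply hwu
        have : a • u = w := by simpa [hu', hw'] using congrArg Subtype.val ha
        exact Submodule.mem_span_singleton.mpr ⟨a, this⟩
    have hrange : Set.range ![w', u'] = {w', u'} := by
      ext x
      simp [Fin.exists_fin_two]
      tauto
    have hcard : Module.finrank F (Submodule.span F {w', u'}) = 2 := by
      rw [← hrange]
      simpa using finrank_span_eq_card hindep
    have htop : Submodule.span F {w', u'} = (⊤ : Submodule F V) :=
      Submodule.eq_top_of_finrank_eq (by rw [hcard, hV2])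
    have hmap := congrArg (Submodule.map V.subtype) htop
    rw [Submodule.map_span, Submodule.map_subtype_top] at hmap
    have himg : V.subtype '' {w', u'} = {w, u} := by
      simp [Set.image_insert_eq, hu', hw']
    rw [himg] at hmap
    rw [show ({u, w} : Set S) = {w, u} from Set.pair_comm u w]
    exact hmap
  -- `b u w ≠ 0`
  have hbuw : b u w ≠ 0 := by
    intro h0
    apply hu0
    apply hnd u huV
    intro x hx
    rw [← hspanV] at hx
    refine Submodule.span_induction ?_ ?_ ?_ ?_ hx
    · intro y hy
      rcases hy with hy | hy
      · rw [hy]; exact halt u huV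
      · rw [Set.mem_singleton_iff] at hy
        rw [hy]; exact h0
    · simp
    · intro x y _ _ hbx hby
      rw [map_add, hbx, hby, add_zero]
    · intro a x _ hbx
      rw [map_smul, hbx, smul_zero]
  refine ⟨u, huV, (b u w)⁻¹ • w, V.smul_mem _ hwV, ?_, ?_, ⟨g0, ?_⟩, ⟨g1, ?_⟩, ⟨g2, ?_⟩⟩
  · rw [map_smul, smul_eq_mul, inv_mul_cancel₀ hbuw]
  · apply le_antisymm
    · rw [Submodule.span_le, Set.insert_subset_iff, Set.singleton_subset_iff]
      exact ⟨huV, V.smul_mem _ hwV⟩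
    · rw [← hspanV, Submodule.span_le, Set.insert_subset_iff, Set.singleton_subset_iff]
      constructor
      · exact Submodule.subset_span (Set.mem_insert _ _)
      · have : (b u w) • ((b u w)⁻¹ • w) = w := by
          rw [smul_smul, mul_inv_cancel₀ hbuw, one_smul]
        have hv : (b u w) • ((b u w)⁻¹ • w) ∈
            Submodule.span F {u, (b u w)⁻¹ • w} :=
          Submodule.smul_mem _ _
            (Submodule.subset_span (Set.mem_insert_of_mem _ rfl))
        rwa [this] at hv
  · exact (Submodule.span_singleton_le_iff_mem _ _).mpr hg0
  · exact (Submodule.span_singleton_le_iff_mem _ _).mpr hug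
  · exact (Submodule.span_singleton_le_iff_mem _ _).mpr ((γ g2).smul_mem _ hwg)
end

section
/- Let G be an abelian group and let Γ(G,g) denote the G-grading on B(1,2) given by deg(1) = 0, deg(u) = g, deg(v) = −g for a symplectic basis {u,v} of V. Then every G-grading on B(1,2) is isomorphic to some Γ(G,g), and Γ(G,g) ≅ Γ(G,h) as G-graded superalgebras if and only if g = h or g = −h. -/
/-- The `G`-grading `Γ(G,g)` on `B(1,2) = F1 ⊕ Fu ⊕ Fv`: `deg 1 = 0`, `deg u = g`,
`deg v = −g`. -/
def GammaB12 {F S G : Type*} [Field F] [AddCommGroup S] [Module F S] [AddCommGroup G]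
    [DecidableEq G] (e u v : S) (g : G) : G → Submodule F S := fun h =>
  (if h = 0 then Submodule.span F {e} else ⊥) ⊔
  (if h = g then Submodule.span F {u} else ⊥) ⊔
  (if h = -g then Submodule.span F {v} else ⊥)

/-! Because the grading respects `S = F e ⊕ V` and `F e` is a line, the unit `e` is homogeneous,
and `e e = e` puts it in degree `0`. As `V` is spanned by homogeneous elements and `b ≠ 0` on `V`,
there are homogeneous `w, y ∈ V` with `b w y = 1`; their degrees are `k` and `-k` since `w y = e`.
The grading contains the homogeneous basis `e, w, y`, so it is `Γ(G,k)` written in that basis, and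
an automorphism carries any symplectic pair to any other. Conversely, the support `{0, g, -g}` of
`Γ(G,g)` is an isomorphism invariant, and `u ↦ -v, v ↦ u` carries `Γ(G,-g)` onto `Γ(G,g)`. -/

section Lattice

variable {α ι : Type*} [CompleteLattice α]

theorem IsAtom.exists_le_of_iSup_inf_eq {a : α} (ha : IsAtom a) {f : ι → α}
    (h : ⨆ k, f k ⊓ a = a) : ∃ k, a ≤ f k := by
  by_contra! hne
  have hbot : ∀ k, f k ⊓ a = ⊥ := fun k =>
    (ha.le_iff.mp inf_le_right).resolve_right fun heq => hne k (heq ▸ inf_le_left)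
  simp only [hbot, iSup_bot] at h
  exact ha.1 h.symm

variable [IsModularLattice α]

theorem iSup_inf_eq_of_isCompl {f : ι → α} {a b : α} (hab : IsCompl a b)
    (hf : ∀ k, f k = f k ⊓ a ⊔ f k ⊓ b) (htop : iSup f = ⊤) : ⨆ k, f k ⊓ a = a := by
  have hsplit : (⨆ k, f k ⊓ a) ⊔ ⨆ k, f k ⊓ b = ⊤ := by
    rw [← iSup_sup_eq, ← htop]
    exact iSup_congr fun k => (hf k).symm
  have hdisj : (⨆ k, f k ⊓ b) ⊓ a = ⊥ :=
    (hab.disjoint.symm.mono_left (iSup_le fun k => inf_le_right)).eq_bot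
  calc ⨆ k, f k ⊓ a = (⨆ k, f k ⊓ a) ⊔ (⨆ k, f k ⊓ b) ⊓ a := by
        rw [hdisj, sup_bot_eq]
    _ = a := by
        rw [← sup_inf_assoc_of_le _ (iSup_le fun k => inf_le_right), hsplit, top_inf_eq]

theorem iSupIndep.eq_of_le_of_iSup_eq_top {f g : ι → α} (hf : iSupIndep f)
    (hg : iSup g = ⊤) (hle : ∀ k, g k ≤ f k) : g = f := by
  funext k
  have hdisj : f k ⊓ ⨆ (j) (_ : j ≠ k), g j = ⊥ :=
    ((hf k).mono_right (iSup₂_mono fun j _ => hle j)).eq_bot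
  calc g k = (g k ⊔ ⨆ (j) (_ : j ≠ k), g j) ⊓ f k := by
        rw [sup_inf_assoc_of_le _ (hle k), inf_comm, hdisj, sup_bot_eq]
    _ = f k := by rw [← iSup_split_single, hg, top_inf_eq]

end Lattice

theorem Submodule.eq_of_mem_of_mem_of_iSupIndep {R M ι : Type*} [Ring R] [AddCommGroup M]
    [Module R M] {γ : ι → Submodule R M} (hγ : iSupIndep γ) {x : M} (hx : x ≠ 0) {k l : ι}
    (hk : x ∈ γ k) (hl : x ∈ γ l) : k = l := by
  by_contra hkl
  exact hx (Submodule.disjoint_def.1 (hγ.pairwiseDisjoint hkl) x hk hl)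

theorem LinearMap.exists_apply_ne_zero_of_mem_iSup {R M N ι : Type*} [CommRing R]
    [AddCommGroup M] [Module R M] [AddCommGroup N] [Module R N] (b : M →ₗ[R] M →ₗ[R] N)
    {p : ι → Submodule R M} {x y : M} (hx : x ∈ ⨆ k, p k) (hy : y ∈ ⨆ k, p k)
    (hxy : b x y ≠ 0) : ∃ k l, ∃ x' ∈ p k, ∃ y' ∈ p l, b x' y' ≠ 0 := by
  by_contra! h
  refine hxy (Submodule.iSup_induction p (motive := fun x => b x y = 0) hx
    (fun k x' hx' => ?_) (by simp) (fun _ _ h₁ h₂ => by simp [h₁, h₂]))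
  exact Submodule.iSup_induction p (motive := fun y => b x' y = 0) hy
    (fun l y' hy' => h k l x' hx' y' hy') (by simp) (fun _ _ h₁ h₂ => by simp [h₁, h₂])

theorem LinearMap.linearIndependent_pair_of_apply_eq_one {F S : Type*} [Field F] [AddCommGroup S]
    [Module F S] (b : S →ₗ[F] S →ₗ[F] F) {u v : S} (hu : b u u = 0) (hv : b v v = 0)
    (huv : b u v = 1) : LinearIndependent F ![u, v] := by
  refine LinearIndependent.pair_iff.2 fun s t hst => ⟨?_, ?_⟩
  · simpa [hv, huv] using congrArg (b · v) hst
  · simpa [hu, huv] using congrArg (b u) hst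

section GammaB12

variable {F S T G : Type*} [Field F] [AddCommGroup S] [Module F S] [AddCommGroup T] [Module F T]
  [AddCommGroup G] [DecidableEq G]

theorem map_GammaB12 (f : S →ₗ[F] T) (e u v : S) (g k : G) :
    Submodule.map f (GammaB12 e u v g k) = GammaB12 (f e) (f u) (f v) g k := by
  unfold GammaB12
  split_ifs <;> simp [Submodule.map_sup, Submodule.map_span]

theorem GammaB12_neg (e u v : S) (g : G) : GammaB12 (F := F) e u v (-g) = GammaB12 e v u g := by
  funext k
  unfold GammaB12
  rw [neg_neg, sup_right_comm]

theorem GammaB12_neg_right (e u v : S) (g : G) :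
    GammaB12 (F := F) e u (-v) g = GammaB12 e u v g := by
  funext k
  rw [GammaB12, GammaB12, ← Set.neg_singleton, Submodule.span_neg]

theorem GammaB12_le {γ : G → Submodule F S} {e u v : S} {g : G} (he : e ∈ γ 0) (hu : u ∈ γ g)
    (hv : v ∈ γ (-g)) (k : G) : GammaB12 e u v g k ≤ γ k := by
  unfold GammaB12
  refine sup_le (sup_le ?_ ?_) ?_ <;> split_ifs with hk <;>
    simp_all [Submodule.span_singleton_le_iff_mem]

theorem iSup_GammaB12 (e u v : S) (g : G) :
    ⨆ k, GammaB12 (F := F) e u v g k = Submodule.span F {e, u, v} := by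
  refine le_antisymm (iSup_le fun k => ?_) ?_
  · unfold GammaB12
    refine sup_le (sup_le ?_ ?_) ?_ <;> split_ifs <;>
      first | exact bot_le | exact Submodule.span_mono (by simp)
  · rw [Submodule.span_insert, Submodule.span_insert, ← sup_assoc]
    refine sup_le (sup_le ?_ ?_) ?_
    · exact le_iSup_of_le 0 (le_sup_of_le_left (le_sup_of_le_left (if_pos rfl).ge))
    · exact le_iSup_of_le g (le_sup_of_le_left (le_sup_of_le_right (if_pos rfl).ge))
    · exact le_iSup_of_le (-g) (le_sup_of_le_right (if_pos rfl).ge)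

theorem GammaB12_ne_bot_iff {e u v : S} (he : e ≠ 0) (hu : u ≠ 0) (hv : v ≠ 0) (g k : G) :
    GammaB12 (F := F) e u v g k ≠ ⊥ ↔ k = 0 ∨ k = g ∨ k = -g := by
  unfold GammaB12
  split_ifs <;> simp_all

theorem eq_or_eq_neg_of_map_GammaB12 {e u v : S} (he : e ≠ 0) (hu : u ≠ 0) (hv : v ≠ 0)
    {g h : G} (φ : S ≃ₗ[F] S)
    (hφ : ∀ k, Submodule.map (φ : S →ₗ[F] S) (GammaB12 e u v g k) = GammaB12 e u v h k) :
    g = h ∨ g = -h := by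
  have hsupp (k : G) : (k = 0 ∨ k = g ∨ k = -g) ↔ (k = 0 ∨ k = h ∨ k = -h) := by
    rw [← GammaB12_ne_bot_iff (F := F) he hu hv, ← GammaB12_ne_bot_iff (F := F) he hu hv, ← hφ,
      Ne, Ne, Submodule.map_eq_bot_iff]
  rcases (hsupp g).1 (.inr (.inl rfl)) with hg | hg | hg
  · have hh : h = 0 := by simpa [hg] using (hsupp h).2 (.inr (.inl rfl))
    exact .inl (hg.trans hh.symm)
  · exact .inl hg
  · exact .inr hg

end GammaB12

structure IsB12 {F S : Type*} [Field F] [AddCommGroup S] [Module F S]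
    (mul : S →ₗ[F] S →ₗ[F] S) (e : S) (V : Submodule F S) (b : S →ₗ[F] S →ₗ[F] F) : Prop where
  ne_zero : e ≠ 0
  isCompl : IsCompl (Submodule.span F {e}) V
  finrank_eq_two : Module.finrank F V = 2
  one_mul : ∀ x, mul e x = x
  mul_one : ∀ x, mul x e = x
  mul_of_mem : ∀ u ∈ V, ∀ v ∈ V, mul u v = b u v • e
  apply_self : ∀ u ∈ V, b u u = 0
  apply_swap : ∀ u ∈ V, ∀ v ∈ V, b u v = - b v u

namespace IsB12

variable {F S : Type*} [Field F] [AddCommGroup S] [Module F S] {mul : S →ₗ[F] S →ₗ[F] S} {e : S}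
  {V : Submodule F S} {b : S →ₗ[F] S →ₗ[F] F} (hB : IsB12 mul e V b)
include hB

theorem mul_self_of_mem {u : S} (hu : u ∈ V) : mul u u = 0 := by
  rw [hB.mul_of_mem u hu u hu, hB.apply_self u hu, zero_smul]

section Pair

variable {u v : S} (hu : u ∈ V) (hv : v ∈ V) (huv : b u v = 1)
include hu hv huv

theorem linearIndependent_pair : LinearIndependent F ![u, v] :=
  b.linearIndependent_pair_of_apply_eq_one (hB.apply_self u hu) (hB.apply_self v hv) huv

theorem span_pair_eq : Submodule.span F {u, v} = V := by
  have : FiniteDimensional F V :=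
    Module.finite_of_finrank_pos (by rw [hB.finrank_eq_two]; norm_num)
  refine Submodule.eq_of_le_of_finrank_eq ?_ ?_
  · simp [Submodule.span_le, Set.insert_subset_iff, hu, hv]
  · rw [hB.finrank_eq_two, ← Matrix.range_cons_cons_empty u v ![],
      finrank_span_eq_card (hB.linearIndependent_pair hu hv huv), Fintype.card_fin]

theorem linearIndependent_triple : LinearIndependent F ![e, u, v] := by
  refine linearIndependent_finCons.2 ⟨hB.linearIndependent_pair hu hv huv, fun he => ?_⟩
  rw [Matrix.range_cons_cons_empty, hB.span_pair_eq hu hv huv] at he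
  exact hB.ne_zero <|
    Submodule.disjoint_def.1 hB.isCompl.disjoint e (Submodule.mem_span_singleton_self e) he

theorem span_triple_eq_top : Submodule.span F {e, u, v} = ⊤ := by
  rw [Submodule.span_insert, hB.span_pair_eq hu hv huv]
  exact hB.isCompl.codisjoint.eq_top

theorem mul_eq_unit : mul u v = e := by
  rw [hB.mul_of_mem u hu v hv, huv, one_smul]

theorem mul_swap_eq_neg_unit : mul v u = -e := by
  rw [hB.mul_of_mem v hv u hu, hB.apply_swap v hv u hu, huv, neg_one_smul]

noncomputable def basis : Module.Basis (Fin 3) F S :=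
  .mk (hB.linearIndependent_triple hu hv huv) <| by
    rw [Matrix.range_cons, Matrix.range_cons_cons_empty, Set.singleton_union,
      hB.span_triple_eq_top hu hv huv]

theorem basis_apply (i : Fin 3) : hB.basis hu hv huv i = ![e, u, v] i :=
  Module.Basis.mk_apply _ _ i

end Pair

theorem map_mul_of_map_pair {u₁ v₁ u₂ v₂ : S} (hu₁ : u₁ ∈ V) (hv₁ : v₁ ∈ V) (h₁ : b u₁ v₁ = 1)
    (hu₂ : u₂ ∈ V) (hv₂ : v₂ ∈ V) (h₂ : b u₂ v₂ = 1) (ψ : S →ₗ[F] S) (he : ψ e = e)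
    (hu : ψ u₁ = u₂) (hv : ψ v₁ = v₂) (x y : S) : ψ (mul x y) = mul (ψ x) (ψ y) := by
  have hbil : mul.compr₂ ψ = (mul.compl₂ ψ).comp ψ := by
    let B := hB.basis hu₁ hv₁ h₁
    refine B.ext fun i => B.ext fun j => ?_
    fin_cases i <;> fin_cases j <;>
      simp [B, basis_apply, he, hu, hv, hB.one_mul, hB.mul_one,
        hB.mul_self_of_mem hu₁, hB.mul_self_of_mem hv₁, hB.mul_self_of_mem hu₂,
        hB.mul_self_of_mem hv₂, hB.mul_eq_unit hu₁ hv₁ h₁, hB.mul_eq_unit hu₂ hv₂ h₂,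
        hB.mul_swap_eq_neg_unit hu₁ hv₁ h₁, hB.mul_swap_eq_neg_unit hu₂ hv₂ h₂]
  exact LinearMap.congr_fun₂ hbil x y

theorem exists_linearEquiv {u₁ v₁ u₂ v₂ : S} (hu₁ : u₁ ∈ V) (hv₁ : v₁ ∈ V) (h₁ : b u₁ v₁ = 1)
    (hu₂ : u₂ ∈ V) (hv₂ : v₂ ∈ V) (h₂ : b u₂ v₂ = 1) :
    ∃ ψ : S ≃ₗ[F] S, ψ e = e ∧ ψ u₁ = u₂ ∧ ψ v₁ = v₂ ∧
      (∀ x y, ψ (mul x y) = mul (ψ x) (ψ y)) ∧ Submodule.map (ψ : S →ₗ[F] S) V = V := by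
  let ψ := (hB.basis hu₁ hv₁ h₁).equiv (hB.basis hu₂ hv₂ h₂) (Equiv.refl _)
  have hψ (i : Fin 3) : ψ (![e, u₁, v₁] i) = ![e, u₂, v₂] i := by
    simpa [basis_apply] using (hB.basis hu₁ hv₁ h₁).equiv_apply i (hB.basis hu₂ hv₂ h₂) (.refl _)
  obtain ⟨he, hu, hv⟩ : ψ e = e ∧ ψ u₁ = u₂ ∧ ψ v₁ = v₂ := ⟨hψ 0, hψ 1, hψ 2⟩
  refine ⟨ψ, he, hu, hv, hB.map_mul_of_map_pair hu₁ hv₁ h₁ hu₂ hv₂ h₂ ψ he hu hv, ?_⟩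
  calc Submodule.map (ψ : S →ₗ[F] S) V
      = Submodule.map (ψ : S →ₗ[F] S) (Submodule.span F {u₁, v₁}) := by
        rw [hB.span_pair_eq hu₁ hv₁ h₁]
    _ = V := by
        rw [Submodule.map_span, Set.image_pair, LinearEquiv.coe_coe, hu, hv,
          hB.span_pair_eq hu₂ hv₂ h₂]

section Grading

variable {G : Type*} [AddCommGroup G] {γ : G → Submodule F S} (hind : iSupIndep γ)
  (htop : iSup γ = ⊤) (hmul : ∀ g h, ∀ x ∈ γ g, ∀ y ∈ γ h, mul x y ∈ γ (g + h))
  (hsplit : ∀ g, γ g = γ g ⊓ Submodule.span F {e} ⊔ γ g ⊓ V)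
include hind htop hmul hsplit

theorem unit_mem_zero : e ∈ γ 0 := by
  obtain ⟨k, hk⟩ := (nonzero_span_atom e hB.ne_zero).exists_le_of_iSup_inf_eq
    (iSup_inf_eq_of_isCompl hB.isCompl hsplit htop)
  have hek : e ∈ γ k := hk (Submodule.mem_span_singleton_self e)
  have hekk : e ∈ γ (k + k) := by simpa [hB.one_mul] using hmul k k e hek e hek
  rwa [add_eq_left.1 (Submodule.eq_of_mem_of_mem_of_iSupIndep hind hB.ne_zero hekk hek)] at hek

theorem exists_homogeneous_pair {u v : S} (hu : u ∈ V) (hv : v ∈ V) (huv : b u v = 1) :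
    ∃ k, ∃ w ∈ γ k ⊓ V, ∃ y ∈ γ (-k) ⊓ V, b w y = 1 := by
  have hV : ⨆ k, γ k ⊓ V = V :=
    iSup_inf_eq_of_isCompl hB.isCompl.symm (fun k => (hsplit k).trans (sup_comm _ _)) htop
  obtain ⟨k, l, w, hw, y, hy, hwy⟩ :=
    b.exists_apply_ne_zero_of_mem_iSup (hV ▸ hu) (hV ▸ hv) (by rw [huv]; exact one_ne_zero)
  have hekl : e ∈ γ (k + l) := by
    have := Submodule.smul_mem _ (b w y)⁻¹ (hmul k l w hw.1 y hy.1)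
    rwa [hB.mul_of_mem w hw.2 y hy.2, smul_smul, inv_mul_cancel₀ hwy, one_smul] at this
  have hl : l = -k := eq_neg_of_add_eq_zero_right <|
    Submodule.eq_of_mem_of_mem_of_iSupIndep hind hB.ne_zero hekl
      (hB.unit_mem_zero hind htop hmul hsplit)
  subst hl
  refine ⟨k, w, hw, (b w y)⁻¹ • y, Submodule.smul_mem _ _ hy, ?_⟩
  rw [map_smul, smul_eq_mul, inv_mul_cancel₀ hwy]

theorem exists_eq_GammaB12 [DecidableEq G] {u v : S} (hu : u ∈ V) (hv : v ∈ V)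
    (huv : b u v = 1) :
    ∃ k w y, w ∈ V ∧ y ∈ V ∧ b w y = 1 ∧ γ = GammaB12 e w y k := by
  obtain ⟨k, w, hw, y, hy, hwy⟩ := hB.exists_homogeneous_pair hind htop hmul hsplit hu hv huv
  refine ⟨k, w, y, hw.2, hy.2, hwy, (hind.eq_of_le_of_iSup_eq_top ?_ ?_).symm⟩
  · rw [iSup_GammaB12, hB.span_triple_eq_top hw.2 hy.2 hwy]
  · exact GammaB12_le (hB.unit_mem_zero hind htop hmul hsplit) hw.1 hy.1

end Grading

end IsB12

theorem B12_gradings_up_to_isomorphism_general {F S G : Type*} [Field F] [AddCommGroup S]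
    [Module F S] [AddCommGroup G] [DecidableEq G]
    (mul : S →ₗ[F] S →ₗ[F] S) (e : S) (V : Submodule F S) (b : S →ₗ[F] S →ₗ[F] F)
    (he : e ≠ 0)
    (hcompl : IsCompl (Submodule.span F {e}) V)
    (hV2 : Module.finrank F V = 2)
    (hunit : ∀ x : S, mul e x = x ∧ mul x e = x)
    (hmulV : ∀ u' ∈ V, ∀ v' ∈ V, mul u' v' = b u' v' • e)
    (halt : ∀ u' ∈ V, b u' u' = 0)
    (hskew : ∀ u' ∈ V, ∀ v' ∈ V, b u' v' = - b v' u')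
    (u v : S) (hu : u ∈ V) (hv : v ∈ V) (huv : b u v = 1) :
    (∀ γ : G → Submodule F S, DirectSum.IsInternal γ →
      (∀ g h : G, ∀ x ∈ γ g, ∀ y ∈ γ h, mul x y ∈ γ (g + h)) →
      (∀ g : G, γ g = (γ g ⊓ Submodule.span F {e}) ⊔ (γ g ⊓ V)) →
      ∃ (g : G) (φ : S ≃ₗ[F] S),
        (∀ x y : S, φ (mul x y) = mul (φ x) (φ y)) ∧
        Submodule.map (φ : S →ₗ[F] S) V = V ∧
        ∀ h : G, Submodule.map (φ : S →ₗ[F] S) (γ h) = GammaB12 e u v g h) ∧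
    (∀ g h : G,
      (∃ φ : S ≃ₗ[F] S,
        (∀ x y : S, φ (mul x y) = mul (φ x) (φ y)) ∧
        Submodule.map (φ : S →ₗ[F] S) V = V ∧
        ∀ k : G, Submodule.map (φ : S →ₗ[F] S) (GammaB12 e u v g k) = GammaB12 e u v h k)
      ↔ (g = h ∨ g = -h)) := by
  have hB : IsB12 mul e V b :=
    ⟨he, hcompl, hV2, fun x => (hunit x).1, fun x => (hunit x).2, hmulV, halt, hskew⟩
  refine ⟨fun γ hγ hmul hsplit => ?_, fun g h => ⟨?_, ?_⟩⟩
  · obtain ⟨k, w, y, hw, hy, hwy, rfl⟩ := hB.exists_eq_GammaB12 hγ.submodule_iSupIndep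
      hγ.submodule_iSup_eq_top hmul hsplit hu hv huv
    obtain ⟨ψ, hψe, hψw, hψy, hψmul, hψV⟩ := hB.exists_linearEquiv hw hy hwy hu hv huv
    exact ⟨k, ψ, hψmul, hψV, fun h => by rw [map_GammaB12, LinearEquiv.coe_coe, hψe, hψw, hψy]⟩
  · rintro ⟨φ, -, -, hφ⟩
    have hu0 : u ≠ 0 := by rintro rfl; simp at huv
    have hv0 : v ≠ 0 := by rintro rfl; simp at huv
    exact eq_or_eq_neg_of_map_GammaB12 he hu0 hv0 φ hφ
  · rintro (rfl | rfl)
    · exact ⟨.refl F S, fun _ _ => rfl, Submodule.map_id V, fun k => Submodule.map_id _⟩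
    · have hvu : b (-v) u = 1 := by rw [map_neg, LinearMap.neg_apply, ← hskew u hu v hv, huv]
      obtain ⟨ψ, hψe, hψu, hψv, hψmul, hψV⟩ := hB.exists_linearEquiv hu hv huv (neg_mem hv) hu hvu
      refine ⟨ψ, hψmul, hψV, fun k => ?_⟩
      rw [map_GammaB12, LinearEquiv.coe_coe, hψe, hψu, hψv, GammaB12_neg, GammaB12_neg_right]

/-- every `G`-grading on `B(1,2)` (with `G` abelian) is isomorphic to some
`Γ(G,g)`, and `Γ(G,g) ≅ Γ(G,h)` as `G`-graded superalgebras iff `g = h` or `g = −h`. -/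
theorem B12_gradings_up_to_isomorphism {F S G : Type*} [Field F] [AddCommGroup S]
    [Module F S] [AddCommGroup G] [DecidableEq G]
    (hchar : ringChar F = 3)
    (mul : S →ₗ[F] S →ₗ[F] S) (e : S) (V : Submodule F S) (b : S →ₗ[F] S →ₗ[F] F)
    (he : e ≠ 0)
    (hcompl : IsCompl (Submodule.span F {e}) V)
    (hV2 : Module.finrank F V = 2)
    (hunit : ∀ x : S, mul e x = x ∧ mul x e = x)
    (hmulV : ∀ u' ∈ V, ∀ v' ∈ V, mul u' v' = b u' v' • e)
    (halt : ∀ u' ∈ V, b u' u' = 0)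
    (hskew : ∀ u' ∈ V, ∀ v' ∈ V, b u' v' = - b v' u')
    (hnd : ∀ u' ∈ V, (∀ v' ∈ V, b u' v' = 0) → u' = 0)
    (u v : S) (hu : u ∈ V) (hv : v ∈ V) (huv : b u v = 1)
    (hbasis : Submodule.span F {u, v} = V) :
    (∀ γ : G → Submodule F S, DirectSum.IsInternal γ →
      (∀ g h : G, ∀ x ∈ γ g, ∀ y ∈ γ h, mul x y ∈ γ (g + h)) →
      (∀ g : G, γ g = (γ g ⊓ Submodule.span F {e}) ⊔ (γ g ⊓ V)) →
      ∃ (g : G) (φ : S ≃ₗ[F] S),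
        (∀ x y : S, φ (mul x y) = mul (φ x) (φ y)) ∧
        Submodule.map (φ : S →ₗ[F] S) V = V ∧
        ∀ h : G, Submodule.map (φ : S →ₗ[F] S) (γ h) = GammaB12 e u v g h) ∧
    (∀ g h : G,
      (∃ φ : S ≃ₗ[F] S,
        (∀ x y : S, φ (mul x y) = mul (φ x) (φ y)) ∧
        Submodule.map (φ : S →ₗ[F] S) V = V ∧
        ∀ k : G, Submodule.map (φ : S →ₗ[F] S) (GammaB12 e u v g k) = GammaB12 e u v h k)
      ↔ (g = h ∨ g = -h)) :=
  B12_gradings_up_to_isomorphism_general mul e V b he hcompl hV2 hunit hmulV halt hskew u v hu hv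
    huv
end

section
/- Every group grading on the superalgebra B(4,2) compatible with the main ℤ₂-grading is a coarsening of the ℤ-grading with components B(4,2)⁰ = Fe₁ ⊕ Fe₂, B(4,2)¹ = Fu, B(4,2)⁻¹ = Fv, B(4,2)² = Fx, B(4,2)⁻² = Fy, for a suitable symplectic basis {u,v} of V, where under the identification End_F(V) ≅ M₂(F), e₁ = E₁₁, e₂ = E₂₂, x = E₁₂, y = E₂₁. -/
/-!
The odd part `V = span {u, v}` is the sum of its homogeneous pieces `γ g ⊓ V`, because the
grading is compatible with the `ℤ₂`-grading and `V` meets the even part trivially. Either `V`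
lies in a single component, and `u, v` already work, or two nonzero homogeneous odd elements
`p ∈ γ g`, `q ∈ γ h` with `g ≠ h` exist. They are linearly independent, and the identity
`p (q p) = det (p, q) • p` lets us rescale `q` so that `p (q p) = p`; comparing degrees gives
`h g = 1`, so `q p` and `p q` both lie in `γ 1`.
-/

open Submodule

section Lattice

variable {α ι : Type*} [CompleteLattice α]

theorem le_iSup_inf_of_iSup_eq_top [IsModularLattice α] {γ : ι → α} {E V : α}
    (htop : iSup γ = ⊤) (hVE : Disjoint V E) (hsplit : ∀ i, γ i = γ i ⊓ E ⊔ γ i ⊓ V) :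
    V ≤ ⨆ i, γ i ⊓ V := by
  have hle : (⨆ i, γ i ⊓ V) ≤ V := iSup_le fun _ => inf_le_right
  have hcover : E ⊔ ⨆ i, γ i ⊓ V = ⊤ := top_le_iff.mp <| htop ▸ iSup_le fun i =>
    (hsplit i).le.trans (sup_le_sup inf_le_right (le_iSup (fun i => γ i ⊓ V) i))
  apply le_of_eq
  calc V = V ⊓ (E ⊔ ⨆ i, γ i ⊓ V) := by rw [hcover, inf_top_eq]
    _ = ⨆ i, γ i ⊓ V := by rw [← inf_sup_assoc_of_le E hle, hVE.eq_bot, bot_sup_eq]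

theorem exists_le_or_exists_ne_inf_ne_bot [Nonempty ι] {γ : ι → α} {V : α}
    (hV : V ≤ ⨆ i, γ i ⊓ V) :
    (∃ i, V ≤ γ i) ∨ ∃ i j, i ≠ j ∧ γ i ⊓ V ≠ ⊥ ∧ γ j ⊓ V ≠ ⊥ := by
  by_cases htwo : ∃ i j, i ≠ j ∧ γ i ⊓ V ≠ ⊥ ∧ γ j ⊓ V ≠ ⊥
  · exact .inr htwo
  push Not at htwo
  left
  by_cases hone : ∃ i, γ i ⊓ V ≠ ⊥
  · obtain ⟨i, hi⟩ := hone
    refine ⟨i, hV.trans (iSup_le fun j => ?_)⟩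
    rcases eq_or_ne i j with rfl | hij
    · exact inf_le_left
    · rw [htwo i j hij hi]
      exact bot_le
  · push Not at hone
    exact ⟨Classical.arbitrary ι, (by simpa [hone] using hV : V = ⊥) ▸ bot_le⟩

end Lattice

section LinearAlgebra

variable {K M : Type*} [AddCommGroup M]

theorem linearIndependent_pair_of_mem_of_ne [DivisionRing K] [Module K M] {ι : Type*}
    {γ : ι → Submodule K M} (hγ : iSupIndep γ) {i j : ι} (hij : i ≠ j) {p q : M}
    (hp : p ∈ γ i) (hq : q ∈ γ j) (hp0 : p ≠ 0) (hq0 : q ≠ 0) :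
    LinearIndependent K ![p, q] := by
  refine LinearIndependent.pair_iff.mpr fun s t hst => ?_
  have hsp : s • p = 0 := disjoint_def.mp (hγ.pairwiseDisjoint hij) _ (smul_mem _ s hp)
    (by rw [eq_neg_of_add_eq_zero_left hst]; exact neg_mem (smul_mem _ t hq))
  have hs : s = 0 := (smul_eq_zero.mp hsp).resolve_right hp0
  rw [hs, zero_smul, zero_add] at hst
  exact ⟨hs, (smul_eq_zero.mp hst).resolve_right hq0⟩

theorem det_ne_zero_of_linearIndependent_pair [CommRing K] [Nontrivial K] [Module K M] {u v : M}
    {a b c d : K} (h : LinearIndependent K ![a • u + b • v, c • u + d • v]) :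
    a * d - b * c ≠ 0 := by
  intro hdet
  have hpair := LinearIndependent.pair_iff.mp h
  obtain ⟨-, hb⟩ := hpair d (-b) (by linear_combination (norm := module) hdet • u)
  obtain ⟨-, ha⟩ := hpair (-c) a (by linear_combination (norm := module) hdet • v)
  exact h.ne_zero 0 (by simp [ha, neg_eq_zero.mp hb])

theorem span_pair_eq_of_det_ne_zero [Field K] [Module K M] {u v : M} {a b c d : K}
    (h : a * d - b * c ≠ 0) :
    span K {a • u + b • v, c • u + d • v} = span K {u, v} := by
  have hinv := inv_mul_cancel₀ h
  refine le_antisymm (span_le.mpr (Set.pair_subset ?_ ?_))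
    (span_le.mpr (Set.pair_subset ?_ ?_)) <;> refine mem_span_pair.mpr ?_
  · exact ⟨a, b, rfl⟩
  · exact ⟨c, d, rfl⟩
  · exact ⟨(a * d - b * c)⁻¹ * d, -((a * d - b * c)⁻¹ * b),
      by linear_combination (norm := module) hinv • u⟩
  · exact ⟨-((a * d - b * c)⁻¹ * c), (a * d - b * c)⁻¹ * a,
      by linear_combination (norm := module) hinv • v⟩

end LinearAlgebra

section B42

variable {F S : Type*} [Field F] [AddCommGroup S] [Module F S] {mul : S →ₗ[F] S →ₗ[F] S}
  {e₁ e₂ x y u v : S}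

/-- In `B(4,2)` this is `p (q p) = (p, q) p` for the symplectic form with `(u, v) = 1`. -/
theorem mul_mul_eq_det_smul
    (h_oe : mul u e₁ = u ∧ mul u e₂ = 0 ∧ mul u x = 0 ∧ mul u y = v ∧
      mul v e₁ = 0 ∧ mul v e₂ = v ∧ mul v x = u ∧ mul v y = 0)
    (h_oo : mul u u = -x ∧ mul u v = -e₂ ∧ mul v u = e₁ ∧ mul v v = y) (a b c d : F) :
    mul (a • u + b • v) (mul (c • u + d • v) (a • u + b • v)) =
      (a * d - b * c) • (a • u + b • v) := by
  obtain ⟨hue₁, hue₂, hux, huy, hve₁, hve₂, hvx, hvy⟩ := h_oe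
  obtain ⟨huu, huv, hvu, hvv⟩ := h_oo
  simp only [map_add, map_smul, map_neg, LinearMap.add_apply, LinearMap.smul_apply,
    huu, huv, hvu, hvv, hue₁, hue₂, hux, huy, hve₁, hve₂, hvx, hvy]
  module

theorem exists_smul_mul_mul_eq_self
    (h_oe : mul u e₁ = u ∧ mul u e₂ = 0 ∧ mul u x = 0 ∧ mul u y = v ∧
      mul v e₁ = 0 ∧ mul v e₂ = v ∧ mul v x = u ∧ mul v y = 0)
    (h_oo : mul u u = -x ∧ mul u v = -e₂ ∧ mul v u = e₁ ∧ mul v v = y) {p q : S}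
    (hp : p ∈ span F {u, v}) (hq : q ∈ span F {u, v}) (hpq : LinearIndependent F ![p, q]) :
    ∃ r : F, span F {p, r • q} = span F {u, v} ∧ mul p (mul (r • q) p) = p := by
  obtain ⟨a, b, rfl⟩ := mem_span_pair.mp hp
  obtain ⟨c, d, rfl⟩ := mem_span_pair.mp hq
  have hdet := det_ne_zero_of_linearIndependent_pair hpq
  have hrq : (a * d - b * c)⁻¹ • (c • u + d • v) =
      ((a * d - b * c)⁻¹ * c) • u + ((a * d - b * c)⁻¹ * d) • v := by
    rw [smul_add, smul_smul, smul_smul]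
  have hone : a * ((a * d - b * c)⁻¹ * d) - b * ((a * d - b * c)⁻¹ * c) = 1 := by
    field_simp
  refine ⟨(a * d - b * c)⁻¹, ?_, ?_⟩
  · rw [hrq, span_pair_eq_of_det_ne_zero (hone ▸ one_ne_zero)]
  · rw [hrq, mul_mul_eq_det_smul h_oe h_oo, hone, one_smul]

end B42

section GradedProducts

variable {F S G : Type*} [CommSemiring F] [AddCommMonoid S] [Module F S] [Group G]
  {mul : S →ₗ[F] S →ₗ[F] S} {γ : G → Submodule F S}

theorem mul_eq_one_of_mul_mul_eq_self (hγ : iSupIndep γ)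
    (hgrmul : ∀ g h : G, ∀ a ∈ γ g, ∀ c ∈ γ h, mul a c ∈ γ (g * h)) {g h : G} {p q : S}
    (hp : p ∈ γ g) (hq : q ∈ γ h) (hp0 : p ≠ 0) (hpqp : mul p (mul q p) = p) :
    h * g = 1 := by
  have hdeg : p ∈ γ (g * (h * g)) := hpqp ▸ hgrmul _ _ _ hp _ (hgrmul _ _ _ hq _ hp)
  by_contra hne
  exact hp0 <| disjoint_def.mp
    (hγ.pairwiseDisjoint fun heq => hne (mul_eq_left.mp heq)) _ hdeg hp

theorem exists_homogeneous_products
    (hgrmul : ∀ g h : G, ∀ a ∈ γ g, ∀ c ∈ γ h, mul a c ∈ γ (g * h)) {g h : G} {p q : S}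
    (hp : p ∈ γ g) (hq : q ∈ γ h) (hcomm : h * g = g * h) :
    (∃ k : G, span F {mul q p, mul p q} ≤ γ k) ∧ (∃ k : G, span F {p} ≤ γ k) ∧
      (∃ k : G, span F {q} ≤ γ k) ∧ (∃ k : G, span F {mul p p} ≤ γ k) ∧
      (∃ k : G, span F {mul q q} ≤ γ k) := by
  simp only [span_le, Set.insert_subset_iff, Set.singleton_subset_iff, SetLike.mem_coe]
  exact ⟨⟨h * g, hgrmul _ _ _ hq _ hp, hcomm ▸ hgrmul _ _ _ hp _ hq⟩, ⟨g, hp⟩, ⟨h, hq⟩,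
    ⟨g * g, hgrmul _ _ _ hp _ hp⟩, ⟨h * h, hgrmul _ _ _ hq _ hq⟩⟩

end GradedProducts

theorem B42_grading_coarsening_of_Z_grading_general {F S G : Type*} [Field F] [AddCommGroup S]
    [Module F S] [Group G] [DecidableEq G]
    (mul : S →ₗ[F] S →ₗ[F] S) (e₁ e₂ x y u v : S)
    (hbasis : LinearIndependent F ![e₁, e₂, x, y, u, v])
    (h_oe : mul u e₁ = u ∧ mul u e₂ = 0 ∧ mul u x = 0 ∧ mul u y = v ∧
      mul v e₁ = 0 ∧ mul v e₂ = v ∧ mul v x = u ∧ mul v y = 0)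
    (h_oo : mul u u = -x ∧ mul u v = -e₂ ∧ mul v u = e₁ ∧ mul v v = y)
    (γ : G → Submodule F S) (hint : DirectSum.IsInternal γ)
    (hgrmul : ∀ g h : G, ∀ a ∈ γ g, ∀ c ∈ γ h, mul a c ∈ γ (g * h))
    (hsuper : ∀ g : G, γ g =
      (γ g ⊓ Submodule.span F {e₁, e₂, x, y}) ⊔ (γ g ⊓ Submodule.span F {u, v})) :
    ∃ u' ∈ Submodule.span F ({u, v} : Set S), ∃ v' ∈ Submodule.span F ({u, v} : Set S),
      Submodule.span F {u', v'} = Submodule.span F ({u, v} : Set S) ∧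
      mul u' (mul v' u') = u' ∧
      (∃ g : G, Submodule.span F {mul v' u', mul u' v'} ≤ γ g) ∧
      (∃ g : G, Submodule.span F {u'} ≤ γ g) ∧
      (∃ g : G, Submodule.span F {v'} ≤ γ g) ∧
      (∃ g : G, Submodule.span F {mul u' u'} ≤ γ g) ∧
      (∃ g : G, Submodule.span F {mul v' v'} ≤ γ g) := by
  have hV : span F {u, v} ≤ ⨆ g, γ g ⊓ span F {u, v} := by
    refine le_iSup_inf_of_iSup_eq_top hint.submodule_iSup_eq_top ?_ hsuper
    simpa [Set.image_insert_eq] using hbasis.disjoint_span_image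
      (s := {4, 5}) (t := {0, 1, 2, 3}) (by simp [Set.disjoint_left])
  rcases exists_le_or_exists_ne_inf_ne_bot hV with ⟨g, hg⟩ | ⟨g₁, g₂, hne, h₁, h₂⟩
  · have hu : u ∈ γ g := hg (subset_span (by simp))
    have hv : v ∈ γ g := hg (subset_span (by simp))
    exact ⟨u, subset_span (by simp), v, subset_span (by simp), rfl,
      by rw [h_oo.2.2.1, h_oe.1], exists_homogeneous_products hgrmul hu hv rfl⟩
  · obtain ⟨p, ⟨hpγ, hpV⟩, hp0⟩ := exists_mem_ne_zero_of_ne_bot h₁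
    obtain ⟨q, ⟨hqγ, hqV⟩, hq0⟩ := exists_mem_ne_zero_of_ne_bot h₂
    obtain ⟨r, hspan, hpqp⟩ := exists_smul_mul_mul_eq_self h_oe h_oo hpV hqV
      (linearIndependent_pair_of_mem_of_ne hint.submodule_iSupIndep hne hpγ hqγ hp0 hq0)
    have hrq : r • q ∈ γ g₂ := smul_mem _ r hqγ
    have hg : g₂ * g₁ = 1 :=
      mul_eq_one_of_mul_mul_eq_self hint.submodule_iSupIndep hgrmul hpγ hrq hp0 hpqp
    exact ⟨p, hpV, r • q, smul_mem _ r hqV, hspan, hpqp,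
      exists_homogeneous_products hgrmul hpγ hrq (hg.trans (mul_eq_one_comm.mp hg).symm)⟩

/-- every group grading on `B(4,2)` compatible with the main `ℤ₂`-grading
is a coarsening of the 5-component `ℤ`-grading
`span{e₁',e₂'} ⊕ Fu' ⊕ Fv' ⊕ Fx' ⊕ Fy'` associated to a suitable symplectic basis
`{u',v'}` of `V` (where `e₁' = v'·u'`, `e₂' = −u'·v'`, `x' = −u'·u'`, `y' = v'·v'`).
`B(4,2)` is presented by its multiplication table with respect to the matrix units
`e₁,e₂,x,y` of `End_F(V)` and a symplectic basis `{u,v}` of `V`. -/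
theorem B42_grading_coarsening_of_Z_grading {F S G : Type*} [Field F] [AddCommGroup S]
    [Module F S] [Group G] [DecidableEq G]
    (hchar : ringChar F = 3)
    (mul : S →ₗ[F] S →ₗ[F] S) (e₁ e₂ x y u v : S)
    (hbasis : LinearIndependent F ![e₁, e₂, x, y, u, v])
    (hspan : Submodule.span F {e₁, e₂, x, y, u, v} = ⊤)
    (h_ee : mul e₁ e₁ = e₁ ∧ mul e₁ e₂ = 0 ∧ mul e₁ x = x ∧ mul e₁ y = 0 ∧
      mul e₂ e₁ = 0 ∧ mul e₂ e₂ = e₂ ∧ mul e₂ x = 0 ∧ mul e₂ y = y ∧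
      mul x e₁ = 0 ∧ mul x e₂ = x ∧ mul x x = 0 ∧ mul x y = e₁ ∧
      mul y e₁ = y ∧ mul y e₂ = 0 ∧ mul y x = e₂ ∧ mul y y = 0)
    (h_eo : mul e₁ u = 0 ∧ mul e₁ v = v ∧ mul e₂ u = u ∧ mul e₂ v = 0 ∧
      mul x u = 0 ∧ mul x v = -u ∧ mul y u = -v ∧ mul y v = 0)
    (h_oe : mul u e₁ = u ∧ mul u e₂ = 0 ∧ mul u x = 0 ∧ mul u y = v ∧
      mul v e₁ = 0 ∧ mul v e₂ = v ∧ mul v x = u ∧ mul v y = 0)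
    (h_oo : mul u u = -x ∧ mul u v = -e₂ ∧ mul v u = e₁ ∧ mul v v = y)
    (γ : G → Submodule F S) (hint : DirectSum.IsInternal γ)
    (hgrmul : ∀ g h : G, ∀ a ∈ γ g, ∀ c ∈ γ h, mul a c ∈ γ (g * h))
    (hsuper : ∀ g : G, γ g =
      (γ g ⊓ Submodule.span F {e₁, e₂, x, y}) ⊔ (γ g ⊓ Submodule.span F {u, v})) :
    ∃ u' ∈ Submodule.span F ({u, v} : Set S), ∃ v' ∈ Submodule.span F ({u, v} : Set S),
      Submodule.span F {u', v'} = Submodule.span F ({u, v} : Set S) ∧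
      mul u' (mul v' u') = u' ∧
      (∃ g : G, Submodule.span F {mul v' u', mul u' v'} ≤ γ g) ∧
      (∃ g : G, Submodule.span F {u'} ≤ γ g) ∧
      (∃ g : G, Submodule.span F {v'} ≤ γ g) ∧
      (∃ g : G, Submodule.span F {mul u' u'} ≤ γ g) ∧
      (∃ g : G, Submodule.span F {mul v' v'} ≤ γ g) :=
  B42_grading_coarsening_of_Z_grading_general mul e₁ e₂ x y u v hbasis h_oe h_oo γ hint hgrmul
    hsuper
end

section
/- Let G be an abelian group, Γ(G,g) the G-grading on B(4,2) induced from the ℤ-grading (deg e₁ = deg e₂ = 0, deg u = g, deg v = −g, deg x = 2g, deg y = −2g) by 1 ↦ g. Then every G-grading on B(4,2) equals Γ(G,g) for some g and symplectic basis {u,v}, and Γ(G,g) ≅ Γ(G,h) if and only if g = h or g = −h. -/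
/-!
For `p, q` in the odd part `V = span {u, v}` one has `q p - p q = det(p, q) • (e₁ + e₂)` and
`p (q p) = det(p, q) • p`. A grading compatible with the superalgebra structure makes `V` a sum
of homogeneous pieces; since `v u - u v ≠ 0`, some homogeneous `p ∈ V_a`, `q ∈ V_b` have
`det(p, q) ≠ 0`, and rescaling `q` gives a symplectic basis `u' = p`, `v'` of `V` with
`u' (v' u') = u'`. Comparing degrees forces `b = -a`; the products of `u'` and `v'` are then
homogeneous matrix units of degrees `0` and `±2a`, and together with `u', v'` they span, so the
grading is `Γ(G, a)` for this basis.

An isomorphism `Γ(G, g) ≅ Γ(G, h)` preserving `V` sends `u` to a nonzero odd element of degree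
`g` in `Γ(G, h)`, whose odd part lives in degrees `±h`; hence `g = ±h`. Conversely the
automorphism induced by the symplectic rotation `u ↦ v, v ↦ -u` carries `Γ(G, -h)` to `Γ(G, h)`.
-/

/-- The `G`-grading `Γ(G,g)` on `B(4,2)`: `deg e₁ = deg e₂ = 0`, `deg u = g`, `deg v = −g`,
`deg x = 2g`, `deg y = −2g`. -/
def GammaB42 {F S G : Type*} [Field F] [AddCommGroup S] [Module F S] [AddCommGroup G]
    [DecidableEq G] (e₁ e₂ x y u v : S) (g : G) : G → Submodule F S := fun h =>
  (if h = 0 then Submodule.span F {e₁, e₂} else ⊥) ⊔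
  (if h = g then Submodule.span F {u} else ⊥) ⊔
  (if h = -g then Submodule.span F {v} else ⊥) ⊔
  (if h = g + g then Submodule.span F {x} else ⊥) ⊔
  (if h = -(g + g) then Submodule.span F {y} else ⊥)

open Submodule

section ModularLattice

variable {α ι : Type*} [CompleteLattice α] [IsModularLattice α]

theorem iSup_inf_eq_of_disjoint {γ : ι → α} {a b : α} (hab : Disjoint a b)
    (hγ : ∀ k, γ k = γ k ⊓ a ⊔ γ k ⊓ b) (htop : ⨆ k, γ k = ⊤) : ⨆ k, γ k ⊓ b = b := by
  have hb : ⨆ k, γ k ⊓ b ≤ b := iSup_le fun _ => inf_le_right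
  have ha : Disjoint (⨆ k, γ k ⊓ a) b := hab.mono_left (iSup_le fun _ => inf_le_right)
  calc ⨆ k, γ k ⊓ b = (⨆ k, γ k ⊓ b) ⊔ (⨆ k, γ k ⊓ a) ⊓ b := by rw [ha.eq_bot, sup_bot_eq]
    _ = ((⨆ k, γ k ⊓ b) ⊔ ⨆ k, γ k ⊓ a) ⊓ b := (sup_inf_assoc_of_le _ hb).symm
    _ = b := by rw [sup_comm, ← iSup_sup_eq, ← iSup_congr hγ, htop, top_inf_eq]

theorem iSupIndep.eq_of_le_of_iSup_eq_top_s13 {γ δ : ι → α} (hγ : iSupIndep γ)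
    (hle : ∀ i, δ i ≤ γ i) (htop : ⨆ i, δ i = ⊤) (i : ι) : γ i = δ i := by
  have hdisj : γ i ⊓ ⨆ (j) (_ : j ≠ i), δ j = ⊥ :=
    ((hγ i).mono_right (iSup₂_mono fun j _ => hle j)).eq_bot
  calc γ i = γ i ⊓ ((⨆ (j) (_ : j ≠ i), δ j) ⊔ δ i) := by
        rw [sup_comm, ← iSup_split_single, htop, inf_top_eq]
    _ = δ i := by rw [← inf_sup_assoc_of_le _ (hle i), hdisj, bot_sup_eq]

end ModularLattice

theorem iSupIndep.eq_of_mem_of_mem {R M ι : Type*} [Ring R] [AddCommGroup M] [Module R M]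
    {γ : ι → Submodule R M} (hγ : iSupIndep γ) {s : M} (hs : s ≠ 0) {i j : ι}
    (hi : s ∈ γ i) (hj : s ∈ γ j) : i = j := by
  by_contra hij
  exact hs (disjoint_def.mp (hγ.pairwiseDisjoint hij) s hi hj)

theorem neg_eq_of_mul_mul_eq_self {R M G : Type*} [CommRing R] [AddCommGroup M] [Module R M]
    [AddCommGroup G] {mul : M →ₗ[R] M →ₗ[R] M} {γ : G → Submodule R M} (hγ : iSupIndep γ)
    (hmul : ∀ g h : G, ∀ a ∈ γ g, ∀ c ∈ γ h, mul a c ∈ γ (g + h)) {p q : M} {a b : G}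
    (hp : p ∈ γ a) (hq : q ∈ γ b) (hp0 : p ≠ 0) (hpqp : mul p (mul q p) = p) : b = -a := by
  have h := hγ.eq_of_mem_of_mem hp0 hp (hpqp ▸ hmul _ _ p hp _ (hmul _ _ q hq p hp))
  exact eq_neg_of_add_eq_zero_left (by simpa using h)

section Bilinear

variable {R M N P ι : Type*} [CommRing R] [AddCommGroup M] [AddCommGroup N] [AddCommGroup P]
  [Module R M] [Module R N] [Module R P]

theorem LinearMap.exists_apply_ne_zero_of_mem_iSup_s13 (f : M →ₗ[R] N →ₗ[R] P)
    (p : ι → Submodule R M) (q : ι → Submodule R N) {m : M} {n : N} (hm : m ∈ ⨆ i, p i)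
    (hn : n ∈ ⨆ j, q j) (hmn : f m n ≠ 0) : ∃ i j, ∃ m' ∈ p i, ∃ n' ∈ q j, f m' n' ≠ 0 := by
  by_contra! h
  have hbot : map₂ f (⨆ i, p i) (⨆ j, q j) ≤ ⊥ := by
    simp only [map₂_iSup_left, map₂_iSup_right, iSup_le_iff, map₂_le]
    exact fun _ _ m' hm' n' hn' => (mem_bot R).2 (h _ _ m' hm' n' hn')
  exact hmn ((mem_bot R).1 (hbot (apply_mem_map₂ f hm hn)))

theorem LinearMap.apply_swap_sub_apply_smul_add_smul (f : M →ₗ[R] M →ₗ[R] N) (u v : M)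
    (a b c d : R) :
    f (c • u + d • v) (a • u + b • v) - f (a • u + b • v) (c • u + d • v) =
      (a * d - b * c) • (f v u - f u v) := by
  simp only [map_add, map_smul, LinearMap.add_apply, LinearMap.smul_apply]
  module

theorem LinearMap.map_apply_apply_of_basis (b : Module.Basis ι R M) (f : M →ₗ[R] M →ₗ[R] M)
    (φ : M →ₗ[R] M) (h : ∀ i j, φ (f (b i) (b j)) = f (φ (b i)) (φ (b j))) (m n : M) :
    φ (f m n) = f (φ m) (φ n) :=
  LinearMap.congr_fun₂ (LinearMap.ext_basis b b (B := f.compr₂ φ) (B' := f.compl₂ φ ∘ₗ φ) h) m n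

end Bilinear

theorem Submodule.span_pair_smul_add_smul {F M : Type*} [Field F] [AddCommGroup M] [Module F M]
    {u v : M} {a b c d : F} (h : a * d - b * c ≠ 0) :
    span F {a • u + b • v, c • u + d • v} = span F {u, v} := by
  refine le_antisymm (span_le.2 ?_) (span_le.2 ?_)
  · rintro _ (rfl | rfl) <;> simp only [SetLike.mem_coe, mem_span_pair]
    exacts [⟨a, b, rfl⟩, ⟨c, d, rfl⟩]
  · rintro _ (rfl | rfl) <;> simp only [SetLike.mem_coe, mem_span_pair]
    · refine ⟨(a * d - b * c)⁻¹ * d, -((a * d - b * c)⁻¹ * b), ?_⟩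
      match_scalars <;> field_simp <;> ring
    · refine ⟨-((a * d - b * c)⁻¹ * c), (a * d - b * c)⁻¹ * a, ?_⟩
      match_scalars <;> field_simp <;> ring

section GammaB42

variable {F S G : Type*} [Field F] [AddCommGroup S] [Module F S] [AddCommGroup G] [DecidableEq G]
  {e₁ e₂ x y u v : S} {g : G}

theorem mem_GammaB42 (e₁ e₂ x y u v : S) (g : G) :
    e₁ ∈ GammaB42 (F := F) e₁ e₂ x y u v g 0 ∧ e₂ ∈ GammaB42 (F := F) e₁ e₂ x y u v g 0 ∧
      u ∈ GammaB42 (F := F) e₁ e₂ x y u v g g ∧ v ∈ GammaB42 (F := F) e₁ e₂ x y u v g (-g) ∧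
      x ∈ GammaB42 (F := F) e₁ e₂ x y u v g (g + g) ∧
      y ∈ GammaB42 (F := F) e₁ e₂ x y u v g (-(g + g)) := by
  -- the summand `span F {e₁, e₂}` sits four `⊔`s deep
  refine ⟨?_, ?_, ?_, ?_, ?_, ?_⟩ <;>
    simp (maxDischargeDepth := 5) [GammaB42, mem_sup_left, mem_sup_right, mem_span_of_mem]

theorem GammaB42_le_of_mem {γ : G → Submodule F S} (h₁ : e₁ ∈ γ 0) (h₂ : e₂ ∈ γ 0)
    (hu : u ∈ γ g) (hv : v ∈ γ (-g)) (hx : x ∈ γ (g + g)) (hy : y ∈ γ (-(g + g))) (k : G) :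
    GammaB42 e₁ e₂ x y u v g k ≤ γ k := by
  simp only [GammaB42]
  refine sup_le (sup_le (sup_le (sup_le ?_ ?_) ?_) ?_) ?_ <;> split_ifs <;>
    simp_all [span_le, Set.insert_subset_iff]

theorem iSup_GammaB42 :
    ⨆ k, GammaB42 (F := F) e₁ e₂ x y u v g k = span F {e₁, e₂, x, y, u, v} := by
  refine le_antisymm (iSup_le fun k => ?_) (span_le.2 ?_)
  · simp only [GammaB42]
    refine sup_le (sup_le (sup_le (sup_le ?_ ?_) ?_) ?_) ?_ <;> split_ifs <;>
      simp [span_le, Set.insert_subset_iff, mem_span_of_mem]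
  · obtain ⟨h₁, h₂, hu, hv, hx, hy⟩ := mem_GammaB42 (F := F) e₁ e₂ x y u v g
    rintro _ (rfl | rfl | rfl | rfl | rfl | rfl) <;> exact mem_iSup_of_mem _ ‹_›

theorem GammaB42_le_span_of_ne {k : G} (hg : k ≠ g) (hng : k ≠ -g) :
    GammaB42 e₁ e₂ x y u v g k ≤ span F {e₁, e₂, x, y} := by
  simp only [GammaB42, if_neg hg, if_neg hng, sup_bot_eq]
  refine sup_le (sup_le ?_ ?_) ?_ <;> split_ifs <;>
    simp [span_le, Set.insert_subset_iff, mem_span_of_mem]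

theorem map_GammaB42 {S' : Type*} [AddCommGroup S'] [Module F S'] (φ : S →ₗ[F] S') (k : G) :
    (GammaB42 e₁ e₂ x y u v g k).map φ =
      GammaB42 (φ e₁) (φ e₂) (φ x) (φ y) (φ u) (φ v) g k := by
  simp only [GammaB42, Submodule.map_sup, apply_ite (map φ), Submodule.map_bot, map_span,
    Set.image_insert_eq, Set.image_singleton]

theorem GammaB42_rotate (e₁ e₂ x y u v : S) (g : G) :
    GammaB42 (F := F) e₂ e₁ (-y) (-x) v (-u) (-g) = GammaB42 e₁ e₂ x y u v g := by
  funext k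
  simp only [GammaB42, ← Set.neg_singleton, span_neg, neg_neg, neg_add, Set.pair_comm e₂]
  simp only [sup_comm, sup_left_comm, sup_assoc]

end GammaB42

section B42

variable {F S G : Type*} [Field F] [AddCommGroup S] [Module F S]

structure IsB42Table (mul : S →ₗ[F] S →ₗ[F] S) (e₁ e₂ x y u v : S) : Prop where
  ee : mul e₁ e₁ = e₁ ∧ mul e₁ e₂ = 0 ∧ mul e₁ x = x ∧ mul e₁ y = 0 ∧
    mul e₂ e₁ = 0 ∧ mul e₂ e₂ = e₂ ∧ mul e₂ x = 0 ∧ mul e₂ y = y ∧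
    mul x e₁ = 0 ∧ mul x e₂ = x ∧ mul x x = 0 ∧ mul x y = e₁ ∧
    mul y e₁ = y ∧ mul y e₂ = 0 ∧ mul y x = e₂ ∧ mul y y = 0
  eo : mul e₁ u = 0 ∧ mul e₁ v = v ∧ mul e₂ u = u ∧ mul e₂ v = 0 ∧
    mul x u = 0 ∧ mul x v = -u ∧ mul y u = -v ∧ mul y v = 0
  oe : mul u e₁ = u ∧ mul u e₂ = 0 ∧ mul u x = 0 ∧ mul u y = v ∧
    mul v e₁ = 0 ∧ mul v e₂ = v ∧ mul v x = u ∧ mul v y = 0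
  oo : mul u u = -x ∧ mul u v = -e₂ ∧ mul v u = e₁ ∧ mul v v = y

variable {mul : S →ₗ[F] S →ₗ[F] S} {e₁ e₂ x y u v : S}

theorem disjoint_span_even_odd (hbasis : LinearIndependent F ![e₁, e₂, x, y, u, v]) :
    Disjoint (span F {e₁, e₂, x, y}) (span F {u, v}) := by
  have hdisj : Disjoint ({0, 1, 2, 3} : Set (Fin 6)) {4, 5} := by simp [Set.disjoint_left]
  simpa [Set.image_insert_eq] using hbasis.disjoint_span_image hdisj

theorem IsB42Table.mul_mul_smul_add_smul (hT : IsB42Table mul e₁ e₂ x y u v) (a b c d : F) :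
    mul (a • u + b • v) (mul (c • u + d • v) (a • u + b • v)) =
      (a * d - b * c) • (a • u + b • v) := by
  simp only [map_add, map_smul, map_neg, LinearMap.add_apply, LinearMap.smul_apply, hT.oe,
    hT.oo, smul_neg, smul_zero]
  module

theorem IsB42Table.exists_homogeneous_symplectic_pair (hT : IsB42Table mul e₁ e₂ x y u v)
    (hu : u ≠ 0) {γ : G → Submodule F S} (hV : ⨆ k, γ k ⊓ span F {u, v} = span F {u, v}) :
    ∃ a b u' v', u' ∈ γ a ∧ v' ∈ γ b ∧ u' ∈ span F {u, v} ∧ v' ∈ span F {u, v} ∧ u' ≠ 0 ∧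
      span F {u', v'} = span F {u, v} ∧ mul u' (mul v' u') = u' := by
  have hΩ : (mul.flip - mul) u v ≠ 0 := by
    intro h
    apply hu
    -- `v u - u v = e₁ + e₂` and `u (e₁ + e₂) = u`
    simpa [hT.oo, hT.oe] using congrArg (mul u) h
  have huV : u ∈ ⨆ k, γ k ⊓ span F {u, v} := by rw [hV]; exact subset_span (by simp)
  have hvV : v ∈ ⨆ k, γ k ⊓ span F {u, v} := by rw [hV]; exact subset_span (by simp)
  obtain ⟨a, b, p, ⟨hpa, hpV⟩, q, ⟨hqb, hqV⟩, hpq⟩ :=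
    (mul.flip - mul).exists_apply_ne_zero_of_mem_iSup_s13 _ _ huV hvV hΩ
  obtain ⟨α, β, rfl⟩ := mem_span_pair.1 hpV
  obtain ⟨c, d, rfl⟩ := mem_span_pair.1 hqV
  have hdet : α * d - β * c ≠ 0 := by
    intro h
    apply hpq
    rw [LinearMap.sub_apply, LinearMap.sub_apply, LinearMap.flip_apply,
      mul.apply_swap_sub_apply_smul_add_smul, h, zero_smul]
  have hp0 : α • u + β • v ≠ 0 := by
    intro h
    exact hpq (by rw [h, map_zero, LinearMap.zero_apply])
  set δ := α * d - β * c
  have hv' : δ⁻¹ • (c • u + d • v) = (δ⁻¹ * c) • u + (δ⁻¹ * d) • v := by module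
  have hdet' : α * (δ⁻¹ * d) - β * (δ⁻¹ * c) = 1 := by
    rw [← inv_mul_cancel₀ hdet]
    ring
  refine ⟨a, b, α • u + β • v, δ⁻¹ • (c • u + d • v), hpa, smul_mem _ _ hqb, hpV,
    smul_mem _ _ hqV, hp0, ?_, ?_⟩
  · rw [hv', span_pair_smul_add_smul (hdet' ▸ one_ne_zero)]
  · rw [hv', hT.mul_mul_smul_add_smul, hdet', one_smul]

theorem IsB42Table.span_matrix_units_eq_top (hT : IsB42Table mul e₁ e₂ x y u v)
    (hspan : span F {e₁, e₂, x, y, u, v} = ⊤) {u' v' : S}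
    (huv : span F {u', v'} = span F {u, v}) :
    span F {mul v' u', -(mul u' v'), -(mul u' u'), mul v' v', u', v'} = ⊤ := by
  set T := span F {mul v' u', -(mul u' v'), -(mul u' u'), mul v' v', u', v'}
  have hVT : span F {u, v} ≤ T := huv ▸ span_mono (by simp [Set.insert_subset_iff])
  have hprod : ∀ p ∈ span F {u, v}, ∀ q ∈ span F {u, v}, mul p q ∈ T := by
    rw [← huv, ← map₂_le, map₂_span_span, span_le]
    rintro _ ⟨p, hp, q, hq, rfl⟩
    rcases hp with rfl | rfl <;> rcases hq with rfl | rfl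
    exacts [neg_mem_iff.1 (subset_span (by simp)), neg_mem_iff.1 (subset_span (by simp)),
      subset_span (by simp), subset_span (by simp)]
  have hu : u ∈ span F {u, v} := subset_span (by simp)
  have hv : v ∈ span F {u, v} := subset_span (by simp)
  obtain ⟨s₁, s₂, s₃, s₄⟩ := hT.oo
  rw [eq_top_iff, ← hspan, span_le]
  rintro _ (rfl | rfl | rfl | rfl | rfl | rfl)
  · exact s₃ ▸ hprod v hv u hu
  · simpa [s₂] using neg_mem (hprod u hu v hv)
  · simpa [s₁] using neg_mem (hprod u hu u hu)
  · exact s₄ ▸ hprod v hv v hv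
  exacts [hVT hu, hVT hv]

theorem IsB42Table.exists_eq_GammaB42_of_grading [AddCommGroup G] [DecidableEq G]
    (hT : IsB42Table mul e₁ e₂ x y u v)
    (hbasis : LinearIndependent F ![e₁, e₂, x, y, u, v])
    (hspan : span F {e₁, e₂, x, y, u, v} = ⊤)
    {γ : G → Submodule F S} (hγ : DirectSum.IsInternal γ)
    (hmul : ∀ g h : G, ∀ a ∈ γ g, ∀ c ∈ γ h, mul a c ∈ γ (g + h))
    (hsplit : ∀ g : G, γ g = (γ g ⊓ span F {e₁, e₂, x, y}) ⊔ (γ g ⊓ span F {u, v})) :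
    ∃ (g : G) (u' v' : S), u' ∈ span F {u, v} ∧ v' ∈ span F {u, v} ∧
      span F {u', v'} = span F {u, v} ∧ mul u' (mul v' u') = u' ∧
      ∀ h : G, γ h = GammaB42 (mul v' u') (-(mul u' v')) (-(mul u' u')) (mul v' v') u' v' g h := by
  have hind := hγ.submodule_iSupIndep
  obtain ⟨a, b, u', v', hua, hvb, hu'V, hv'V, hu'0, huv, hI⟩ :=
    hT.exists_homogeneous_symplectic_pair (hbasis.ne_zero 4)
      (iSup_inf_eq_of_disjoint (disjoint_span_even_odd hbasis) hsplit hγ.submodule_iSup_eq_top)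
  obtain rfl := neg_eq_of_mul_mul_eq_self hind hmul hua hvb hu'0 hI
  refine ⟨a, u', v', hu'V, hv'V, huv, hI,
    hind.eq_of_le_of_iSup_eq_top_s13 (GammaB42_le_of_mem ?_ ?_ hua hvb ?_ ?_) ?_⟩
  · simpa using hmul _ _ _ hvb _ hua
  · simpa using neg_mem (hmul _ _ _ hua _ hvb)
  · exact neg_mem (hmul _ _ _ hua _ hua)
  · simpa [neg_add] using hmul _ _ _ hvb _ hvb
  · rw [iSup_GammaB42, hT.span_matrix_units_eq_top hspan huv]

theorem IsB42Table.exists_automorphism_rotate (hT : IsB42Table mul e₁ e₂ x y u v)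
    (hbasis : LinearIndependent F ![e₁, e₂, x, y, u, v])
    (hspan : span F {e₁, e₂, x, y, u, v} = ⊤) :
    ∃ φ : S ≃ₗ[F] S, (∀ a c, φ (mul a c) = mul (φ a) (φ c)) ∧
      φ e₁ = e₂ ∧ φ e₂ = e₁ ∧ φ x = -y ∧ φ y = -x ∧ φ u = v ∧ φ v = -u := by
  let b : Module.Basis (Fin 6) F S := .mk hbasis (by
    simp only [Matrix.range_cons, Matrix.range_empty, Set.singleton_union, Set.union_empty,
      hspan, le_refl])
  let φ : S →ₗ[F] S := b.constr F ![e₂, e₁, -y, -x, v, -u]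
  have hφ (i : Fin 6) : φ (b i) = ![e₂, e₁, -y, -x, v, -u] i := b.constr_basis F _ i
  simp only [b, Module.Basis.mk_apply] at hφ
  have h₁ : φ e₁ = e₂ := hφ 0
  have h₂ : φ e₂ = e₁ := hφ 1
  have hx : φ x = -y := hφ 2
  have hy : φ y = -x := hφ 3
  have hu : φ u = v := hφ 4
  have hv : φ v = -u := hφ 5
  have hφ4 : φ ^ 4 = 1 := by
    refine b.ext fun i => ?_
    fin_cases i <;> simp [b, pow_succ, h₁, h₂, hx, hy, hu, hv]
  have hmul : ∀ a c, φ (mul a c) = mul (φ a) (φ c) := by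
    refine LinearMap.map_apply_apply_of_basis b mul φ fun i j => ?_
    fin_cases i <;> fin_cases j <;>
      simp [b, h₁, h₂, hx, hy, hu, hv, hT.ee, hT.eo, hT.oe, hT.oo]
  exact ⟨.ofBijective φ ((Module.End.isUnit_iff φ).1 (.of_pow_eq_one hφ4 (by norm_num))),
    hmul, h₁, h₂, hx, hy, hu, hv⟩

theorem IsB42Table.GammaB42_isomorphic_iff [AddCommGroup G] [DecidableEq G]
    (hT : IsB42Table mul e₁ e₂ x y u v)
    (hbasis : LinearIndependent F ![e₁, e₂, x, y, u, v])
    (hspan : span F {e₁, e₂, x, y, u, v} = ⊤) (g h : G) :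
    (∃ φ : S ≃ₗ[F] S, (∀ a c : S, φ (mul a c) = mul (φ a) (φ c)) ∧
        (span F {e₁, e₂, x, y}).map (φ : S →ₗ[F] S) = span F {e₁, e₂, x, y} ∧
        (span F {u, v}).map (φ : S →ₗ[F] S) = span F {u, v} ∧
        ∀ k : G, (GammaB42 e₁ e₂ x y u v g k).map (φ : S →ₗ[F] S) = GammaB42 e₁ e₂ x y u v h k) ↔
      g = h ∨ g = -h := by
  constructor
  · rintro ⟨φ, -, -, hφV, hφΓ⟩
    by_contra! hne
    have hφu : φ u ∈ span F {e₁, e₂, x, y} ⊓ span F {u, v} :=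
      ⟨GammaB42_le_span_of_ne hne.1 hne.2
          (hφΓ g ▸ mem_map_of_mem (mem_GammaB42 e₁ e₂ x y u v g).2.2.1),
        hφV ▸ mem_map_of_mem (subset_span (by simp))⟩
    rw [(disjoint_span_even_odd hbasis).eq_bot, mem_bot, φ.map_eq_zero_iff] at hφu
    exact hbasis.ne_zero 4 hφu
  · rintro (rfl | rfl)
    · exact ⟨.refl F S, fun _ _ => rfl, map_id _, map_id _, fun _ => map_id _⟩
    obtain ⟨φ, hmul, h₁, h₂, hx, hy, hu, hv⟩ := hT.exists_automorphism_rotate hbasis hspan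
    refine ⟨φ, hmul, ?_, ?_, fun k => ?_⟩
    · simp only [span_insert, Submodule.map_sup, map_span, Set.image_singleton,
        LinearEquiv.coe_coe, h₁, h₂, hx, hy, ← Set.neg_singleton, span_neg]
      simp only [sup_comm, sup_left_comm]
    · simp only [span_insert, Submodule.map_sup, map_span, Set.image_singleton,
        LinearEquiv.coe_coe, hu, hv, ← Set.neg_singleton, span_neg]
      exact sup_comm _ _
    · rw [map_GammaB42]
      simp only [LinearEquiv.coe_coe, h₁, h₂, hx, hy, hu, hv, GammaB42_rotate]

end B42

theorem B42_gradings_up_to_isomorphism_general {F S G : Type*} [Field F] [AddCommGroup S]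
    [Module F S] [AddCommGroup G] [DecidableEq G]
    (mul : S →ₗ[F] S →ₗ[F] S) (e₁ e₂ x y u v : S)
    (hbasis : LinearIndependent F ![e₁, e₂, x, y, u, v])
    (hspan : Submodule.span F {e₁, e₂, x, y, u, v} = ⊤)
    (h_ee : mul e₁ e₁ = e₁ ∧ mul e₁ e₂ = 0 ∧ mul e₁ x = x ∧ mul e₁ y = 0 ∧
      mul e₂ e₁ = 0 ∧ mul e₂ e₂ = e₂ ∧ mul e₂ x = 0 ∧ mul e₂ y = y ∧
      mul x e₁ = 0 ∧ mul x e₂ = x ∧ mul x x = 0 ∧ mul x y = e₁ ∧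
      mul y e₁ = y ∧ mul y e₂ = 0 ∧ mul y x = e₂ ∧ mul y y = 0)
    (h_eo : mul e₁ u = 0 ∧ mul e₁ v = v ∧ mul e₂ u = u ∧ mul e₂ v = 0 ∧
      mul x u = 0 ∧ mul x v = -u ∧ mul y u = -v ∧ mul y v = 0)
    (h_oe : mul u e₁ = u ∧ mul u e₂ = 0 ∧ mul u x = 0 ∧ mul u y = v ∧
      mul v e₁ = 0 ∧ mul v e₂ = v ∧ mul v x = u ∧ mul v y = 0)
    (h_oo : mul u u = -x ∧ mul u v = -e₂ ∧ mul v u = e₁ ∧ mul v v = y) :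
    (∀ γ : G → Submodule F S, DirectSum.IsInternal γ →
      (∀ g h : G, ∀ a ∈ γ g, ∀ c ∈ γ h, mul a c ∈ γ (g + h)) →
      (∀ g : G, γ g =
        (γ g ⊓ Submodule.span F {e₁, e₂, x, y}) ⊔ (γ g ⊓ Submodule.span F {u, v})) →
      ∃ (g : G) (u' v' : S), u' ∈ Submodule.span F ({u, v} : Set S) ∧
        v' ∈ Submodule.span F ({u, v} : Set S) ∧
        Submodule.span F {u', v'} = Submodule.span F ({u, v} : Set S) ∧
        mul u' (mul v' u') = u' ∧
        ∀ h : G, γ h =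
          GammaB42 (mul v' u') (-(mul u' v')) (-(mul u' u')) (mul v' v') u' v' g h) ∧
    (∀ g h : G,
      (∃ φ : S ≃ₗ[F] S,
        (∀ a c : S, φ (mul a c) = mul (φ a) (φ c)) ∧
        Submodule.map (φ : S →ₗ[F] S) (Submodule.span F {e₁, e₂, x, y}) =
          Submodule.span F {e₁, e₂, x, y} ∧
        Submodule.map (φ : S →ₗ[F] S) (Submodule.span F {u, v}) = Submodule.span F {u, v} ∧
        ∀ k : G, Submodule.map (φ : S →ₗ[F] S) (GammaB42 e₁ e₂ x y u v g k) =
          GammaB42 e₁ e₂ x y u v h k)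
      ↔ (g = h ∨ g = -h)) :=
  have hT : IsB42Table mul e₁ e₂ x y u v := ⟨h_ee, h_eo, h_oe, h_oo⟩
  ⟨fun _ hγ hmul hsplit => hT.exists_eq_GammaB42_of_grading hbasis hspan hγ hmul hsplit,
    hT.GammaB42_isomorphic_iff hbasis hspan⟩

/-- every `G`-grading on `B(4,2)` (with `G` abelian) equals `Γ(G,g)` for some
`g ∈ G` and some symplectic basis `{u',v'}` of `V`, and `Γ(G,g) ≅ Γ(G,h)` iff `g = h` or
`g = −h`. `B(4,2)` is presented by its multiplication table with respect to the matrix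
units `e₁,e₂,x,y` of `End_F(V)` and a symplectic basis `{u,v}` of `V`. -/
theorem B42_gradings_up_to_isomorphism {F S G : Type*} [Field F] [AddCommGroup S]
    [Module F S] [AddCommGroup G] [DecidableEq G]
    (hchar : ringChar F = 3)
    (mul : S →ₗ[F] S →ₗ[F] S) (e₁ e₂ x y u v : S)
    (hbasis : LinearIndependent F ![e₁, e₂, x, y, u, v])
    (hspan : Submodule.span F {e₁, e₂, x, y, u, v} = ⊤)
    (h_ee : mul e₁ e₁ = e₁ ∧ mul e₁ e₂ = 0 ∧ mul e₁ x = x ∧ mul e₁ y = 0 ∧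
      mul e₂ e₁ = 0 ∧ mul e₂ e₂ = e₂ ∧ mul e₂ x = 0 ∧ mul e₂ y = y ∧
      mul x e₁ = 0 ∧ mul x e₂ = x ∧ mul x x = 0 ∧ mul x y = e₁ ∧
      mul y e₁ = y ∧ mul y e₂ = 0 ∧ mul y x = e₂ ∧ mul y y = 0)
    (h_eo : mul e₁ u = 0 ∧ mul e₁ v = v ∧ mul e₂ u = u ∧ mul e₂ v = 0 ∧
      mul x u = 0 ∧ mul x v = -u ∧ mul y u = -v ∧ mul y v = 0)
    (h_oe : mul u e₁ = u ∧ mul u e₂ = 0 ∧ mul u x = 0 ∧ mul u y = v ∧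
      mul v e₁ = 0 ∧ mul v e₂ = v ∧ mul v x = u ∧ mul v y = 0)
    (h_oo : mul u u = -x ∧ mul u v = -e₂ ∧ mul v u = e₁ ∧ mul v v = y) :
    (∀ γ : G → Submodule F S, DirectSum.IsInternal γ →
      (∀ g h : G, ∀ a ∈ γ g, ∀ c ∈ γ h, mul a c ∈ γ (g + h)) →
      (∀ g : G, γ g =
        (γ g ⊓ Submodule.span F {e₁, e₂, x, y}) ⊔ (γ g ⊓ Submodule.span F {u, v})) →
      ∃ (g : G) (u' v' : S), u' ∈ Submodule.span F ({u, v} : Set S) ∧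
        v' ∈ Submodule.span F ({u, v} : Set S) ∧
        Submodule.span F {u', v'} = Submodule.span F ({u, v} : Set S) ∧
        mul u' (mul v' u') = u' ∧
        ∀ h : G, γ h =
          GammaB42 (mul v' u') (-(mul u' v')) (-(mul u' u')) (mul v' v') u' v' g h) ∧
    (∀ g h : G,
      (∃ φ : S ≃ₗ[F] S,
        (∀ a c : S, φ (mul a c) = mul (φ a) (φ c)) ∧
        Submodule.map (φ : S →ₗ[F] S) (Submodule.span F {e₁, e₂, x, y}) =
          Submodule.span F {e₁, e₂, x, y} ∧
        Submodule.map (φ : S →ₗ[F] S) (Submodule.span F {u, v}) = Submodule.span F {u, v} ∧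
        ∀ k : G, Submodule.map (φ : S →ₗ[F] S) (GammaB42 e₁ e₂ x y u v g k) =
          GammaB42 e₁ e₂ x y u v h k)
      ↔ (g = h ∨ g = -h)) :=
  B42_gradings_up_to_isomorphism_general mul e₁ e₂ x y u v hbasis hspan h_ee h_eo h_oe h_oo
end

section
/- Let C = CD(Q, α) = Q ⊕ Qu be the Hurwitz superalgebra over a field F of characteristic 2 with dim Q = 2, obtained by the Cayley–Dickson doubling process, with even part Q and odd part Qu. If Γ is a grading on the superalgebra C by a group G that is not an elementary abelian 2-group (with G the universal group), then Q = C₀ is split and there is a canonical basis {e₁, e₂, u₁, v₁} of homogeneous elements with C₀⁰ = span{e₁,e₂}, C₁ᵍ = span{u₁}, C₁^{−g} = span{v₁} for some g ∈ G of order > 2. -/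
open QuadraticMap

/-!
In characteristic 2 the trace `t x = polar q x 1` of a Hurwitz algebra vanishes at `1`, on the
odd part, and on every homogeneous component of degree `h ≠ 1` (there `t x • x = x * x + q x • 1`
lies in `C^h ∩ (C^{h²} + C^1) = 0`). If some `w ≠ 0` of degree `h ≠ 1` lay in `Q`, then
`Q = span {1, w}` would be traceless, hence so would `C`, and then `polar q = 0` and regularity
make `q` anisotropic. This is impossible: a nonzero `x` of degree `g` with `g² ≠ 1` has
`x * x = -q x • 1` in `C^{g²} ∩ C^1 = 0`, so `q x = 0`. Hence `Q ≤ C^1` and the other components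
are odd. Regularity pairs `x` with some `y` of degree `g⁻¹` and `β = polar q x y ≠ 0`; both are
traceless and isotropic, and `e₁ = -β⁻¹ • (x * y)`, `e₂ = 1 - e₁`, `u₁ = x`, `v₁ = β⁻¹ • y` is a
canonical basis. Since the odd part is 2-dimensional, `C^g = F u₁` and `C^{g⁻¹} = F v₁`.
-/

theorem exists_mem_mul_self_ne_one_of_closure_eq_top {G : Type*} [CommGroup G] {S : Set G}
    (hS : Subgroup.closure S = ⊤) (hG : ¬ ∀ g : G, g * g = 1) : ∃ g ∈ S, g * g ≠ 1 := by
  by_contra! h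
  have hle : Subgroup.closure S ≤ (powMonoidHom 2 : G →* G).ker :=
    (Subgroup.closure_le _).mpr fun s hs => by simp [pow_two, h s hs]
  exact hG fun g => by simpa [pow_two] using hle (hS ▸ Subgroup.mem_top g)

section LinearAlgebra

variable {F M : Type*} [Field F] [AddCommGroup M] [Module F M]

theorem span_pair_eq_of_linearIndependent {V : Submodule F M} (hV : Module.finrank F V = 2)
    {a b : M} (ha : a ∈ V) (hb : b ∈ V) (hab : LinearIndependent F ![a, b]) :
    Submodule.span F {a, b} = V := by
  have : FiniteDimensional F V := .of_finrank_pos (by omega)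
  refine Submodule.eq_of_le_of_finrank_le (Submodule.span_le.mpr ?_) ?_
  · exact Set.insert_subset ha (Set.singleton_subset_iff.mpr hb)
  · have := finrank_span_eq_card hab
    rw [Matrix.range_cons_cons_empty] at this
    rw [hV, this, Fintype.card_fin]

theorem eq_span_singleton_of_disjoint [FiniteDimensional F M] {A B V : Submodule F M}
    (hAB : Disjoint A B) (hle : A ⊔ B ≤ V) (hV : Module.finrank F V = 2) {x y : M} (hx : x ∈ A)
    (hx0 : x ≠ 0) (hy : y ∈ B) (hy0 : y ≠ 0) :
    A = Submodule.span F {x} ∧ B = Submodule.span F {y} := by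
  have hsum := Submodule.finrank_sup_add_finrank_inf_eq A B
  rw [hAB.eq_bot, finrank_bot, add_zero] at hsum
  have hxA : Submodule.span F {x} ≤ A := (Submodule.span_singleton_le_iff_mem x A).mpr hx
  have hyB : Submodule.span F {y} ≤ B := (Submodule.span_singleton_le_iff_mem y B).mpr hy
  have hA := Submodule.finrank_mono hxA
  have hB := Submodule.finrank_mono hyB
  have hV' := Submodule.finrank_mono hle
  rw [finrank_span_singleton hx0] at hA
  rw [finrank_span_singleton hy0] at hB
  exact ⟨(Submodule.eq_of_le_of_finrank_le hxA (by rw [finrank_span_singleton hx0]; omega)).symm,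
    (Submodule.eq_of_le_of_finrank_le hyB (by rw [finrank_span_singleton hy0]; omega)).symm⟩

end LinearAlgebra

theorem le_of_iSup_eq_top_of_inf_eq_bot {α ι : Type*} [CompleteLattice α] [IsModularLattice α]
    {γ : ι → α} {Q O : α} (htop : iSup γ = ⊤) (hsuper : ∀ i, γ i = (γ i ⊓ Q) ⊔ (γ i ⊓ O))
    (hQO : Q ⊓ O = ⊥) {i₀ : ι} (hne : ∀ i ≠ i₀, γ i ⊓ Q = ⊥) : Q ≤ γ i₀ := by
  have hle : ∀ i, γ i ≤ (γ i₀ ⊓ Q) ⊔ O := by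
    intro i
    rw [hsuper i]
    by_cases hi : i = i₀
    · subst hi
      exact sup_le_sup_left inf_le_right _
    · rw [hne i hi, bot_sup_eq]
      exact inf_le_right.trans le_sup_right
  calc Q = ((γ i₀ ⊓ Q) ⊔ O) ⊓ Q := (inf_eq_right.mpr (le_top.trans (htop ▸ iSup_le hle))).symm
    _ = γ i₀ ⊓ Q := by rw [sup_inf_assoc_of_le O inf_le_right, inf_comm O, hQO, sup_bot_eq]
    _ ≤ γ i₀ := inf_le_left

def IsCanonicalBasis {C : Type*} [NonAssocRing C] (e₁ e₂ u₁ v₁ : C) : Prop :=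
  e₁ + e₂ = 1 ∧ e₁ * e₁ = e₁ ∧ e₂ * e₂ = e₂ ∧ e₁ * e₂ = 0 ∧ e₂ * e₁ = 0 ∧
    e₁ * u₁ = u₁ ∧ u₁ * e₂ = u₁ ∧ e₂ * u₁ = 0 ∧ u₁ * e₁ = 0 ∧
    e₂ * v₁ = v₁ ∧ v₁ * e₁ = v₁ ∧ e₁ * v₁ = 0 ∧ v₁ * e₂ = 0 ∧
    u₁ * v₁ = -e₁ ∧ v₁ * u₁ = -e₂

namespace IsCanonicalBasis

variable {F C : Type*} [Field F] [NonAssocRing C] [Module F C] {e₁ e₂ u₁ v₁ : C}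

theorem linearIndependent [SMulCommClass F C C] [IsScalarTower F C C]
    (hB : IsCanonicalBasis e₁ e₂ u₁ v₁) (hu : u₁ ≠ 0) : LinearIndependent F ![e₁, e₂] := by
  obtain ⟨-, -, -, -, -, he₁u, hue₂, he₂u, hue₁, -⟩ := hB
  refine LinearIndependent.pair_iff.mpr fun s t hst => ⟨?_, ?_⟩
  · have h := congrArg (· * u₁) hst
    simp only [add_mul, smul_mul_assoc, he₁u, he₂u, smul_zero, add_zero, zero_mul] at h
    exact (smul_eq_zero.mp h).resolve_right hu
  · have h := congrArg (u₁ * ·) hst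
    simp only [mul_add, mul_smul_comm, hue₁, hue₂, smul_zero, zero_add, mul_zero] at h
    exact (smul_eq_zero.mp h).resolve_right hu

theorem map_e₁_eq_zero {q : QuadraticForm F C} (hB : IsCanonicalBasis e₁ e₂ u₁ v₁)
    (hmul : q.Multiplicative) (hu : q u₁ = 0) : q e₁ = 0 := by
  obtain ⟨-, -, -, -, -, -, -, -, -, -, -, -, -, huv, -⟩ := hB
  rw [← QuadraticMap.map_neg, ← huv, hmul, hu, zero_mul]

end IsCanonicalBasis

theorem QuadraticMap.map_sub_of_polar_sub_eq_zero {R M N : Type*} [CommRing R] [AddCommGroup M]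
    [AddCommGroup N] [Module R M] [Module R N] {Q : QuadraticMap R M N} {a b : M}
    (h : polar Q (a - b) b = 0) : Q (a - b) = Q a - Q b := by
  have := QuadraticMap.map_add Q (a - b) b
  rw [sub_add_cancel, h, add_zero] at this
  rw [this, add_sub_cancel_right]

namespace QuadraticForm

variable {F C : Type*} [Field F] [NonAssocRing C] [Module F C] {q : QuadraticForm F C}

theorem HurwitzRegular.eq_of_polar_sub_eq_zero (hreg : q.HurwitzRegular) {a b : C}
    (hpolar : ∀ w, polar q (a - b) w = 0) (hq : q (a - b) = 0) : a = b :=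
  sub_eq_zero.mp (hreg _ hpolar hq)

namespace Multiplicative

variable (hmul : q.Multiplicative)
include hmul

theorem polar_mul_mul_left (x y z : C) : polar q (x * y) (x * z) = q x * polar q y z := by
  simp only [polar, ← mul_add, hmul _ _]; ring

theorem polar_mul_mul_right (x y z : C) : polar q (x * z) (y * z) = polar q x y * q z := by
  simp only [polar, ← add_mul, hmul _ _]; ring

theorem polar_mul_add_polar_mul (a b c d : C) :
    polar q (a * b) (c * d) + polar q (a * d) (c * b) = polar q a c * polar q b d := by
  have h := hmul (a + c) (b + d)
  simp only [add_mul, mul_add, QuadraticMap.map_add q, polar_add_left, polar_add_right,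
    hmul _ _] at h
  linear_combination h - hmul.polar_mul_mul_left a b d - hmul.polar_mul_mul_left c b d
    - hmul.polar_mul_mul_right a c b - hmul.polar_mul_mul_right a c d
    + polar_comm q (a * d) (c * b)

theorem polar_eq_polar_one_mul_polar_one_sub (a c : C) :
    polar q a c = polar q a 1 * polar q c 1 - polar q (a * c) 1 := by
  have h := hmul.polar_mul_add_polar_mul a 1 1 c
  rw [mul_one, one_mul, one_mul] at h
  linear_combination h + polar q a 1 * polar_comm q 1 c

theorem eq_zero_of_forall_polar_one_eq_zero
    (hreg : q.HurwitzRegular) (htrace : ∀ z, polar q z 1 = 0) {x : C} (hx : q x = 0) :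
    x = 0 :=
  hreg x (fun y => by rw [hmul.polar_eq_polar_one_mul_polar_one_sub, htrace, htrace, htrace,
    zero_mul, sub_zero]) hx

theorem map_one [Nontrivial C] (hreg : q.HurwitzRegular) : q 1 = 1 := by
  have h := hmul 1 1
  rw [one_mul] at h
  rcases mul_eq_zero.mp (show q 1 * (q 1 - 1) = 0 by linear_combination -h) with h0 | h0
  · have hq0 : ∀ x : C, q x = 0 := fun x => by simpa [h0] using hmul x 1
    exact absurd (hreg 1 (fun y => by simp [polar, hq0]) (hq0 1)) one_ne_zero
  · exact sub_eq_zero.mp h0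

theorem polar_mul_self (x w : C) :
    polar q (x * x) w = polar q x 1 * polar q x w - q x * polar q 1 w := by
  have h := hmul.polar_mul_add_polar_mul x x 1 w
  rw [one_mul, one_mul] at h
  have h5 := hmul.polar_mul_mul_left x w 1
  rw [mul_one] at h5
  linear_combination h - h5 - q x * polar_comm q w 1

theorem mul_self_eq [Nontrivial C] (hreg : q.HurwitzRegular) (x : C) :
    x * x = polar q x 1 • x - q x • (1 : C) := by
  have hq1 := hmul.map_one hreg
  have hpolar : ∀ w, polar q (x * x - (polar q x 1 • x - q x • (1 : C))) w = 0 := fun w => by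
    simp only [polar_sub_left, polar_smul_left, hmul.polar_mul_self, smul_eq_mul]; ring
  refine hreg.eq_of_polar_sub_eq_zero hpolar ?_
  have hsub : q (polar q x 1 • x - q x • (1 : C)) = q x * q x := by
    rw [sub_eq_add_neg, QuadraticMap.map_add q, QuadraticMap.map_neg, polar_neg_right,
      QuadraticMap.map_smul, QuadraticMap.map_smul, polar_smul_left, polar_smul_right, hq1,
      smul_eq_mul, smul_eq_mul]
    ring
  rw [map_sub_of_polar_sub_eq_zero (hpolar _), hmul, hsub, sub_self]

theorem mul_add_mul_swap [Nontrivial C] (hreg : q.HurwitzRegular) (x y : C) :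
    x * y + y * x = polar q x 1 • y + polar q y 1 • x - polar q x y • (1 : C) := by
  have h := hmul.mul_self_eq hreg (x + y)
  rw [add_mul, mul_add, mul_add, hmul.mul_self_eq hreg x, hmul.mul_self_eq hreg y,
    QuadraticMap.map_add q, polar_add_left] at h
  linear_combination (norm := module) h

theorem mul_mul_self_left [Nontrivial C] (hreg : q.HurwitzRegular) (x y : C) :
    x * (x * y) = polar q x 1 • (x * y) - q x • y := by
  have hpolar : ∀ w, polar q (x * (x * y) - (polar q x 1 • (x * y) - q x • y)) w = 0 := by
    intro w
    have h := hmul.polar_mul_add_polar_mul x (x * y) 1 w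
    rw [one_mul, one_mul, hmul.polar_mul_mul_left] at h
    simp only [polar_sub_left, polar_smul_left, smul_eq_mul]
    linear_combination h - q x * polar_comm q w y
  refine hreg.eq_of_polar_sub_eq_zero hpolar ?_
  have hxy : polar q (x * y) y = polar q x 1 * q y := by
    simpa using hmul.polar_mul_mul_right x 1 y
  have hsub : q (polar q x 1 • (x * y) - q x • y) = q x * (q x * q y) := by
    rw [sub_eq_add_neg, QuadraticMap.map_add q, QuadraticMap.map_neg, polar_neg_right,
      QuadraticMap.map_smul, QuadraticMap.map_smul, polar_smul_left, polar_smul_right, hxy,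
      hmul, smul_eq_mul, smul_eq_mul]
    ring
  rw [map_sub_of_polar_sub_eq_zero (hpolar _), hmul, hmul, hsub, sub_self]

theorem mul_mul_self_right [Nontrivial C] (hreg : q.HurwitzRegular) (x y : C) :
    (y * x) * x = polar q x 1 • (y * x) - q x • y := by
  have hpolar : ∀ w, polar q ((y * x) * x - (polar q x 1 • (y * x) - q x • y)) w = 0 := by
    intro w
    have h := hmul.polar_mul_add_polar_mul (y * x) x w 1
    rw [mul_one, mul_one, hmul.polar_mul_mul_right] at h
    simp only [polar_sub_left, polar_smul_left, smul_eq_mul]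
    linear_combination h
  refine hreg.eq_of_polar_sub_eq_zero hpolar ?_
  have hyx : polar q (y * x) y = q y * polar q x 1 := by
    simpa using hmul.polar_mul_mul_left y x 1
  have hsub : q (polar q x 1 • (y * x) - q x • y) = q x * (q y * q x) := by
    rw [sub_eq_add_neg, QuadraticMap.map_add q, QuadraticMap.map_neg, polar_neg_right,
      QuadraticMap.map_smul, QuadraticMap.map_smul, polar_smul_left, polar_smul_right, hyx,
      hmul, smul_eq_mul, smul_eq_mul]
    ring
  rw [map_sub_of_polar_sub_eq_zero (hpolar _), hmul, hmul, hsub]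
  ring

theorem isCanonicalBasis_of_isotropic [Nontrivial C] [SMulCommClass F C C] [IsScalarTower F C C]
    (hreg : q.HurwitzRegular) {x y : C} (htx : polar q x 1 = 0) (hty : polar q y 1 = 0)
    (hqx : q x = 0) (hqy : q y = 0) (hβ : polar q x y ≠ 0) :
    IsCanonicalBasis (-(polar q x y)⁻¹ • (x * y)) (1 + (polar q x y)⁻¹ • (x * y)) x
      ((polar q x y)⁻¹ • y) := by
  set β := polar q x y
  set s := x * y with hs
  have hts : polar q s 1 = -β := by
    linear_combination hmul.polar_eq_polar_one_mul_polar_one_sub x y + polar q y 1 * htx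
  have hxs : x * s = 0 := by simp [hs, hmul.mul_mul_self_left hreg, htx, hqx]
  have hsy : s * y = 0 := by simp [hs, hmul.mul_mul_self_right hreg, hty, hqy]
  have hxs' : polar q x s = 0 := by simpa [hqx] using hmul.polar_mul_mul_left x 1 y
  have hys' : polar q y s = 0 := by simpa [hqy] using hmul.polar_mul_mul_right 1 x y
  have hsx : s * x = -β • x := by
    simpa [hxs, htx, hts, hxs'] using hmul.mul_add_mul_swap hreg x s
  have hys : y * s = -β • y := by
    simpa [hsy, hty, hts, hys'] using hmul.mul_add_mul_swap hreg y s
  have hqs : q s = 0 := by rw [hs, hmul, hqx, zero_mul]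
  have hss : s * s = -β • s := by
    rw [hmul.mul_self_eq hreg s, hts, hqs, zero_smul, sub_zero]
  have hyx : y * x = -β • (1 : C) - s := by
    have h := hmul.mul_add_mul_swap hreg x y
    rw [htx, hty, zero_smul, zero_smul, zero_add] at h
    linear_combination (norm := module) h
  refine ⟨?_, ?_, ?_, ?_, ?_, ?_, ?_, ?_, ?_, ?_, ?_, ?_, ?_, ?_, ?_⟩ <;>
    simp only [smul_mul_assoc, mul_smul_comm, mul_add, add_mul, mul_one, one_mul, mul_neg, neg_mul,
      neg_smul, hxs, hsy, hsx, hys, hss, hyx] <;>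
    (match_scalars <;> field_simp <;> ring)

end Multiplicative

end QuadraticForm

section Grading

variable {F C G : Type*} [Field F] [NonAssocRing C] [Module F C] [Group G]
  {γ : G → Submodule F C}

theorem one_mem_grading_one [SMulCommClass F C C] (hind : iSupIndep γ) (htop : iSup γ = ⊤)
    (hgrmul : ∀ g h : G, ∀ a ∈ γ g, ∀ c ∈ γ h, a * c ∈ γ (g * h)) : (1 : C) ∈ γ 1 := by
  obtain ⟨a, ha, r, hr, har⟩ := Submodule.mem_sup.mp
    ((iSup_split_single γ 1 ▸ htop).ge (Submodule.mem_top (x := (1 : C))))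
  have hright : ∀ h, ∀ v ∈ γ h, v * a = v := by
    intro h v hv
    have hvr : v * r ∈ ⨆ (j) (_ : j ≠ h), γ j := by
      have hmap : (⨆ (g) (_ : g ≠ 1), γ g).map (LinearMap.mulLeft F v) ≤
          ⨆ (j) (_ : j ≠ h), γ j := by
        simp only [Submodule.map_iSup]
        refine iSup₂_le fun g hg => Submodule.map_le_iff_le_comap.mpr fun c hc => ?_
        exact le_iSup₂ (f := fun j (_ : j ≠ h) => γ j) (h * g) (by simpa using hg)
          (hgrmul h g v hv c hc)
      exact hmap ⟨r, hr, rfl⟩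
    have hva : v * a ∈ γ h := by simpa using hgrmul h 1 v hv a ha
    have hvr' : v * r = v - v * a := by rw [eq_sub_iff_add_eq', ← mul_add, har, mul_one]
    have h0 : v * r = 0 := Submodule.disjoint_def.mp (iSupIndep_def.mp hind h) _
      (hvr' ▸ Submodule.sub_mem _ hv hva) hvr
    rw [h0, eq_comm, sub_eq_zero] at hvr'
    exact hvr'.symm
  have hunit : (1 : C) * a = 1 :=
    Submodule.iSup_induction γ (motive := fun v => v * a = v) (htop ▸ Submodule.mem_top)
      hright (zero_mul a) fun v w hv hw => by rw [add_mul, hv, hw]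
  rw [one_mul] at hunit
  exact hunit ▸ ha

variable {q : QuadraticForm F C} (hmul : q.Multiplicative) (hreg : q.HurwitzRegular)
  (hind : iSupIndep γ) (hgrmul : ∀ g h : G, ∀ a ∈ γ g, ∀ c ∈ γ h, a * c ∈ γ (g * h))
  (h1γ : (1 : C) ∈ γ 1)
include hmul hreg hind hgrmul h1γ

theorem polar_one_eq_zero_of_mem_grading [Nontrivial C] {h : G} (hh : h ≠ 1) {z : C}
    (hz : z ∈ γ h) : polar q z 1 = 0 := by
  have hdisj : Disjoint (γ h) (γ (h * h) ⊔ γ 1) := by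
    rw [← iSup_pair]
    exact hind.disjoint_biSup (by simp [hh])
  have hmem : polar q z 1 • z ∈ γ (h * h) ⊔ γ 1 := by
    rw [show polar q z 1 • z = z * z + q z • (1 : C) by rw [hmul.mul_self_eq hreg]; abel]
    exact Submodule.add_mem_sup (hgrmul h h z hz z hz) (Submodule.smul_mem _ _ h1γ)
  rcases smul_eq_zero.mp (Submodule.disjoint_def.mp hdisj _ (Submodule.smul_mem _ _ hz) hmem)
    with h0 | rfl
  · exact h0
  · exact polar_zero_left q 1

theorem polar_eq_zero_of_mem_grading [Nontrivial C] {g h : G} (hgh : g * h ≠ 1) {a c : C}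
    (ha : a ∈ γ g) (hc : c ∈ γ h) : polar q a c = 0 := by
  have htrace : polar q a 1 * polar q c 1 = 0 := by
    by_cases hg : g = 1
    · subst hg
      rw [polar_one_eq_zero_of_mem_grading hmul hreg hind hgrmul h1γ (by simpa using hgh) hc,
        mul_zero]
    · rw [polar_one_eq_zero_of_mem_grading hmul hreg hind hgrmul h1γ hg ha, zero_mul]
  rw [hmul.polar_eq_polar_one_mul_polar_one_sub, htrace,
    polar_one_eq_zero_of_mem_grading hmul hreg hind hgrmul h1γ hgh (hgrmul g h a ha c hc),
    sub_zero]

theorem map_eq_zero_of_mem_grading [Nontrivial C] {g : G} (hg : g * g ≠ 1) {x : C}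
    (hx : x ∈ γ g) : q x = 0 := by
  have hg1 : g ≠ 1 := by rintro rfl; simp at hg
  have hsq : x * x = -(q x • (1 : C)) := by
    rw [hmul.mul_self_eq hreg,
      polar_one_eq_zero_of_mem_grading hmul hreg hind hgrmul h1γ hg1 hx, zero_smul, zero_sub]
  have h0 : x * x = 0 := Submodule.disjoint_def.mp (hind.pairwiseDisjoint hg) _
    (hgrmul g g x hx x hx) (hsq ▸ Submodule.neg_mem _ (Submodule.smul_mem _ _ h1γ))
  rw [hsq, neg_eq_zero, smul_eq_zero] at h0
  exact h0.resolve_right one_ne_zero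

theorem exists_mem_grading_inv_polar_ne_zero [Nontrivial C] (htop : iSup γ = ⊤) {g : G} {x : C}
    (hx : x ∈ γ g) (hx0 : x ≠ 0) (hqx : q x = 0) : ∃ y ∈ γ g⁻¹, polar q x y ≠ 0 := by
  by_contra! hperp
  refine hx0 (hreg x (fun w => ?_) hqx)
  refine Submodule.iSup_induction γ (motive := fun w => polar q x w = 0)
    (htop ▸ Submodule.mem_top) (fun h y hy => ?_) (polar_zero_right q x)
    fun y z hy hz => by rw [polar_add_right, hy, hz, add_zero]
  by_cases hgh : g * h = 1
  · rw [eq_inv_of_mul_eq_one_right hgh] at hy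
    exact hperp y hy
  · exact polar_eq_zero_of_mem_grading hmul hreg hind hgrmul h1γ hgh hx hy

end Grading

section Superalgebra

variable {F C : Type*} [Field F] [NonAssocRing C] [Module F C] {q : QuadraticForm F C}
  {Q odd : Submodule F C}

theorem polar_eq_zero_of_mem_odd [Nontrivial C] (hmul : q.Multiplicative)
    (hreg : q.HurwitzRegular) (hone : (1 : C) ∈ Q) (hQ : 1 < Module.finrank F Q)
    (hdisj : Disjoint Q odd) (h_eo : ∀ a ∈ Q, ∀ b ∈ odd, a * b ∈ odd)
    (h_oe : ∀ a ∈ odd, ∀ b ∈ Q, a * b ∈ odd) {o : C} (ho : o ∈ odd) {c : C} (hc : c ∈ Q) :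
    polar q o c = 0 := by
  have hzero : ∀ c ∈ Q, polar q o 1 • c - polar q c o • (1 : C) = 0 := by
    intro c hc
    refine Submodule.disjoint_def.mp hdisj _
      (Q.sub_mem (Q.smul_mem _ hc) (Q.smul_mem _ hone)) ?_
    have hsum := hmul.mul_add_mul_swap hreg c o
    rw [show polar q o 1 • c - polar q c o • (1 : C) = c * o + o * c - polar q c 1 • o by
      rw [hsum]; abel]
    exact odd.sub_mem (odd.add_mem (h_eo c hc o ho) (h_oe o ho c hc)) (odd.smul_mem _ ho)
  obtain ⟨c₀, hc₀, hc₀1⟩ : ∃ c₀ ∈ Q, c₀ ∉ Submodule.span F {(1 : C)} := by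
    by_contra! hle
    have := Submodule.finrank_mono (show Q ≤ Submodule.span F {(1 : C)} from hle)
    rw [finrank_span_singleton one_ne_zero] at this
    omega
  have htrace : polar q o 1 = 0 := by
    by_contra ht
    refine hc₀1 (Submodule.mem_span_singleton.mpr ⟨(polar q o 1)⁻¹ * polar q c₀ o, ?_⟩)
    rw [mul_smul, ← sub_eq_zero.mp (hzero c₀ hc₀), smul_smul, inv_mul_cancel₀ ht, one_smul]
  have h := hzero c hc
  rw [htrace, zero_smul, zero_sub, neg_eq_zero, smul_eq_zero] at h
  rw [polar_comm]
  exact h.resolve_right one_ne_zero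

variable {G : Type*} [Group G] {γ : G → Submodule F C}

theorem grading_inf_eq_bot [Nontrivial C] (h2 : (2 : F) = 0) (hmul : q.Multiplicative)
    (hreg : q.HurwitzRegular) (hind : iSupIndep γ)
    (hgrmul : ∀ g h : G, ∀ a ∈ γ g, ∀ c ∈ γ h, a * c ∈ γ (g * h)) (h1γ : (1 : C) ∈ γ 1)
    (hone : (1 : C) ∈ Q) (hQ2 : Module.finrank F Q = 2) (hsup : Q ⊔ odd = ⊤)
    (htodd : ∀ o ∈ odd, polar q o 1 = 0) {x : C} (hx0 : x ≠ 0) (hqx : q x = 0) {h : G}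
    (hh : h ≠ 1) : γ h ⊓ Q = ⊥ := by
  refine (Submodule.eq_bot_iff _).mpr fun w ⟨hwγ, hwQ⟩ => by_contra fun hw0 => hx0 ?_
  have hli : LinearIndependent F ![(1 : C), w] := by
    refine LinearIndependent.pair_iff.mpr fun s t hst => ?_
    have hs : s • (1 : C) = 0 := by
      refine Submodule.disjoint_def.mp (hind.pairwiseDisjoint hh.symm) _
        (Submodule.smul_mem _ _ h1γ) ?_
      rw [eq_neg_of_add_eq_zero_left hst]
      exact Submodule.neg_mem _ (Submodule.smul_mem _ _ hwγ)
    rw [hs, zero_add, smul_eq_zero] at hst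
    exact ⟨(smul_eq_zero.mp hs).resolve_right one_ne_zero, hst.resolve_right hw0⟩
  have htQ : ∀ c ∈ Q, polar q c 1 = 0 := by
    intro c hc
    obtain ⟨a, b, rfl⟩ := Submodule.mem_span_pair.mp
      ((span_pair_eq_of_linearIndependent hQ2 hone hwQ hli).symm ▸ hc)
    rw [polar_add_left, polar_smul_left, polar_smul_left, polar_self, two_nsmul, ← two_mul, h2,
      polar_one_eq_zero_of_mem_grading hmul hreg hind hgrmul h1γ hh hwγ]
    simp
  refine hmul.eq_zero_of_forall_polar_one_eq_zero hreg (fun z => ?_) hqx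
  obtain ⟨c, hc, o, ho, rfl⟩ := Submodule.mem_sup.mp (hsup ▸ Submodule.mem_top (x := z))
  rw [polar_add_left, htQ c hc, htodd o ho, add_zero]

end Superalgebra

theorem CD_dim4_grading_not_elementary_general {F C G : Type*} [Field F] [NonAssocRing C]
    [Module F C] [SMulCommClass F C C] [IsScalarTower F C C] [CommGroup G] [DecidableEq G]
    (hchar : ringChar F = 2)
    (q : QuadraticForm F C) (hreg : q.HurwitzRegular) (hmul : q.Multiplicative)
    (Q odd : Submodule F C)
    (hone : (1 : C) ∈ Q)
    (hcompl : IsCompl Q odd)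
    (hQ2 : Module.finrank F Q = 2) (hC4 : Module.finrank F C = 4)
    (h_eo : ∀ a ∈ Q, ∀ b ∈ odd, a * b ∈ odd)
    (h_oe : ∀ a ∈ odd, ∀ b ∈ Q, a * b ∈ odd)
    (h_oo : ∀ a ∈ odd, ∀ b ∈ odd, a * b ∈ Q)
    (γ : G → Submodule F C) (hint : DirectSum.IsInternal γ)
    (hgrmul : ∀ g h : G, ∀ a ∈ γ g, ∀ c ∈ γ h, a * c ∈ γ (g * h))
    (hsuper : ∀ g : G, γ g = (γ g ⊓ Q) ⊔ (γ g ⊓ odd))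
    (hgen : Subgroup.closure {g : G | γ g ≠ ⊥} = ⊤)
    (hnot2 : ¬ ∀ g : G, g * g = 1) :
    (∃ a ∈ Q, a ≠ 0 ∧ q a = 0) ∧
    ∃ g : G, g * g ≠ 1 ∧ ∃ e₁ e₂ u₁ v₁ : C,
      e₁ + e₂ = 1 ∧ e₁ * e₁ = e₁ ∧ e₂ * e₂ = e₂ ∧ e₁ * e₂ = 0 ∧ e₂ * e₁ = 0 ∧
      e₁ * u₁ = u₁ ∧ u₁ * e₂ = u₁ ∧ e₂ * u₁ = 0 ∧ u₁ * e₁ = 0 ∧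
      e₂ * v₁ = v₁ ∧ v₁ * e₁ = v₁ ∧ e₁ * v₁ = 0 ∧ v₁ * e₂ = 0 ∧
      u₁ * v₁ = -e₁ ∧ v₁ * u₁ = -e₂ ∧
      u₁ ∈ odd ∧ v₁ ∈ odd ∧
      Submodule.span F {e₁, e₂} = Q ∧ Q ≤ γ 1 ∧
      γ g = Submodule.span F {u₁} ∧ γ g⁻¹ = Submodule.span F {v₁} := by
  have h2 : (2 : F) = 0 := by
    have := ringChar.of_eq hchar
    exact CharTwo.two_eq_zero
  have : FiniteDimensional F C := .of_finrank_pos (by omega)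
  have : Nontrivial C := Module.nontrivial_of_finrank_pos (R := F) (by omega)
  obtain ⟨hind, htop⟩ := (DirectSum.isInternal_submodule_iff_iSupIndep_and_iSup_eq_top γ).mp hint
  have h1γ := one_mem_grading_one hind htop hgrmul
  obtain ⟨g, hgne, hgg⟩ := exists_mem_mul_self_ne_one_of_closure_eq_top hgen hnot2
  obtain ⟨x, hxγ, hx0⟩ := Submodule.exists_mem_ne_zero_of_ne_bot hgne
  have hqx := map_eq_zero_of_mem_grading hmul hreg hind hgrmul h1γ hgg hxγ
  have htodd : ∀ o ∈ odd, polar q o 1 = 0 := fun o ho =>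
    polar_eq_zero_of_mem_odd hmul hreg hone (by omega) hcompl.disjoint h_eo h_oe ho hone
  have hQγ : Q ≤ γ 1 := le_of_iSup_eq_top_of_inf_eq_bot htop hsuper hcompl.disjoint.eq_bot
    fun h hh => grading_inf_eq_bot h2 hmul hreg hind hgrmul h1γ hone hQ2 hcompl.sup_eq_top htodd
      hx0 hqx hh
  have hodd : ∀ h ≠ 1, γ h ≤ odd := fun h hh => by
    rw [hsuper h, ((hind.pairwiseDisjoint hh).mono_right hQγ).eq_bot, bot_sup_eq]
    exact inf_le_right
  have hg1 : g ≠ 1 := by rintro rfl; simp at hgg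
  obtain ⟨y, hyγ, hβ⟩ :=
    exists_mem_grading_inv_polar_ne_zero hmul hreg hind hgrmul h1γ htop hxγ hx0 hqx
  have hxodd := hodd g hg1 hxγ
  have hyodd := hodd g⁻¹ (inv_ne_one.mpr hg1) hyγ
  have hB := hmul.isCanonicalBasis_of_isotropic hreg (htodd x hxodd) (htodd y hyodd) hqx
    (map_eq_zero_of_mem_grading hmul hreg hind hgrmul h1γ (by rwa [← mul_inv, inv_ne_one]) hyγ) hβ
  have hsQ : x * y ∈ Q := h_oo x hxodd y hyodd
  have hli := hB.linearIndependent (F := F) hx0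
  obtain ⟨hγg, hγg'⟩ := eq_span_singleton_of_disjoint
    (hind.pairwiseDisjoint fun h => hgg (eq_inv_iff_mul_eq_one.mp h))
    (sup_le (hodd g hg1) (hodd g⁻¹ (inv_ne_one.mpr hg1)))
    (by have := Submodule.finrank_add_eq_of_isCompl hcompl; omega) hxγ hx0
    (Submodule.smul_mem _ _ hyγ) (smul_ne_zero (inv_ne_zero hβ) (by rintro rfl; simp at hβ))
  refine ⟨⟨_, Q.smul_mem _ hsQ, hli.ne_zero 0, hB.map_e₁_eq_zero hmul hqx⟩, g, hgg,
    -(polar q x y)⁻¹ • (x * y), 1 + (polar q x y)⁻¹ • (x * y), x, (polar q x y)⁻¹ • y, ?_⟩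
  simpa only [IsCanonicalBasis, and_assoc] using And.intro hB <| And.intro hxodd <|
    And.intro (odd.smul_mem _ hyodd) <| And.intro (span_pair_eq_of_linearIndependent hQ2
      (Q.smul_mem _ hsQ) (Q.add_mem hone (Q.smul_mem _ hsQ)) hli) <| And.intro hQγ ⟨hγg, hγg'⟩

/-- for the Hurwitz superalgebra `C = CD(Q,α) = Q ⊕ Qu` in characteristic 2
with `dim Q = 2`, any grading by a group `G` generated by its support which is not an
elementary abelian 2-group forces `Q = C₀` to be split, and there is a canonical basis
`{e₁,e₂,u₁,v₁}` of homogeneous elements with `C₀⁰ = span{e₁,e₂}`, `C₁ᵍ = Fu₁`,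
`C₁^{−g} = Fv₁` for some `g` of order `> 2`. -/
theorem CD_dim4_grading_not_elementary {F C G : Type*} [Field F] [NonAssocRing C]
    [Module F C] [SMulCommClass F C C] [IsScalarTower F C C] [CommGroup G] [DecidableEq G]
    (hchar : ringChar F = 2)
    (q : QuadraticForm F C) (hreg : q.HurwitzRegular) (hmul : q.Multiplicative)
    (Q odd : Submodule F C)
    (hone : (1 : C) ∈ Q)
    (hcompl : IsCompl Q odd)
    (hQ2 : Module.finrank F Q = 2) (hC4 : Module.finrank F C = 4)
    (h_ee : ∀ a ∈ Q, ∀ b ∈ Q, a * b ∈ Q)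
    (h_eo : ∀ a ∈ Q, ∀ b ∈ odd, a * b ∈ odd)
    (h_oe : ∀ a ∈ odd, ∀ b ∈ Q, a * b ∈ odd)
    (h_oo : ∀ a ∈ odd, ∀ b ∈ odd, a * b ∈ Q)
    (u : C) (hu : u ∈ odd) (α : F) (hα : α ≠ 0) (hqu : q u = α)
    (hodd : odd = Submodule.map (LinearMap.mulRight F u) Q)
    (γ : G → Submodule F C) (hint : DirectSum.IsInternal γ)
    (hgrmul : ∀ g h : G, ∀ a ∈ γ g, ∀ c ∈ γ h, a * c ∈ γ (g * h))
    (hsuper : ∀ g : G, γ g = (γ g ⊓ Q) ⊔ (γ g ⊓ odd))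
    (hgen : Subgroup.closure {g : G | γ g ≠ ⊥} = ⊤)
    (hnot2 : ¬ ∀ g : G, g * g = 1) :
    (∃ a ∈ Q, a ≠ 0 ∧ q a = 0) ∧
    ∃ g : G, g * g ≠ 1 ∧ ∃ e₁ e₂ u₁ v₁ : C,
      e₁ + e₂ = 1 ∧ e₁ * e₁ = e₁ ∧ e₂ * e₂ = e₂ ∧ e₁ * e₂ = 0 ∧ e₂ * e₁ = 0 ∧
      e₁ * u₁ = u₁ ∧ u₁ * e₂ = u₁ ∧ e₂ * u₁ = 0 ∧ u₁ * e₁ = 0 ∧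
      e₂ * v₁ = v₁ ∧ v₁ * e₁ = v₁ ∧ e₁ * v₁ = 0 ∧ v₁ * e₂ = 0 ∧
      u₁ * v₁ = -e₁ ∧ v₁ * u₁ = -e₂ ∧
      u₁ ∈ odd ∧ v₁ ∈ odd ∧
      Submodule.span F {e₁, e₂} = Q ∧ Q ≤ γ 1 ∧
      γ g = Submodule.span F {u₁} ∧ γ g⁻¹ = Submodule.span F {v₁} :=
  CD_dim4_grading_not_elementary_general hchar q hreg hmul Q odd hone hcompl hQ2 hC4 h_eo h_oe h_oo
    γ hint hgrmul hsuper hgen hnot2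
end
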